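/- arXiv:2406.07324 — 15 statements merged into one kernel-verified Lean document; each statement's English description precedes it below -/
import Mathlib

section
/- If the discrete-time linear system x_{k+1} = A x_k, y_k = C x_k (with A an n×n real matrix and C a p×n real matrix) is asymptotically stable (i.e., for every initial state x₀ ∈ ℝⁿ the trajectory Aᵏx₀ tends to 0 as k → ∞) and observable (i.e., for every nonzero x₀ ∈ ℝⁿ there exists a natural number k with C Aᵏ x₀ ≠ 0), then there exists a symmetric positive definite n×n real matrix Q satisfying the discrete Lyapunov equation AᵀQA − Q + CᵀC = 0. -/
open Filter Matrix

attribute [local instance] Matrix.frobeniusSeminormedAddCommGroup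
  Matrix.frobeniusNormedAddCommGroup Matrix.frobeniusNormedSpace
  Matrix.frobeniusNormedRing Matrix.frobeniusNormedAlgebra

theorem aux_summable_sq {R : Type*} [NormedRing R] {a : R} {m : ℕ} (hm : m ≠ 0)
    (ha : ‖a ^ m‖ < 1) : Summable fun k : ℕ => ‖a ^ k‖ ^ 2 := by
  haveI : NeZero m := ⟨hm⟩
  set s : ℝ := ‖a ^ m‖ with hs
  have hs0 : 0 ≤ s := norm_nonneg _
  set B : ℝ := ∑ r ∈ Finset.range m, ‖a ^ r‖ with hB
  have hrB : ∀ r < m, ‖a ^ r‖ ≤ B := fun r hr =>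
    Finset.single_le_sum (f := fun r => ‖a ^ r‖) (fun i _ => norm_nonneg _)
      (Finset.mem_range.mpr hr)
  have hB0 : 0 ≤ B := Finset.sum_nonneg fun i _ => norm_nonneg _
  have key : ∀ k : ℕ, ‖a ^ k‖ ≤ s ^ (k / m) * B := by
    intro k
    have hdecomp : a ^ k = (a ^ m) ^ (k / m) * a ^ (k % m) := by
      rw [← pow_mul, ← pow_add, Nat.div_add_mod]
    rcases Nat.eq_zero_or_pos (k / m) with hq | hq
    · rw [hdecomp, hq, pow_zero, one_mul, pow_zero, one_mul]
      exact hrB _ (Nat.mod_lt _ (Nat.pos_of_ne_zero hm))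
    · calc ‖a ^ k‖ ≤ ‖(a ^ m) ^ (k / m)‖ * ‖a ^ (k % m)‖ := hdecomp ▸ norm_mul_le _ _
        _ ≤ s ^ (k / m) * B := by
            refine mul_le_mul ?_ (hrB _ (Nat.mod_lt _ (Nat.pos_of_ne_zero hm)))
              (norm_nonneg _) (pow_nonneg hs0 _)
            exact norm_pow_le' _ hq
  have hs2 : s ^ 2 < 1 := by nlinarith
  have hgeom : Summable fun q : ℕ => (s ^ 2) ^ q := summable_geometric_of_lt_one (by positivity) hs2
  have hprod : Summable fun p : ℕ × Fin m => ((s ^ 2) ^ p.1) * B ^ 2 := by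
    rw [summable_prod_of_nonneg (fun p => by positivity)]
    refine ⟨fun q => Summable.of_finite, ?_⟩
    have : ∀ q : ℕ, ∑' _ : Fin m, ((s ^ 2) ^ q) * B ^ 2 = (m : ℝ) * (((s ^ 2) ^ q) * B ^ 2) := by
      intro q
      rw [tsum_fintype]
      simp [Finset.sum_const, nsmul_eq_mul]
    exact Summable.congr ((hgeom.mul_right (B ^ 2)).mul_left (m : ℝ)) fun q => (this q).symm
  have hcomp : Summable fun k : ℕ => ((s ^ 2) ^ (k / m)) * B ^ 2 := by
    have := (Nat.divModEquiv m).summable_iff.mpr hprod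
    exact this
  refine Summable.of_nonneg_of_le (fun k => by positivity) (fun k => ?_) hcomp
  calc ‖a ^ k‖ ^ 2 ≤ (s ^ (k / m) * B) ^ 2 := by
        have := key k; nlinarith [norm_nonneg (a ^ k)]
    _ = ((s ^ 2) ^ (k / m)) * B ^ 2 := by rw [mul_pow, ← pow_mul, ← pow_mul, Nat.mul_comm]

/-- If the discrete-time linear system `x_{k+1} = A x_k`, `y_k = C x_k` is
asymptotically stable and observable, then there exists a symmetric positive
definite matrix `Q` satisfying `AᵀQA − Q + CᵀC = 0`. -/
theorem stmt_0 {n p : ℕ} (A : Matrix (Fin n) (Fin n) ℝ) (C : Matrix (Fin p) (Fin n) ℝ)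
    (hstab : ∀ x₀ : Fin n → ℝ,
      Tendsto (fun k : ℕ => (A ^ k) *ᵥ x₀) atTop (nhds 0))
    (hobs : ∀ x₀ : Fin n → ℝ, x₀ ≠ 0 → ∃ k : ℕ, C *ᵥ ((A ^ k) *ᵥ x₀) ≠ 0) :
    ∃ Q : Matrix (Fin n) (Fin n) ℝ, Q.PosDef ∧ Aᵀ * Q * A - Q + Cᵀ * C = 0 := by
  -- entrywise convergence
  have hAk : ∀ i j, Tendsto (fun k : ℕ => (A ^ k) i j) atTop (nhds 0) := by
    intro i j
    have h := (tendsto_pi_nhds.mp (hstab (Pi.single j 1))) i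
    refine h.congr fun k => ?_
    simp [Matrix.mulVec_single]
  -- frobenius norm tends to zero
  have hnorm : Tendsto (fun k : ℕ => ‖A ^ k‖) atTop (nhds 0) := by
    have hsum : Tendsto (fun k : ℕ => ∑ i, ∑ j, ‖(A ^ k) i j‖ ^ (2 : ℝ)) atTop (nhds 0) := by
      have h1 : ∀ i j, Tendsto (fun k : ℕ => ‖(A ^ k) i j‖ ^ (2 : ℝ)) atTop (nhds 0) := by
        intro i j
        have hc : ContinuousAt (fun x : ℝ => x ^ (2 : ℝ)) 0 :=
          Real.continuousAt_rpow_const 0 _ (Or.inr (by norm_num))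
        have hn := (hAk i j).norm
        rw [norm_zero] at hn
        have := hc.tendsto.comp hn
        simpa [Function.comp_def, Real.zero_rpow] using this
      have := tendsto_finset_sum (Finset.univ : Finset (Fin n))
        (fun i _ => tendsto_finset_sum (Finset.univ : Finset (Fin n)) fun j _ => h1 i j)
      simpa using this
    have hcont : ContinuousAt (fun x : ℝ => x ^ ((1 : ℝ) / 2)) 0 :=
      Real.continuousAt_rpow_const 0 _ (Or.inr (by norm_num))
    have h2 := hcont.tendsto.comp hsum
    rw [Real.zero_rpow (by norm_num)] at h2
    refine h2.congr fun k => ?_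
    simp only [Function.comp_apply, Matrix.frobenius_norm_def]
  -- find m with ‖A^m‖ < 1
  obtain ⟨m, hm1, hmlt⟩ : ∃ m : ℕ, 1 ≤ m ∧ ‖A ^ m‖ < 1 := by
    have h1 : ∀ᶠ k : ℕ in atTop, ‖A ^ k‖ < 1 := hnorm.eventually_lt_const one_pos
    obtain ⟨m, hm⟩ := ((eventually_ge_atTop 1).and h1).exists
    exact ⟨m, hm.1, hm.2⟩
  haveI : FiniteDimensional ℝ (Matrix (Fin n) (Fin n) ℝ) := by infer_instance
  set M : Matrix (Fin n) (Fin n) ℝ := Cᵀ * C with hM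
  set T : ℕ → Matrix (Fin n) (Fin n) ℝ := fun k => Aᵀ ^ k * M * A ^ k with hT
  have hTnorm : ∀ k, ‖T k‖ ≤ ‖M‖ * ‖A ^ k‖ ^ 2 := by
    intro k
    have h1 : ‖Aᵀ ^ k * M * A ^ k‖ ≤ ‖Aᵀ ^ k‖ * ‖M‖ * ‖A ^ k‖ :=
      le_trans (norm_mul_le _ _) (by gcongr; exact norm_mul_le _ _)
    have h2 : ‖Aᵀ ^ k‖ = ‖A ^ k‖ := by
      rw [← Matrix.transpose_pow, Matrix.frobenius_norm_transpose]
    rw [h2] at h1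
    calc ‖T k‖ = ‖Aᵀ ^ k * M * A ^ k‖ := rfl
      _ ≤ ‖A ^ k‖ * ‖M‖ * ‖A ^ k‖ := h1
      _ = ‖M‖ * ‖A ^ k‖ ^ 2 := by ring
  have hsum2 : Summable fun k : ℕ => ‖A ^ k‖ ^ 2 :=
    aux_summable_sq (Nat.one_le_iff_ne_zero.mp hm1) hmlt
  have hsummable : Summable T :=
    Summable.of_norm (Summable.of_nonneg_of_le (fun k => norm_nonneg _) hTnorm
      (hsum2.mul_left ‖M‖))
  set Q : Matrix (Fin n) (Fin n) ℝ := ∑' k, T k with hQ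
  -- the Lyapunov equation
  let L : Matrix (Fin n) (Fin n) ℝ →ₗ[ℝ] Matrix (Fin n) (Fin n) ℝ :=
    (LinearMap.mulLeft ℝ Aᵀ).comp (LinearMap.mulRight ℝ A)
  let e := LinearMap.toContinuousLinearMap L
  have hAQA : Aᵀ * Q * A = ∑' k, T (k + 1) := by
    have h1 : Aᵀ * Q * A = e Q := by
      simp [e, L, mul_assoc]
    rw [h1, hQ, e.map_tsum hsummable]
    congr 1; funext k
    show Aᵀ * (T k * A) = T (k + 1)
    show Aᵀ * (Aᵀ ^ k * M * A ^ k * A) = Aᵀ ^ (k + 1) * M * A ^ (k + 1)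
    rw [pow_succ A, pow_succ' Aᵀ]
    simp only [mul_assoc]
  have heq : Aᵀ * Q * A - Q + M = 0 := by
    have h0 : Q = T 0 + ∑' k, T (k + 1) := hsummable.tsum_eq_zero_add
    have hT0 : T 0 = M := by simp [hT]
    rw [hAQA, h0, hT0]; abel
  -- symmetry
  have hTsym : ∀ k, (T k)ᵀ = T k := by
    intro k
    simp [hT, hM, Matrix.transpose_mul, Matrix.transpose_pow, Matrix.transpose_transpose,
      mul_assoc]
  have hQsym : Qᵀ = Q := by
    let τ := LinearMap.toContinuousLinearMap
      (Matrix.transposeLinearEquiv (Fin n) (Fin n) ℝ ℝ).toLinearMap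
    have h1 : Qᵀ = τ Q := rfl
    rw [h1, hQ, τ.map_tsum hsummable]
    congr 1; funext k
    show (T k)ᵀ = T k
    exact hTsym k
  -- positivity
  have hpd : Q.PosDef := by
    refine Matrix.posDef_iff_dotProduct_mulVec.mpr ⟨?_, ?_⟩
    · ext i j
      rw [Matrix.conjTranspose_apply, star_trivial]
      have h := congrFun (congrFun hQsym j) i
      rw [Matrix.transpose_apply] at h
      exact h.symm
    · intro x hx
      have hstar : star x = x := by ext i; simp
      set y : ℕ → Fin p → ℝ := fun k => C *ᵥ (A ^ k *ᵥ x) with hy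
      have hterm : ∀ k, x ⬝ᵥ (T k *ᵥ x) = y k ⬝ᵥ y k := by
        intro k
        simp only [hT, hM, hy, ← Matrix.mulVec_mulVec, ← Matrix.transpose_pow]
        rw [Matrix.dotProduct_mulVec, Matrix.vecMul_transpose,
          Matrix.dotProduct_mulVec, Matrix.vecMul_transpose]
      let φ : Matrix (Fin n) (Fin n) ℝ →ₗ[ℝ] ℝ :=
        { toFun := fun B => x ⬝ᵥ (B *ᵥ x)
          map_add' := by intro B1 B2; simp [Matrix.add_mulVec, dotProduct_add]
          map_smul' := by intro c B; simp [Matrix.smul_mulVec, dotProduct_smul] }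
      let φc := LinearMap.toContinuousLinearMap φ
      have hφQ : x ⬝ᵥ (Q *ᵥ x) = ∑' k, x ⬝ᵥ (T k *ᵥ x) := by
        have h1 : x ⬝ᵥ (Q *ᵥ x) = φc Q := rfl
        rw [h1, hQ, φc.map_tsum hsummable]
        rfl
      have hsummable' : Summable fun k => x ⬝ᵥ (T k *ᵥ x) :=
        hsummable.map φc.toLinearMap.toAddMonoidHom φc.continuous
      obtain ⟨k₀, hk₀⟩ := hobs x hx
      have hpos : 0 < y k₀ ⬝ᵥ y k₀ := by
        obtain ⟨i, hi⟩ := Function.ne_iff.mp hk₀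
        refine Finset.sum_pos' (fun j _ => mul_self_nonneg _)
          ⟨i, Finset.mem_univ i, mul_self_pos.mpr hi⟩
      have hnonneg : ∀ k, 0 ≤ x ⬝ᵥ (T k *ᵥ x) := fun k => by
        rw [hterm]; exact Finset.sum_nonneg fun j _ => mul_self_nonneg _
      rw [hstar, hφQ]
      calc (0 : ℝ) < x ⬝ᵥ (T k₀ *ᵥ x) := by rw [hterm]; exact hpos
        _ ≤ ∑' k, x ⬝ᵥ (T k *ᵥ x) := hsummable'.le_tsum k₀ fun j _ => hnonneg j
  exact ⟨Q, hpd, heq⟩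
end

section
/- If the discrete-time linear system x_{k+1} = A x_k, y_k = C x_k is observable and there exists a symmetric positive definite n×n real matrix Q satisfying AᵀQA − Q + CᵀC = 0, then the system is asymptotically stable: for every x₀ ∈ ℝⁿ, Aᵏx₀ → 0 as k → ∞. -/
open Filter Matrix Metric

/-- If the system `x_{k+1} = A x_k`, `y_k = C x_k` is observable and there is a
symmetric positive definite solution of `AᵀQA − Q + CᵀC = 0`, then the system is
asymptotically stable. -/
theorem stmt_2 {n p : ℕ} (A : Matrix (Fin n) (Fin n) ℝ) (C : Matrix (Fin p) (Fin n) ℝ)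
    (hobs : ∀ x₀ : Fin n → ℝ, x₀ ≠ 0 → ∃ k : ℕ, C *ᵥ ((A ^ k) *ᵥ x₀) ≠ 0)
    (hQ : ∃ Q : Matrix (Fin n) (Fin n) ℝ, Q.PosDef ∧ Aᵀ * Q * A - Q + Cᵀ * C = 0) :
    ∀ x₀ : Fin n → ℝ, Tendsto (fun k : ℕ => (A ^ k) *ᵥ x₀) atTop (nhds 0) := by
  intro x₀
  obtain ⟨Q, hpd, heq⟩ := hQ
  rcases Nat.eq_zero_or_pos n with hn | hn
  · subst hn
    have h0 : ∀ k : ℕ, (A ^ k) *ᵥ x₀ = 0 := fun k => Subsingleton.elim _ _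
    simpa [h0] using (tendsto_const_nhds : Tendsto (fun _ : ℕ => (0 : Fin 0 → ℝ)) atTop (nhds 0))
  haveI : Nontrivial (Fin n → ℝ) := by
    have : Nonempty (Fin n) := ⟨⟨0, hn⟩⟩
    infer_instance
  set f : ℕ → Fin n → ℝ := fun k => (A ^ k) *ᵥ x₀ with hf
  set V : (Fin n → ℝ) → ℝ := fun x => x ⬝ᵥ (Q *ᵥ x) with hV
  have hVpos : ∀ x, x ≠ 0 → 0 < V x := fun x hx => by simpa [hV] using hpd.dotProduct_mulVec_pos hx
  have hVnonneg : ∀ x, 0 ≤ V x := fun x => by simpa [hV] using hpd.posSemidef.dotProduct_mulVec_nonneg x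
  have hVcont : Continuous V :=
    continuous_id.dotProduct (continuous_const.matrix_mulVec continuous_id)
  -- key Lyapunov identity
  have key : ∀ x : Fin n → ℝ, V (A *ᵥ x) = V x - (C *ᵥ x) ⬝ᵥ (C *ᵥ x) := by
    intro x
    have h := congrArg (fun M : Matrix (Fin n) (Fin n) ℝ => x ⬝ᵥ (M *ᵥ x)) heq
    simp only [add_mulVec, sub_mulVec, dotProduct_add, dotProduct_sub, zero_mulVec,
      dotProduct_zero] at h
    have h1 : x ⬝ᵥ ((Aᵀ * Q * A) *ᵥ x) = (A *ᵥ x) ⬝ᵥ (Q *ᵥ (A *ᵥ x)) := by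
      rw [← mulVec_mulVec, ← mulVec_mulVec, dotProduct_mulVec, vecMul_transpose]
    have h2 : x ⬝ᵥ ((Cᵀ * C) *ᵥ x) = (C *ᵥ x) ⬝ᵥ (C *ᵥ x) := by
      rw [← mulVec_mulVec, dotProduct_mulVec, vecMul_transpose]
    rw [h1, h2] at h
    simp only [hV]
    linarith
  have step : ∀ k, V (f (k + 1)) = V (f k) - (C *ᵥ f k) ⬝ᵥ (C *ᵥ f k) := by
    intro k
    have hfk : f (k + 1) = A *ᵥ f k := by
      simp only [hf, pow_succ', mulVec_mulVec]
    rw [hfk, key]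
  have hCself_nonneg : ∀ v : Fin p → ℝ, 0 ≤ v ⬝ᵥ v := fun v =>
    Finset.sum_nonneg fun i _ => mul_self_nonneg _
  have hanti : Antitone fun k => V (f k) := antitone_nat_of_succ_le fun k => by
    rw [step k]
    have := hCself_nonneg (C *ᵥ f k)
    linarith
  have hbdd : BddBelow (Set.range fun k => V (f k)) :=
    ⟨0, by rintro y ⟨k, rfl⟩; exact hVnonneg _⟩
  set L := ⨅ k, V (f k) with hLdef
  have hL : Tendsto (fun k => V (f k)) atTop (nhds L) := tendsto_atTop_ciInf hanti hbdd
  -- quadratic output terms tend to zero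
  have hCtend : Tendsto (fun k => (C *ᵥ f k) ⬝ᵥ (C *ᵥ f k)) atTop (nhds 0) := by
    have h1 : Tendsto (fun k => V (f k) - V (f (k + 1))) atTop (nhds (L - L)) :=
      hL.sub (hL.comp (tendsto_add_atTop_nat 1))
    rw [sub_self] at h1
    refine h1.congr fun k => by rw [step k]; ring
  -- coercivity constant from compactness of the sphere
  obtain ⟨xc, hxc, hcmin'⟩ :=
    (isCompact_sphere (0 : Fin n → ℝ) 1).exists_isMinOn
      (NormedSpace.sphere_nonempty.2 zero_le_one) hVcont.continuousOn
  have hcmin : ∀ y ∈ sphere (0 : Fin n → ℝ) 1, V xc ≤ V y := fun y hy => hcmin' hy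
  have hxc0 : xc ≠ 0 := by
    intro h
    rw [mem_sphere_zero_iff_norm] at hxc
    simp [h] at hxc
  have hc : 0 < V xc := hVpos _ hxc0
  have hsmul : ∀ (t : ℝ) (y : Fin n → ℝ), V (t • y) = t ^ 2 * V y := by
    intro t y
    simp only [hV, mulVec_smul, smul_dotProduct, dotProduct_smul, smul_eq_mul]
    ring
  have hlow : ∀ x : Fin n → ℝ, V xc * ‖x‖ ^ 2 ≤ V x := by
    intro x
    rcases eq_or_ne x 0 with rfl | hx
    · simp [hV]
    · have hxn : ‖x‖ ≠ 0 := norm_ne_zero_iff.2 hx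
      have hu : (‖x‖⁻¹ • x) ∈ sphere (0 : Fin n → ℝ) 1 := by
        rw [mem_sphere_zero_iff_norm, norm_smul, norm_inv, norm_norm,
          inv_mul_cancel₀ hxn]
      have hxu : x = ‖x‖ • (‖x‖⁻¹ • x) := by
        rw [smul_smul, mul_inv_cancel₀ hxn, one_smul]
      have h3 : V x = ‖x‖ ^ 2 * V (‖x‖⁻¹ • x) := by
        conv_lhs => rw [hxu]
        rw [hsmul]
      have h4 := hcmin _ hu
      rw [h3]
      nlinarith [sq_nonneg ‖x‖]
  -- the trajectory is bounded
  have hmemball : ∀ k, f k ∈ closedBall (0 : Fin n → ℝ) (Real.sqrt (V (f 0) / V xc)) := by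
    intro k
    rw [mem_closedBall_zero_iff]
    rw [Real.le_sqrt (norm_nonneg _), le_div_iff₀ hc]
    · calc ‖f k‖ ^ 2 * V xc = V xc * ‖f k‖ ^ 2 := by ring
      _ ≤ V (f k) := hlow _
      _ ≤ V (f 0) := hanti (Nat.zero_le k)
    · exact div_nonneg (hVnonneg _) hc.le
  obtain ⟨z, -, φ, hφ, hzt⟩ :=
    tendsto_subseq_of_bounded isBounded_closedBall hmemball
  -- the subsequential limit is zero by observability
  have hz : z = 0 := by
    by_contra hz0
    obtain ⟨m, hm⟩ := hobs z hz0
    apply hm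
    have hWcont : Continuous fun x : Fin n → ℝ =>
        (C *ᵥ ((A ^ m) *ᵥ x)) ⬝ᵥ (C *ᵥ ((A ^ m) *ᵥ x)) := by
      have h1 : Continuous fun x : Fin n → ℝ => C *ᵥ ((A ^ m) *ᵥ x) :=
        continuous_const.matrix_mulVec (continuous_const.matrix_mulVec continuous_id)
      exact h1.dotProduct h1
    have h1 : Tendsto (fun j => (C *ᵥ ((A ^ m) *ᵥ (f (φ j)))) ⬝ᵥ (C *ᵥ ((A ^ m) *ᵥ (f (φ j)))))
        atTop (nhds ((C *ᵥ ((A ^ m) *ᵥ z)) ⬝ᵥ (C *ᵥ ((A ^ m) *ᵥ z)))) :=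
      (hWcont.tendsto z).comp hzt
    have h2 : ∀ j, (A ^ m) *ᵥ f (φ j) = f (m + φ j) := by
      intro j
      simp only [hf, mulVec_mulVec, ← pow_add]
    have hφt : Tendsto (fun j => m + φ j) atTop atTop :=
      tendsto_atTop_mono (fun j => Nat.le_add_left _ _) hφ.tendsto_atTop
    have h3 : Tendsto (fun j => (C *ᵥ f (m + φ j)) ⬝ᵥ (C *ᵥ f (m + φ j))) atTop (nhds 0) :=
      hCtend.comp hφt
    have h4 := tendsto_nhds_unique (h1.congr fun j => by rw [h2]) h3
    exact dotProduct_self_eq_zero.1 h4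
  -- hence L = 0
  have hL0 : L = 0 := by
    have h1 : Tendsto (fun j => V (f (φ j))) atTop (nhds (V z)) := (hVcont.tendsto z).comp hzt
    have h2 : Tendsto (fun j => V (f (φ j))) atTop (nhds L) := hL.comp hφ.tendsto_atTop
    have := tendsto_nhds_unique h2 h1
    rw [this, hz]
    simp [hV]
  rw [hL0] at hL
  -- squeeze: ‖f k‖² → 0
  have hsq : Tendsto (fun k => ‖f k‖ ^ 2) atTop (nhds 0) := by
    have hdiv : Tendsto (fun k => V (f k) / V xc) atTop (nhds 0) := by
      simpa using hL.div_const (V xc)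
    refine squeeze_zero (fun k => sq_nonneg _) (fun k => ?_) hdiv
    rw [le_div_iff₀ hc]
    calc ‖f k‖ ^ 2 * V xc = V xc * ‖f k‖ ^ 2 := by ring
    _ ≤ V (f k) := hlow _
  have hnorm : Tendsto (fun k => ‖f k‖) atTop (nhds 0) := by
    have := (Real.continuous_sqrt.tendsto 0).comp hsq
    simpa [Function.comp_def, Real.sqrt_sq (norm_nonneg _)] using this
  exact tendsto_zero_iff_norm_tendsto_zero.2 hnorm
end

section
/- If the discrete-time linear system x_{k+1} = A x_k, y_k = C x_k is asymptotically stable and there exists a symmetric positive definite n×n real matrix Q satisfying AᵀQA − Q + CᵀC = 0, then the system is observable: for every nonzero x₀ ∈ ℝⁿ there exists a natural number k with C Aᵏ x₀ ≠ 0. -/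
open Filter Matrix

/-- If the system `x_{k+1} = A x_k`, `y_k = C x_k` is asymptotically stable and there
is a symmetric positive definite solution of `AᵀQA − Q + CᵀC = 0`, then the system is
observable. -/
theorem stmt_3 {n p : ℕ} (A : Matrix (Fin n) (Fin n) ℝ) (C : Matrix (Fin p) (Fin n) ℝ)
    (hstab : ∀ x₀ : Fin n → ℝ,
      Tendsto (fun k : ℕ => (A ^ k) *ᵥ x₀) atTop (nhds 0))
    (hQ : ∃ Q : Matrix (Fin n) (Fin n) ℝ, Q.PosDef ∧ Aᵀ * Q * A - Q + Cᵀ * C = 0) :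
    ∀ x₀ : Fin n → ℝ, x₀ ≠ 0 → ∃ k : ℕ, C *ᵥ ((A ^ k) *ᵥ x₀) ≠ 0 := by
  obtain ⟨Q, hQpd, hlyap⟩ := hQ
  intro x₀ hx₀
  by_contra hcon
  push_neg at hcon
  have hA : Aᵀ * Q * A = Q - Cᵀ * C := by
    rw [sub_add_eq_add_sub, sub_eq_zero] at hlyap
    exact eq_sub_of_add_eq hlyap
  have hstep : ∀ v : Fin n → ℝ, C *ᵥ v = 0 →
      (A *ᵥ v) ⬝ᵥ Q *ᵥ (A *ᵥ v) = v ⬝ᵥ Q *ᵥ v := by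
    intro v hv
    have h1 : (A *ᵥ v) ⬝ᵥ Q *ᵥ (A *ᵥ v) = v ⬝ᵥ (Aᵀ * Q * A) *ᵥ v := by
      simp only [Matrix.dotProduct_mulVec, Matrix.vecMul_mulVec,
        Matrix.vecMul_vecMul, Matrix.mul_assoc]
    have h2 : v ⬝ᵥ (Cᵀ * C) *ᵥ v = (C *ᵥ v) ⬝ᵥ (C *ᵥ v) := by
      simp only [Matrix.dotProduct_mulVec, Matrix.vecMul_mulVec,
        Matrix.vecMul_vecMul, Matrix.mul_assoc]
    rw [h1, hA, Matrix.sub_mulVec, dotProduct_sub, h2, hv]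
    simp
  have key : ∀ k : ℕ, ((A ^ k) *ᵥ x₀) ⬝ᵥ Q *ᵥ ((A ^ k) *ᵥ x₀) = x₀ ⬝ᵥ Q *ᵥ x₀ := by
    intro k
    induction k with
    | zero => simp
    | succ k ih =>
      have hxk : (A ^ (k + 1)) *ᵥ x₀ = A *ᵥ ((A ^ k) *ᵥ x₀) := by
        rw [pow_succ', Matrix.mulVec_mulVec]
      rw [hxk, hstep _ (hcon k), ih]
  have hcont : Continuous fun v : Fin n → ℝ => v ⬝ᵥ Q *ᵥ v := by
    simp only [dotProduct, Matrix.mulVec]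
    continuity
  have hlim : Tendsto (fun k : ℕ => ((A ^ k) *ᵥ x₀) ⬝ᵥ Q *ᵥ ((A ^ k) *ᵥ x₀)) atTop
      (nhds ((0 : Fin n → ℝ) ⬝ᵥ Q *ᵥ 0)) :=
    (hcont.tendsto 0).comp (hstab x₀)
  have hlim' : Tendsto (fun _ : ℕ => x₀ ⬝ᵥ Q *ᵥ x₀) atTop (nhds (0 : ℝ)) := by
    have h00 : ((0 : Fin n → ℝ) ⬝ᵥ Q *ᵥ 0) = 0 := by simp
    rw [← h00]
    exact hlim.congr fun k => key k
  have h0 : x₀ ⬝ᵥ Q *ᵥ x₀ = 0 := tendsto_nhds_unique tendsto_const_nhds hlim'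
  have hpos := hQpd.dotProduct_mulVec_pos hx₀
  simp [h0] at hpos
end

section
/- If the discrete-time linear system x_{k+1} = A x_k + B u_k (with A an n×n real matrix and B an n×m real matrix) is asymptotically stable (for every x₀ ∈ ℝⁿ, Aᵏx₀ → 0 as k → ∞) and controllable (i.e., for every nonzero z ∈ ℝⁿ there exists a natural number k with Bᵀ(Aᵀ)ᵏ z ≠ 0), then there exists a symmetric positive definite n×n real matrix P satisfying the Lyapunov equation A P Aᵀ − P + B Bᵀ = 0. -/
open Filter Matrix

set_option maxHeartbeats 1000000

namespace Stmt4Aux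

section NormAux

attribute [local instance] Matrix.linftyOpNormedRing Matrix.linftyOpNormedAlgebra

variable {n : ℕ}

lemma entry_norm_le (X : Matrix (Fin n) (Fin n) ℝ) (i j : Fin n) : ‖X i j‖ ≤ ‖X‖ := by
  rw [Matrix.linfty_opNorm_def]
  have h1 : ‖X i j‖₊ ≤ ∑ j', ‖X i j'‖₊ :=
    Finset.single_le_sum (f := fun j' => ‖X i j'‖₊) (fun _ _ => zero_le) (Finset.mem_univ j)
  have h2 : (∑ j', ‖X i j'‖₊) ≤ Finset.univ.sup fun i => ∑ j, ‖X i j‖₊ :=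
    Finset.le_sup (f := fun i => ∑ j, ‖X i j‖₊) (Finset.mem_univ i)
  exact_mod_cast h1.trans h2

lemma norm_le_sum (X : Matrix (Fin n) (Fin n) ℝ) : ‖X‖ ≤ ∑ i, ∑ j, ‖X i j‖ := by
  rw [Matrix.linfty_opNorm_def]
  have h : (Finset.univ.sup fun i => ∑ j, ‖X i j‖₊) ≤ ∑ i, ∑ j, ‖X i j‖₊ := by
    apply Finset.sup_le
    intro i _
    exact Finset.single_le_sum (f := fun i => ∑ j, ‖X i j‖₊) (fun i _ => zero_le)
      (Finset.mem_univ i)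
  calc ((Finset.univ.sup fun i => ∑ j, ‖X i j‖₊ : NNReal) : ℝ)
      ≤ ((∑ i, ∑ j, ‖X i j‖₊ : NNReal) : ℝ) := by exact_mod_cast h
    _ = ∑ i, ∑ j, ‖X i j‖ := by push_cast; rfl

lemma summable_norm_pow (M : Matrix (Fin n) (Fin n) ℝ)
    (h : ∀ i j, Tendsto (fun k : ℕ => (M ^ k) i j) atTop (nhds 0)) :
    Summable (fun k : ℕ => ‖M ^ k‖) := by
  have hnorm : Tendsto (fun k : ℕ => ‖M ^ k‖) atTop (nhds 0) := by
    apply squeeze_zero (fun k => norm_nonneg _) (fun k => norm_le_sum (M ^ k))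
    have : Tendsto (fun k : ℕ => ∑ i : Fin n, ∑ j : Fin n, ‖(M ^ k) i j‖) atTop
        (nhds (∑ i : Fin n, ∑ j : Fin n, (0:ℝ))) := by
      apply tendsto_finset_sum
      intro i _
      apply tendsto_finset_sum
      intro j _
      have := (h i j).norm
      rwa [norm_zero] at this
    simpa using this
  obtain ⟨N, hN1, hNlt⟩ : ∃ N : ℕ, 1 ≤ N ∧ ‖M ^ N‖ < 1 := by
    have := (hnorm.eventually (gt_mem_nhds one_pos)).and (eventually_ge_atTop 1)
    obtain ⟨N, h1, h2⟩ := this.exists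
    exact ⟨N, h2, h1⟩
  haveI : NeZero N := ⟨by omega⟩
  set ρ := ‖M ^ N‖ with hρ
  have hρ0 : 0 ≤ ρ := norm_nonneg _
  set C := ∑ r ∈ Finset.range N, ‖M ^ r‖ with hC
  have hbound : ∀ k : ℕ, ‖M ^ k‖ ≤ ρ ^ (k / N) * C := by
    intro k
    have hk : M ^ k = (M ^ N) ^ (k / N) * M ^ (k % N) := by
      rw [← pow_mul, ← pow_add]
      exact congrArg (M ^ ·) (Nat.div_add_mod k N).symm
    have hCle : ‖M ^ (k % N)‖ ≤ C := by
      apply Finset.single_le_sum (f := fun r => ‖M ^ r‖) (fun i _ => norm_nonneg _)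
      exact Finset.mem_range.2 (Nat.mod_lt _ (by omega))
    rcases Nat.eq_zero_or_pos (k / N) with hq | hq
    · rw [hq, pow_zero, one_mul]
      have hk' : k % N = k := Nat.mod_eq_of_lt ((Nat.div_eq_zero_iff.1 hq).resolve_left (by omega))
      calc ‖M ^ k‖ = ‖M ^ (k % N)‖ := by rw [hk']
        _ ≤ C := hCle
    · calc ‖M ^ k‖ ≤ ‖(M ^ N) ^ (k / N)‖ * ‖M ^ (k % N)‖ := hk ▸ norm_mul_le _ _
        _ ≤ ρ ^ (k / N) * C := by
            apply mul_le_mul _ hCle (norm_nonneg _) (pow_nonneg hρ0 _)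
            exact norm_pow_le' _ hq
  apply Summable.of_nonneg_of_le (fun k => norm_nonneg _) hbound
  apply Summable.mul_right
  have h1 : Summable (fun p : ℕ × Fin N => ρ ^ p.1 * 1) :=
    Summable.mul_of_nonneg (summable_geometric_of_lt_one hρ0 hNlt)
      (summable_of_finite_support (Set.toFinite _)) (fun i => pow_nonneg hρ0 _)
      (fun i => zero_le_one)
  have := ((Nat.divModEquiv N).summable_iff (f := fun p : ℕ × Fin N => ρ ^ p.1 * 1)).2 h1
  simpa [Nat.divModEquiv, Function.comp_def] using this

/-- Summability of the total entrywise absolute values of the powers of a matrix whose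
powers tend to zero entrywise.  Stated without reference to any matrix norm. -/
lemma summable_abs_pow (M : Matrix (Fin n) (Fin n) ℝ)
    (h : ∀ i j, Tendsto (fun k : ℕ => (M ^ k) i j) atTop (nhds 0)) :
    Summable (fun k : ℕ => ∑ i, ∑ j, |(M ^ k) i j|) := by
  have hs := summable_norm_pow M h
  have hb : ∀ k : ℕ, ∑ i, ∑ j, |(M ^ k) i j| ≤ (n * n : ℝ) * ‖M ^ k‖ := by
    intro k
    calc ∑ i, ∑ j, |(M ^ k) i j| ≤ ∑ i : Fin n, ∑ j : Fin n, ‖M ^ k‖ := by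
          apply Finset.sum_le_sum
          intro i _
          apply Finset.sum_le_sum
          intro j _
          exact entry_norm_le (M ^ k) i j
      _ = (n * n : ℝ) * ‖M ^ k‖ := by
          simp [Finset.sum_const, Finset.card_univ]
          ring
  exact Summable.of_nonneg_of_le
    (fun k => Finset.sum_nonneg fun i _ => Finset.sum_nonneg fun j _ => abs_nonneg _)
    hb (hs.mul_left _)

end NormAux

end Stmt4Aux

/-- If the system `x_{k+1} = A x_k + B u_k` is asymptotically stable and controllable,
then there exists a symmetric positive definite `P` with `A P Aᵀ − P + B Bᵀ = 0`. -/
theorem stmt_4 {n m : ℕ} (A : Matrix (Fin n) (Fin n) ℝ) (B : Matrix (Fin n) (Fin m) ℝ)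
    (hstab : ∀ x₀ : Fin n → ℝ,
      Tendsto (fun k : ℕ => (A ^ k) *ᵥ x₀) atTop (nhds 0))
    (hctrb : ∀ z : Fin n → ℝ, z ≠ 0 → ∃ k : ℕ, Bᵀ *ᵥ ((Aᵀ ^ k) *ᵥ z) ≠ 0) :
    ∃ P : Matrix (Fin n) (Fin n) ℝ, P.PosDef ∧ A * P * Aᵀ - P + B * Bᵀ = 0 := by
  classical
  -- entrywise convergence of A^k and (Aᵀ)^k
  have hentry : ∀ i j : Fin n, Tendsto (fun k : ℕ => (A ^ k) i j) atTop (nhds 0) := by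
    intro i j
    have h1 := hstab (Pi.single j 1)
    have h2 : Tendsto (fun k : ℕ => ((A ^ k) *ᵥ Pi.single j 1) i) atTop (nhds 0) := by
      have := ((continuous_apply i).tendsto (0 : Fin n → ℝ)).comp h1
      simpa [Function.comp_def] using this
    simpa [Matrix.mulVec_single] using h2
  have hentryT : ∀ i j : Fin n, Tendsto (fun k : ℕ => (Aᵀ ^ k) i j) atTop (nhds 0) := by
    intro i j
    have := hentry j i
    simpa [← Matrix.transpose_pow, Matrix.transpose_apply] using this
  -- summability of the entrywise ℓ¹ norms
  set s : ℕ → ℝ := fun k => ∑ i, ∑ j, |(A ^ k) i j| with hsdef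
  set t : ℕ → ℝ := fun k => ∑ i, ∑ j, |(Aᵀ ^ k) i j| with htdef
  have hsA : Summable s := Stmt4Aux.summable_abs_pow A hentry
  have hsAT : Summable t := Stmt4Aux.summable_abs_pow Aᵀ hentryT
  have hs_nonneg : ∀ k, 0 ≤ s k := fun k =>
    Finset.sum_nonneg fun i _ => Finset.sum_nonneg fun j _ => abs_nonneg _
  have ht_nonneg : ∀ k, 0 ≤ t k := fun k =>
    Finset.sum_nonneg fun i _ => Finset.sum_nonneg fun j _ => abs_nonneg _
  set S : ℝ := ∑' k, s k with hSdef
  have hSle : ∀ k, s k ≤ S := fun k => hsA.le_tsum k fun j _ => hs_nonneg j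
  set M : Matrix (Fin n) (Fin n) ℝ := B * Bᵀ with hM
  set Cm : ℝ := ∑ a, ∑ b, |M a b| with hCm
  have hMle : ∀ a b, |M a b| ≤ Cm := by
    intro a b
    calc |M a b| ≤ ∑ b', |M a b'| :=
          Finset.single_le_sum (f := fun b' => |M a b'|) (fun _ _ => abs_nonneg _)
            (Finset.mem_univ b)
      _ ≤ Cm :=
          Finset.single_le_sum (f := fun a' => ∑ b', |M a' b'|)
            (fun _ _ => Finset.sum_nonneg fun _ _ => abs_nonneg _) (Finset.mem_univ a)
  have hCm0 : 0 ≤ Cm := Finset.sum_nonneg fun _ _ => Finset.sum_nonneg fun _ _ => abs_nonneg _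
  set f : ℕ → Matrix (Fin n) (Fin n) ℝ := fun k => A ^ k * M * Aᵀ ^ k with hfdef
  -- entrywise bound on f
  have hfbound : ∀ (k : ℕ) (i j : Fin n), |f k i j| ≤ Cm * s k * t k := by
    intro k i j
    have hexp : f k i j = ∑ a, ∑ b, (A ^ k) i b * M b a * (Aᵀ ^ k) a j := by
      simp [hfdef, Matrix.mul_apply, Finset.sum_mul]
    rw [hexp]
    have hrow : ∑ b, |(A ^ k) i b| ≤ s k :=
      Finset.single_le_sum (f := fun i' => ∑ b, |(A ^ k) i' b|)
        (fun _ _ => Finset.sum_nonneg fun _ _ => abs_nonneg _) (Finset.mem_univ i)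
    have hcol : ∑ a, |(Aᵀ ^ k) a j| ≤ t k := by
      apply Finset.sum_le_sum
      intro a _
      exact Finset.single_le_sum (f := fun b => |(Aᵀ ^ k) a b|) (fun _ _ => abs_nonneg _)
        (Finset.mem_univ j)
    calc |∑ a, ∑ b, (A ^ k) i b * M b a * (Aᵀ ^ k) a j|
        ≤ ∑ a, |∑ b, (A ^ k) i b * M b a * (Aᵀ ^ k) a j| := Finset.abs_sum_le_sum_abs _ _
      _ ≤ ∑ a, ∑ b, |(A ^ k) i b * M b a * (Aᵀ ^ k) a j| :=
          Finset.sum_le_sum fun a _ => Finset.abs_sum_le_sum_abs _ _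
      _ ≤ ∑ a, ∑ b, |(A ^ k) i b| * Cm * |(Aᵀ ^ k) a j| := by
          apply Finset.sum_le_sum
          intro a _
          apply Finset.sum_le_sum
          intro b _
          rw [abs_mul, abs_mul]
          apply mul_le_mul_of_nonneg_right _ (abs_nonneg _)
          exact mul_le_mul_of_nonneg_left (hMle b a) (abs_nonneg _)
      _ = Cm * (∑ b, |(A ^ k) i b|) * (∑ a, |(Aᵀ ^ k) a j|) := by
          rw [Finset.sum_comm]
          simp only [← Finset.sum_mul, ← Finset.mul_sum]
          ring
      _ ≤ Cm * s k * t k := by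
          apply mul_le_mul _ hcol (Finset.sum_nonneg fun _ _ => abs_nonneg _)
            (mul_nonneg hCm0 (hs_nonneg k))
          exact mul_le_mul_of_nonneg_left hrow hCm0
  -- entrywise summability of f
  have hfe : ∀ i j : Fin n, Summable (fun k => f k i j) := by
    intro i j
    apply Summable.of_abs
    have hb : ∀ k : ℕ, |f k i j| ≤ (Cm * S) * t k := by
      intro k
      calc |f k i j| ≤ Cm * s k * t k := hfbound k i j
        _ ≤ (Cm * S) * t k := by
            apply mul_le_mul_of_nonneg_right _ (ht_nonneg k)
            exact mul_le_mul_of_nonneg_left (hSle k) hCm0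
    exact Summable.of_nonneg_of_le (fun k => abs_nonneg _) hb (hsAT.mul_left _)
  have hf : Summable f :=
    Pi.summable.2 fun i => Pi.summable.2 fun j => hfe i j
  set P : Matrix (Fin n) (Fin n) ℝ := ∑' k, f k with hP
  have hPapply : ∀ i j : Fin n, P i j = ∑' k, f k i j := by
    intro i j
    rw [hP]
    exact (congrFun (tsum_apply hf) j).trans (tsum_apply (Pi.summable.1 hf i))
  -- the Lyapunov equation
  have hshift : P = M + ∑' k, f (k + 1) := by
    rw [hP, hf.tsum_eq_zero_add]
    congr 1
    simp [hfdef]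
  have hAPAT : A * P * Aᵀ = ∑' k, f (k + 1) := by
    have h1 : ∀ k, A * f k * Aᵀ = f (k + 1) := by
      intro k
      show A * (A ^ k * M * Aᵀ ^ k) * Aᵀ = A ^ (k + 1) * M * Aᵀ ^ (k + 1)
      rw [pow_succ' A k, pow_succ Aᵀ k]
      simp only [Matrix.mul_assoc]
    calc A * P * Aᵀ = ∑' k, A * f k * Aᵀ := by
          rw [← Summable.tsum_mul_left A hf, ← Summable.tsum_mul_right _ (hf.mul_left A)]
      _ = ∑' k, f (k + 1) := tsum_congr h1
  have hlyap : A * P * Aᵀ - P + B * Bᵀ = 0 := by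
    rw [hAPAT, hshift]
    abel
  -- symmetry
  have hfsymm : ∀ (k : ℕ) (i j : Fin n), f k j i = f k i j := by
    intro k i j
    have h1 : (f k)ᵀ = f k := by
      show (A ^ k * M * Aᵀ ^ k)ᵀ = A ^ k * M * Aᵀ ^ k
      rw [hM]
      simp only [Matrix.transpose_mul, Matrix.transpose_pow, Matrix.transpose_transpose,
        Matrix.mul_assoc]
    calc f k j i = (f k)ᵀ i j := rfl
      _ = f k i j := by rw [h1]
  have hherm : P.IsHermitian := by
    show Pᴴ = P
    rw [Matrix.conjTranspose_eq_transpose_of_trivial]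
    ext i j
    rw [Matrix.transpose_apply, hPapply, hPapply]
    exact tsum_congr fun k => hfsymm k i j
  refine ⟨P, Matrix.PosDef.of_dotProduct_mulVec_pos hherm ?_, hlyap⟩
  intro x hx
  have hstar : star x = x := by funext i; simp
  rw [hstar]
  -- the quadratic form of a matrix
  have hq : ∀ X : Matrix (Fin n) (Fin n) ℝ,
      x ⬝ᵥ (X *ᵥ x) = ∑ i, ∑ j, x i * (X i j * x j) := by
    intro X
    simp [dotProduct, Matrix.mulVec, Finset.mul_sum]
  have hsummand : ∀ i j : Fin n, Summable (fun k => x i * (f k i j * x j)) := by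
    intro i j
    exact ((hfe i j).mul_right (x j)).mul_left (x i)
  have hqsum : Summable (fun k => x ⬝ᵥ (f k *ᵥ x)) := by
    apply Summable.congr (f := fun k => ∑ i, ∑ j, x i * (f k i j * x j))
    · exact summable_sum fun i _ => summable_sum fun j _ => hsummand i j
    · intro k
      exact (hq (f k)).symm
  have hdq : x ⬝ᵥ (P *ᵥ x) = ∑' k, x ⬝ᵥ (f k *ᵥ x) := by
    rw [hq]
    have h1 : ∀ i j : Fin n, x i * (P i j * x j) = ∑' k, x i * (f k i j * x j) := by
      intro i j
      calc x i * (P i j * x j) = x i * ((∑' k, f k i j) * x j) := by rw [hPapply]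
        _ = x i * (∑' k, f k i j * x j) := by rw [tsum_mul_right]
        _ = ∑' k, x i * (f k i j * x j) := by rw [tsum_mul_left]
    calc ∑ i, ∑ j, x i * (P i j * x j)
        = ∑ i, ∑ j, ∑' k, x i * (f k i j * x j) := by
          exact Finset.sum_congr rfl fun i _ => Finset.sum_congr rfl fun j _ => h1 i j
      _ = ∑ i, ∑' k, ∑ j, x i * (f k i j * x j) := by
          exact Finset.sum_congr rfl fun i _ =>
            (Summable.tsum_finsetSum fun j _ => hsummand i j).symm
      _ = ∑' k, ∑ i, ∑ j, x i * (f k i j * x j) := by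
          exact (Summable.tsum_finsetSum fun i _ => summable_sum fun j _ => hsummand i j).symm
      _ = ∑' k, x ⬝ᵥ (f k *ᵥ x) := tsum_congr fun k => (hq (f k)).symm
  -- each term is a square
  have hterm : ∀ k, x ⬝ᵥ (f k *ᵥ x) =
      (Bᵀ *ᵥ (Aᵀ ^ k *ᵥ x)) ⬝ᵥ (Bᵀ *ᵥ (Aᵀ ^ k *ᵥ x)) := by
    intro k
    have hN : f k = (A ^ k * B) * (A ^ k * B)ᵀ := by
      show A ^ k * M * Aᵀ ^ k = (A ^ k * B) * (A ^ k * B)ᵀ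
      rw [hM, Matrix.transpose_mul, Matrix.transpose_pow]
      simp only [Matrix.mul_assoc]
    have hNT : (A ^ k * B)ᵀ *ᵥ x = Bᵀ *ᵥ (Aᵀ ^ k *ᵥ x) := by
      rw [Matrix.transpose_mul, Matrix.transpose_pow, ← Matrix.mulVec_mulVec]
    rw [hN, ← Matrix.mulVec_mulVec, Matrix.dotProduct_mulVec x (A ^ k * B),
      ← Matrix.mulVec_transpose, hNT]
  have hnonneg : ∀ k, 0 ≤ x ⬝ᵥ (f k *ᵥ x) := by
    intro k
    rw [hterm k]
    exact Finset.sum_nonneg fun i _ => mul_self_nonneg _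
  obtain ⟨k0, hk0⟩ := hctrb x hx
  have hpos : 0 < x ⬝ᵥ (f k0 *ᵥ x) := by
    rw [hterm k0]
    refine lt_of_le_of_ne (Finset.sum_nonneg fun i _ => mul_self_nonneg _) ?_
    intro h
    exact hk0 (dotProduct_self_eq_zero.1 h.symm)
  rw [hdq]
  exact Summable.tsum_pos hqsum hnonneg k0 hpos
end

section
/- If the discrete-time linear system x_{k+1} = A x_k + B u_k is controllable and there exists a symmetric positive definite n×n real matrix P satisfying A P Aᵀ − P + B Bᵀ = 0, then the system is asymptotically stable: for every x₀ ∈ ℝⁿ, Aᵏx₀ → 0 as k → ∞. -/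
open Filter Matrix

lemma aux_dot_shift {n m : ℕ} (M : Matrix (Fin n) (Fin m) ℝ) (x : Fin n → ℝ) (w : Fin m → ℝ) :
    x ⬝ᵥ (M *ᵥ w) = (Mᵀ *ᵥ x) ⬝ᵥ w := by
  rw [dotProduct_mulVec, ← mulVec_transpose]

lemma aux_step {n m : ℕ} (A P : Matrix (Fin n) (Fin n) ℝ) (B : Matrix (Fin n) (Fin m) ℝ)
    (heq : A * P * Aᵀ = P - B * Bᵀ) (v : Fin n → ℝ) :
    (Aᵀ *ᵥ v) ⬝ᵥ (P *ᵥ (Aᵀ *ᵥ v)) = v ⬝ᵥ (P *ᵥ v) - (Bᵀ *ᵥ v) ⬝ᵥ (Bᵀ *ᵥ v) := by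
  have h1 : v ⬝ᵥ ((A * P * Aᵀ) *ᵥ v) = (Aᵀ *ᵥ v) ⬝ᵥ (P *ᵥ (Aᵀ *ᵥ v)) := by
    rw [← mulVec_mulVec, ← mulVec_mulVec, aux_dot_shift]
  have h2 : v ⬝ᵥ ((B * Bᵀ) *ᵥ v) = (Bᵀ *ᵥ v) ⬝ᵥ (Bᵀ *ᵥ v) := by
    rw [← mulVec_mulVec, aux_dot_shift]
  rw [← h1, ← h2, heq, sub_mulVec, dotProduct_sub]

open scoped MatrixOrder in
lemma aux_coercive {n : ℕ} {P : Matrix (Fin n) (Fin n) ℝ} (hPd : P.PosDef) :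
    ∃ C : ℝ, 0 ≤ C ∧ ∀ v : Fin n → ℝ, ‖v‖ ≤ C * Real.sqrt (v ⬝ᵥ (P *ᵥ v)) := by
  have hps := hPd.posSemidef
  set R := CFC.sqrt P with hRdef
  have hR : R.PosSemidef := (CFC.sqrt_nonneg P).posSemidef
  have hRR : R * R = P := CFC.sqrt_mul_sqrt_self P hps.nonneg
  have hRsymm : Rᵀ = R := by
    have := hR.1
    rwa [IsHermitian, conjTranspose_eq_transpose_of_trivial] at this
  have hdet : IsUnit R.det := by
    have hdP : P.det ≠ 0 := hPd.det_pos.ne'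
    have : R.det * R.det = P.det := by rw [← det_mul, hRR]
    exact isUnit_iff_ne_zero.2 (fun h => hdP (by rw [← this, h, mul_zero]))
  have hinv : R⁻¹ * R = 1 := nonsing_inv_mul R hdet
  set L := LinearMap.toContinuousLinearMap (Matrix.mulVecLin R⁻¹) with hLdef
  have hLv : ∀ w, L w = R⁻¹ *ᵥ w := fun w => rfl
  refine ⟨‖L‖, norm_nonneg _, fun v => ?_⟩
  have hqv : v ⬝ᵥ (P *ᵥ v) = (R *ᵥ v) ⬝ᵥ (R *ᵥ v) := by
    conv_lhs => rw [← hRR]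
    rw [← mulVec_mulVec, aux_dot_shift, hRsymm]
  have hnorm : ‖R *ᵥ v‖ ≤ Real.sqrt ((R *ᵥ v) ⬝ᵥ (R *ᵥ v)) := by
    rw [pi_norm_le_iff_of_nonneg (Real.sqrt_nonneg _)]
    intro i
    rw [Real.norm_eq_abs]
    apply Real.abs_le_sqrt
    rw [dotProduct]
    calc ((R *ᵥ v) i) ^ 2 = (R *ᵥ v) i * (R *ᵥ v) i := by ring
    _ ≤ ∑ j, (R *ᵥ v) j * (R *ᵥ v) j :=
      Finset.single_le_sum (f := fun j => (R *ᵥ v) j * (R *ᵥ v) j)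
        (fun j _ => mul_self_nonneg _) (Finset.mem_univ i)
  have hv : R⁻¹ *ᵥ (R *ᵥ v) = v := by rw [mulVec_mulVec, hinv, one_mulVec]
  calc ‖v‖ = ‖L (R *ᵥ v)‖ := by rw [hLv, hv]
  _ ≤ ‖L‖ * ‖R *ᵥ v‖ := L.le_opNorm _
  _ ≤ ‖L‖ * Real.sqrt (v ⬝ᵥ (P *ᵥ v)) := by
      rw [hqv]; exact mul_le_mul_of_nonneg_left hnorm (norm_nonneg _)

lemma aux_comp_sq {m : ℕ} (w : Fin m → ℝ) (i : Fin m) : (w i) ^ 2 ≤ w ⬝ᵥ w := by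
  rw [dotProduct]
  calc (w i) ^ 2 = w i * w i := by ring
  _ ≤ ∑ j, w j * w j :=
    Finset.single_le_sum (f := fun j => w j * w j) (fun j _ => mul_self_nonneg _)
      (Finset.mem_univ i)

lemma aux_dot_nonneg {m : ℕ} (w : Fin m → ℝ) : 0 ≤ w ⬝ᵥ w :=
  Finset.sum_nonneg fun j _ => mul_self_nonneg _

/-- If the system `x_{k+1} = A x_k + B u_k` is controllable and there is a symmetric
positive definite solution `P` of `A P Aᵀ − P + B Bᵀ = 0`, then the system is
asymptotically stable. -/
theorem stmt_5 {n m : ℕ} (A : Matrix (Fin n) (Fin n) ℝ) (B : Matrix (Fin n) (Fin m) ℝ)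
    (hctrb : ∀ z : Fin n → ℝ, z ≠ 0 → ∃ k : ℕ, Bᵀ *ᵥ ((Aᵀ ^ k) *ᵥ z) ≠ 0)
    (hP : ∃ P : Matrix (Fin n) (Fin n) ℝ, P.PosDef ∧ A * P * Aᵀ - P + B * Bᵀ = 0) :
    ∀ x₀ : Fin n → ℝ, Tendsto (fun k : ℕ => (A ^ k) *ᵥ x₀) atTop (nhds 0) := by
  obtain ⟨P, hPd, heq0⟩ := hP
  have heq : A * P * Aᵀ = P - B * Bᵀ := by rwa [sub_add, sub_eq_zero] at heq0
  obtain ⟨C, hC0, hC⟩ := aux_coercive hPd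
  set q : (Fin n → ℝ) → ℝ := fun w => w ⬝ᵥ (P *ᵥ w) with hqdef
  have hq0 : ∀ w, 0 ≤ q w := by
    intro w
    have := hPd.posSemidef.dotProduct_mulVec_nonneg w
    simpa using this
  have main : ∀ z : Fin n → ℝ, Tendsto (fun k : ℕ => (Aᵀ ^ k) *ᵥ z) atTop (nhds 0) := by
    intro z
    set v : ℕ → Fin n → ℝ := fun k => (Aᵀ ^ k) *ᵥ z with hvdef
    set d : ℕ → ℝ := fun k => (Bᵀ *ᵥ v k) ⬝ᵥ (Bᵀ *ᵥ v k) with hddef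
    have hvsucc : ∀ k, v (k + 1) = Aᵀ *ᵥ v k := by
      intro k
      simp only [hvdef, pow_succ', ← mulVec_mulVec]
    have hsum : ∀ k, q (v k) + ∑ j ∈ Finset.range k, d j = q z := by
      intro k
      induction k with
      | zero => simp [hvdef, hqdef]
      | succ k ih =>
        have hstep : q (v (k + 1)) = q (v k) - d k := by
          rw [hvsucc k]
          exact aux_step A P B heq (v k)
        rw [Finset.sum_range_succ, hstep]
        linarith
    have hd0 : ∀ k, 0 ≤ d k := fun k => aux_dot_nonneg _
    have hqle : ∀ k, q (v k) ≤ q z := by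
      intro k
      have h1 := hsum k
      have h2 : 0 ≤ ∑ j ∈ Finset.range k, d j := Finset.sum_nonneg fun j _ => hd0 j
      linarith
    have hpartial : ∀ k, ∑ j ∈ Finset.range k, d j ≤ q z := by
      intro k
      have h1 := hsum k
      have h2 := hq0 (v k)
      linarith
    have hdtends : Tendsto d atTop (nhds 0) :=
      (summable_of_sum_range_le hd0 hpartial).tendsto_atTop_zero
    have hBtends : Tendsto (fun k => Bᵀ *ᵥ v k) atTop (nhds 0) := by
      rw [tendsto_pi_nhds]
      intro i
      have hsq : Tendsto (fun k => Real.sqrt (d k)) atTop (nhds 0) := by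
        have := (Real.continuous_sqrt.tendsto 0).comp hdtends
        simpa [Function.comp_def] using this
      refine squeeze_zero_norm (fun k => ?_) hsq
      rw [Real.norm_eq_abs]
      exact Real.abs_le_sqrt (aux_comp_sq (Bᵀ *ᵥ v k) i)
    have hbound : ∀ k, v k ∈ Metric.closedBall (0 : Fin n → ℝ) (C * Real.sqrt (q z)) := by
      intro k
      rw [Metric.mem_closedBall, dist_zero_right]
      calc ‖v k‖ ≤ C * Real.sqrt (q (v k)) := hC _
      _ ≤ C * Real.sqrt (q z) :=
        mul_le_mul_of_nonneg_left (Real.sqrt_le_sqrt (hqle k)) hC0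
    apply tendsto_of_subseq_tendsto
    intro ns hns
    obtain ⟨a, -, φ, hφmono, hφ⟩ :=
      tendsto_subseq_of_bounded Metric.isBounded_closedBall (fun k => hbound (ns k))
    refine ⟨φ, ?_⟩
    have ha : a = 0 := by
      by_contra hne
      obtain ⟨j, hj⟩ := hctrb a hne
      apply hj
      have hcont := LinearMap.continuous_of_finiteDimensional
        ((Bᵀ.mulVecLin).comp ((Aᵀ ^ j).mulVecLin))
      have h2 : Tendsto (fun i => Bᵀ *ᵥ ((Aᵀ ^ j) *ᵥ (v (ns (φ i))))) atTop
          (nhds (Bᵀ *ᵥ ((Aᵀ ^ j) *ᵥ a))) := (hcont.tendsto a).comp hφ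
      have h3 : (fun i => Bᵀ *ᵥ ((Aᵀ ^ j) *ᵥ (v (ns (φ i))))) =
          fun i => Bᵀ *ᵥ v (j + ns (φ i)) := by
        funext i
        simp only [hvdef, mulVec_mulVec, ← pow_add]
      have hns' : Tendsto (fun i => j + ns (φ i)) atTop atTop :=
        tendsto_atTop_mono (fun i => Nat.le_add_left (ns (φ i)) j)
          (hns.comp hφmono.tendsto_atTop)
      have h4 : Tendsto (fun i => Bᵀ *ᵥ v (j + ns (φ i))) atTop (nhds 0) :=
        hBtends.comp hns'
      rw [h3] at h2
      exact tendsto_nhds_unique h2 h4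
    rw [ha] at hφ
    exact hφ
  intro x₀
  rw [tendsto_pi_nhds]
  intro i
  have hrepr : ∀ k : ℕ, ((A ^ k) *ᵥ x₀) i = ((Aᵀ ^ k) *ᵥ (Pi.single i 1)) ⬝ᵥ x₀ := by
    intro k
    rw [← transpose_pow, ← aux_dot_shift, single_dotProduct, one_mul]
  have hcont : Continuous fun w : Fin n → ℝ => w ⬝ᵥ x₀ := by
    unfold dotProduct
    exact continuous_finset_sum _ fun j _ => (continuous_apply j).mul continuous_const
  have h := (hcont.tendsto 0).comp (main (Pi.single i 1))
  simp only [Function.comp, zero_dotProduct] at h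
  simp only [hrepr, Pi.zero_apply]
  exact h
end

section
/- If the discrete-time linear system x_{k+1} = A x_k + B u_k is asymptotically stable and there exists a symmetric positive definite n×n real matrix P satisfying A P Aᵀ − P + B Bᵀ = 0, then the system is controllable: for every nonzero z ∈ ℝⁿ there exists a natural number k with Bᵀ(Aᵀ)ᵏ z ≠ 0. -/
open Filter Matrix

lemma stmt_6_aux1 {n p : ℕ} (M : Matrix (Fin n) (Fin p) ℝ) (N : Matrix (Fin p) (Fin p) ℝ)
    (v : Fin n → ℝ) :
    (Mᵀ *ᵥ v) ⬝ᵥ (N *ᵥ (Mᵀ *ᵥ v)) = v ⬝ᵥ ((M * N * Mᵀ) *ᵥ v) := by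
  conv_rhs => rw [← Matrix.mulVec_mulVec, ← Matrix.mulVec_mulVec, Matrix.dotProduct_mulVec,
    ← Matrix.mulVec_transpose]

lemma stmt_6_aux2 {n p : ℕ} (B : Matrix (Fin n) (Fin p) ℝ) (v : Fin n → ℝ) :
    (Bᵀ *ᵥ v) ⬝ᵥ (Bᵀ *ᵥ v) = v ⬝ᵥ ((B * Bᵀ) *ᵥ v) := by
  conv_rhs => rw [← Matrix.mulVec_mulVec, Matrix.dotProduct_mulVec, ← Matrix.mulVec_transpose]

/-- If the system `x_{k+1} = A x_k + B u_k` is asymptotically stable and there is a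
symmetric positive definite solution `P` of `A P Aᵀ − P + B Bᵀ = 0`, then the system
is controllable. -/
theorem stmt_6 {n m : ℕ} (A : Matrix (Fin n) (Fin n) ℝ) (B : Matrix (Fin n) (Fin m) ℝ)
    (hstab : ∀ x₀ : Fin n → ℝ,
      Tendsto (fun k : ℕ => (A ^ k) *ᵥ x₀) atTop (nhds 0))
    (hP : ∃ P : Matrix (Fin n) (Fin n) ℝ, P.PosDef ∧ A * P * Aᵀ - P + B * Bᵀ = 0) :
    ∀ z : Fin n → ℝ, z ≠ 0 → ∃ k : ℕ, Bᵀ *ᵥ ((Aᵀ ^ k) *ᵥ z) ≠ 0 := by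
  obtain ⟨P, hPd, hly⟩ := hP
  intro z hz
  by_contra h
  push_neg at h
  -- the controllability-free trajectory of the adjoint system
  have hq : ∀ k : ℕ, ((Aᵀ ^ k) *ᵥ z) ⬝ᵥ (P *ᵥ ((Aᵀ ^ k) *ᵥ z)) = z ⬝ᵥ (P *ᵥ z) := by
    intro k
    induction k with
    | zero => simp
    | succ k ih =>
      set v : Fin n → ℝ := (Aᵀ ^ k) *ᵥ z with hv
      have hstep : (Aᵀ ^ (k + 1)) *ᵥ z = Aᵀ *ᵥ v := by
        rw [hv, Matrix.mulVec_mulVec, pow_succ']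
      rw [hstep, stmt_6_aux1, ← ih]
      have hB : Bᵀ *ᵥ v = 0 := h k
      have h2 : v ⬝ᵥ ((B * Bᵀ) *ᵥ v) = 0 := by
        rw [← stmt_6_aux2, hB]; simp
      have hPeq : A * P * Aᵀ = P - B * Bᵀ := by
        linear_combination (norm := module) hly
      rw [hPeq, Matrix.sub_mulVec, dotProduct_sub, h2, sub_zero]
  -- the adjoint trajectory tends to 0
  have hw0 : Tendsto (fun k : ℕ => (Aᵀ ^ k) *ᵥ z) atTop (nhds 0) := by
    rw [tendsto_pi_nhds]
    intro j
    have h1 : Tendsto (fun k : ℕ => z ⬝ᵥ ((A ^ k) *ᵥ Pi.single j 1)) atTop (nhds 0) := by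
      have hc : Continuous fun v : Fin n → ℝ => z ⬝ᵥ v := by
        simp only [dotProduct]
        fun_prop
      have := (hc.tendsto 0).comp (hstab (Pi.single j 1))
      simpa [Function.comp_def] using this
    have heq : ∀ k : ℕ, ((Aᵀ ^ k) *ᵥ z) j = z ⬝ᵥ ((A ^ k) *ᵥ Pi.single j 1) := by
      intro k
      simp [Matrix.mulVec, dotProduct, ← Matrix.transpose_pow, Matrix.transpose_apply,
        Pi.single_apply, mul_comm]
    simpa only [heq, Pi.zero_apply] using h1
  -- hence the (constant) quadratic form tends to 0
  have hc2 : Continuous fun v : Fin n → ℝ => v ⬝ᵥ (P *ᵥ v) := by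
    simp only [dotProduct, Matrix.mulVec]
    fun_prop
  have hq0 : Tendsto (fun k : ℕ => ((Aᵀ ^ k) *ᵥ z) ⬝ᵥ (P *ᵥ ((Aᵀ ^ k) *ᵥ z))) atTop (nhds 0) := by
    have := (hc2.tendsto 0).comp hw0
    simpa [Function.comp_def, -Matrix.mulVec_mulVec] using this
  have hzero : z ⬝ᵥ (P *ᵥ z) = 0 := by
    have := (tendsto_congr hq).mp hq0
    exact tendsto_nhds_unique tendsto_const_nhds this
  have hpos := (posDef_iff_dotProduct_mulVec.mp hPd).2 hz
  simp only [RCLike.re_to_real, star_trivial] at hpos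
  rw [hzero] at hpos
  exact lt_irrefl 0 hpos
end

section
/- If the discrete-time linear system x_{k+1} = A x_k, y_k = C x_k is detectable (i.e., for every nonzero x₀ ∈ ℝⁿ with the property that C Aᵏ x₀ = 0 for all natural numbers k, one has Aᵏx₀ → 0 as k → ∞) and there exists a symmetric positive semidefinite n×n real matrix Q satisfying AᵀQA − Q + CᵀC = 0, then the system is asymptotically stable: for every x₀ ∈ ℝⁿ, Aᵏx₀ → 0 as k → ∞. -/
open Filter Matrix

lemma re_mulVec {m n : ℕ} (M : Matrix (Fin m) (Fin n) ℝ) (w : Fin n → ℂ) (i : Fin m) :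
    (M *ᵥ (fun j => (w j).re)) i = ((M.map (fun r => (r : ℂ)) *ᵥ w) i).re := by
  simp [mulVec, dotProduct, Complex.re_sum, Complex.re_ofReal_mul]

lemma im_mulVec {m n : ℕ} (M : Matrix (Fin m) (Fin n) ℝ) (w : Fin n → ℂ) (i : Fin m) :
    (M *ᵥ (fun j => (w j).im)) i = ((M.map (fun r => (r : ℂ)) *ᵥ w) i).im := by
  simp [mulVec, dotProduct, Complex.im_sum, Complex.im_ofReal_mul]

lemma map_pow' {n : ℕ} (A : Matrix (Fin n) (Fin n) ℝ) (k : ℕ) :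
    (A.map (fun r => (r : ℂ))) ^ k = (A ^ k).map (fun r => (r : ℂ)) := by
  have : A.map (fun r => (r : ℂ)) = (algebraMap ℝ ℂ).mapMatrix A := rfl
  rw [this, ← map_pow]; rfl

lemma key_spec {n p : ℕ} (A : Matrix (Fin n) (Fin n) ℝ) (C : Matrix (Fin p) (Fin n) ℝ)
    (Q : Matrix (Fin n) (Fin n) ℝ) (hQpsd : Q.PosSemidef)
    (hL : Aᵀ * Q * A - Q + Cᵀ * C = 0)
    (hdet : ∀ x₀ : Fin n → ℝ, x₀ ≠ 0 → (∀ k : ℕ, C *ᵥ ((A ^ k) *ᵥ x₀) = 0) →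
      Tendsto (fun k : ℕ => (A ^ k) *ᵥ x₀) atTop (nhds 0)) :
    ∀ μ ∈ spectrum ℂ (A.map (fun r => (r : ℂ))), ‖μ‖₊ < 1 := by
  set B := A.map (fun r => (r : ℂ)) with hB
  intro μ hμ
  by_contra hge
  have hge : 1 ≤ ‖μ‖ := by
    have := not_lt.mp hge
    exact_mod_cast this
  -- eigenvector
  rw [← AlgEquiv.spectrum_eq (Matrix.toLinAlgEquiv' : Matrix (Fin n) (Fin n) ℂ ≃ₐ[ℂ] _) B,
    ← Module.End.hasEigenvalue_iff_mem_spectrum] at hμ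
  obtain ⟨v, hv⟩ := hμ.exists_hasEigenvector
  have hvne : v ≠ 0 := hv.right
  have heig : B *ᵥ v = μ • v := by
    have h := hv.apply_eq_smul
    rwa [Matrix.toLinAlgEquiv'_apply] at h
  set x : Fin n → ℝ := fun j => (v j).re with hx
  set y : Fin n → ℝ := fun j => (v j).im with hy
  set a : ℝ := μ.re
  set b : ℝ := μ.im
  have hab : 1 ≤ a ^ 2 + b ^ 2 := by
    have h1 : ‖μ‖ ^ 2 = a * a + b * b := by
      rw [Complex.sq_norm, Complex.normSq_apply]
    nlinarith [norm_nonneg μ]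
  have hAx : A *ᵥ x = a • x - b • y := by
    funext i
    have := re_mulVec A v i
    rw [show (fun j => (v j).re) = x from rfl] at this
    rw [this, ← hB, heig]
    simp [Complex.mul_re, hx, hy, Pi.smul_apply, smul_eq_mul]
    rfl
  have hAy : A *ᵥ y = b • x + a • y := by
    funext i
    have := im_mulVec A v i
    rw [show (fun j => (v j).im) = y from rfl] at this
    rw [this, ← hB, heig]
    simp [Complex.mul_im, hx, hy, Pi.smul_apply, smul_eq_mul]
    ring
  -- scalar Lyapunov identity
  have hS : ∀ u : Fin n → ℝ,
      (A *ᵥ u) ⬝ᵥ (Q *ᵥ (A *ᵥ u)) - u ⬝ᵥ (Q *ᵥ u) + (C *ᵥ u) ⬝ᵥ (C *ᵥ u) = 0 := by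
    intro u
    have h0 : u ⬝ᵥ ((Aᵀ * Q * A - Q + Cᵀ * C) *ᵥ u) = 0 := by rw [hL]; simp
    rw [add_mulVec, sub_mulVec, dotProduct_add, dotProduct_sub] at h0
    have e1 : u ⬝ᵥ ((Aᵀ * Q * A) *ᵥ u) = (A *ᵥ u) ⬝ᵥ (Q *ᵥ (A *ᵥ u)) := by
      rw [mul_assoc, ← mulVec_mulVec, dotProduct_mulVec, vecMul_transpose, ← mulVec_mulVec]
    have e2 : u ⬝ᵥ ((Cᵀ * C) *ᵥ u) = (C *ᵥ u) ⬝ᵥ (C *ᵥ u) := by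
      rw [← mulVec_mulVec, dotProduct_mulVec, vecMul_transpose]
    rw [e1, e2] at h0
    linarith
  have hq : ∀ u : Fin n → ℝ, 0 ≤ u ⬝ᵥ (Q *ᵥ u) := by
    intro u
    simpa using hQpsd.dotProduct_mulVec_nonneg u
  have hQs : ∀ i j, Q j i = Q i j := by
    intro i j
    have h := congrFun (congrFun hQpsd.1 i) j
    simpa using h
  have hsym : x ⬝ᵥ (Q *ᵥ y) = y ⬝ᵥ (Q *ᵥ x) := by
    simp only [dotProduct, mulVec, Finset.mul_sum]
    rw [Finset.sum_comm]
    refine Finset.sum_congr rfl fun j _ => Finset.sum_congr rfl fun i _ => ?_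
    rw [hQs i j]
    ring
  set qxx := x ⬝ᵥ (Q *ᵥ x)
  set qyy := y ⬝ᵥ (Q *ᵥ y)
  set qxy := x ⬝ᵥ (Q *ᵥ y)
  set cx := (C *ᵥ x) ⬝ᵥ (C *ᵥ x)
  set cy := (C *ᵥ y) ⬝ᵥ (C *ᵥ y)
  have hSx := hS x
  have hSy := hS y
  rw [hAx] at hSx
  rw [hAy] at hSy
  have ex : (a • x - b • y) ⬝ᵥ (Q *ᵥ (a • x - b • y)) =
      a ^ 2 * qxx - a * b * qxy - a * b * (y ⬝ᵥ (Q *ᵥ x)) + b ^ 2 * qyy := by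
    simp [mulVec_sub, mulVec_smul, dotProduct_sub, sub_dotProduct, dotProduct_smul,
      smul_dotProduct, smul_eq_mul, qxx, qyy, qxy]
    ring
  have ey : (b • x + a • y) ⬝ᵥ (Q *ᵥ (b • x + a • y)) =
      b ^ 2 * qxx + a * b * qxy + a * b * (y ⬝ᵥ (Q *ᵥ x)) + a ^ 2 * qyy := by
    simp [mulVec_add, mulVec_smul, dotProduct_add, add_dotProduct, dotProduct_smul,
      smul_dotProduct, smul_eq_mul, qxx, qyy, qxy]
    ring
  rw [ex] at hSx
  rw [ey] at hSy
  -- conclude C x = 0 and C y = 0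
  have hcx0 : cx = 0 ∧ cy = 0 := by
    have hsum : (a ^ 2 + b ^ 2 - 1) * (qxx + qyy) + cx + cy = 0 := by linarith
    have h1 : 0 ≤ (a ^ 2 + b ^ 2 - 1) * (qxx + qyy) := by
      apply mul_nonneg (by linarith)
      have := hq x; have := hq y; linarith [hq x, hq y]
    have hcxn : 0 ≤ cx := by
      have : cx = ∑ i, (C *ᵥ x) i * (C *ᵥ x) i := rfl
      rw [this]; exact Finset.sum_nonneg fun i _ => mul_self_nonneg _
    have hcyn : 0 ≤ cy := by
      have : cy = ∑ i, (C *ᵥ y) i * (C *ᵥ y) i := rfl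
      rw [this]; exact Finset.sum_nonneg fun i _ => mul_self_nonneg _
    constructor <;> linarith
  have hCx : C *ᵥ x = 0 := dotProduct_self_eq_zero.mp hcx0.1
  have hCy : C *ᵥ y = 0 := dotProduct_self_eq_zero.mp hcx0.2
  -- complex output is zero
  have hCv : (C.map (fun r => (r : ℂ))) *ᵥ v = 0 := by
    funext i
    apply Complex.ext
    · rw [← re_mulVec C v i]
      simpa using congrFun hCx i
    · rw [← im_mulVec C v i]
      simpa using congrFun hCy i
  -- powers of eigen relation
  have hBk : ∀ k : ℕ, (B ^ k) *ᵥ v = (μ ^ k) • v := by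
    intro k
    induction k with
    | zero => simp
    | succ k ih =>
      rw [pow_succ', ← mulVec_mulVec, ih, mulVec_smul, heig, smul_smul, ← pow_succ]
  have hAkx : ∀ k : ℕ, (A ^ k) *ᵥ x = fun i => ((μ ^ k • v) i).re := by
    intro k; funext i
    have := re_mulVec (A ^ k) v i
    rw [show (fun j => (v j).re) = x from rfl] at this
    rw [this, ← map_pow', ← hB, hBk]
  have hAky : ∀ k : ℕ, (A ^ k) *ᵥ y = fun i => ((μ ^ k • v) i).im := by
    intro k; funext i
    have := im_mulVec (A ^ k) v i
    rw [show (fun j => (v j).im) = y from rfl] at this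
    rw [this, ← map_pow', ← hB, hBk]
  -- unobservability of x and y
  have hCkx : ∀ k : ℕ, C *ᵥ ((A ^ k) *ᵥ x) = 0 := by
    intro k
    rw [hAkx k]
    funext i
    rw [re_mulVec C (μ ^ k • v) i, mulVec_smul, hCv]
    simp
  have hCky : ∀ k : ℕ, C *ᵥ ((A ^ k) *ᵥ y) = 0 := by
    intro k
    rw [hAky k]
    funext i
    rw [im_mulVec C (μ ^ k • v) i, mulVec_smul, hCv]
    simp
  -- detectability gives decay of x and y trajectories
  have hxt : Tendsto (fun k : ℕ => (A ^ k) *ᵥ x) atTop (nhds 0) := by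
    by_cases hx0 : x = 0
    · simp [hx0]
    · exact hdet x hx0 hCkx
  have hyt : Tendsto (fun k : ℕ => (A ^ k) *ᵥ y) atTop (nhds 0) := by
    by_cases hy0 : y = 0
    · simp [hy0]
    · exact hdet y hy0 hCky
  -- pick a nonzero coordinate of v
  obtain ⟨i, hvi⟩ := Function.ne_iff.mp hvne
  have hxi : Tendsto (fun k : ℕ => ((A ^ k) *ᵥ x) i) atTop (nhds 0) := by
    have := tendsto_pi_nhds.mp hxt i
    simpa using this
  have hyi : Tendsto (fun k : ℕ => ((A ^ k) *ᵥ y) i) atTop (nhds 0) := by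
    have := tendsto_pi_nhds.mp hyt i
    simpa using this
  have hμk : Tendsto (fun k : ℕ => μ ^ k * v i) atTop (nhds 0) := by
    have heq : (fun k : ℕ => μ ^ k * v i) =
        fun k : ℕ => ((((A ^ k) *ᵥ x) i : ℝ) : ℂ) + ((((A ^ k) *ᵥ y) i : ℝ) : ℂ) * Complex.I := by
      funext k
      rw [hAkx k, hAky k]
      simp [Complex.ext_iff]
    rw [heq]
    have h1 : Tendsto (fun k : ℕ => ((((A ^ k) *ᵥ x) i : ℝ) : ℂ)) atTop (nhds 0) := by
      have := (Complex.continuous_ofReal.tendsto 0).comp hxi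
      simpa [Function.comp_def] using this
    have h2 : Tendsto (fun k : ℕ => ((((A ^ k) *ᵥ y) i : ℝ) : ℂ) * Complex.I) atTop (nhds 0) := by
      have := ((Complex.continuous_ofReal.tendsto 0).comp hyi).mul_const Complex.I
      simpa using this
    simpa using h1.add h2
  -- contradiction with |μ| ≥ 1
  have hlow : ∀ k : ℕ, ‖v i‖ ≤ ‖μ ^ k * v i‖ := by
    intro k
    rw [norm_mul, norm_pow]
    nlinarith [one_le_pow₀ hge (n := k), norm_nonneg (v i), norm_nonneg (μ ^ k * v i)]
  have hvpos : 0 < ‖v i‖ := norm_pos_iff.mpr hvi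
  have hev := Tendsto.eventually_lt_const (show ‖(0:ℂ)‖ < ‖v i‖ by simpa using hvpos) hμk.norm
  obtain ⟨k, hk⟩ := hev.exists
  exact absurd (hlow k) (by simpa using not_le.mpr hk)

section norminst

attribute [local instance] Matrix.linftyOpNormedRing Matrix.linftyOpNormedAlgebra

lemma pow_mulVec_tendsto_zero {n : ℕ} [Nonempty (Fin n)] (B : Matrix (Fin n) (Fin n) ℂ)
    (h : ∀ μ ∈ spectrum ℂ B, ‖μ‖₊ < 1) (w : Fin n → ℂ) :
    Tendsto (fun k : ℕ => (B ^ k) *ᵥ w) atTop (nhds 0) := by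
  haveI : CompleteSpace (Matrix (Fin n) (Fin n) ℂ) :=
    inferInstanceAs (CompleteSpace (Fin n → Fin n → ℂ))
  have hρ : spectralRadius ℂ B < 1 := by
    simpa using spectrum.spectralRadius_lt_of_forall_lt B h
  obtain ⟨c, hc1, hc2⟩ := ENNReal.lt_iff_exists_nnreal_btwn.mp hρ
  have hc2' : c < 1 := by exact_mod_cast hc2
  have hG := spectrum.pow_nnnorm_pow_one_div_tendsto_nhds_spectralRadius B
  have hev : ∀ᶠ k : ℕ in atTop, (‖B ^ k‖₊ : ENNReal) ^ (1 / (k:ℝ)) < (c : ENNReal) :=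
    hG.eventually_lt_const hc1
  have hev2 : ∀ᶠ k : ℕ in atTop, ‖B ^ k‖ ≤ (c : ℝ) ^ k := by
    filter_upwards [hev, eventually_ge_atTop 1] with k hk hk1
    have hkpos : (0:ℝ) < k := by exact_mod_cast hk1
    have h2 := ENNReal.rpow_le_rpow hk.le (le_of_lt hkpos)
    rw [← ENNReal.rpow_mul, one_div, inv_mul_cancel₀ (ne_of_gt hkpos), ENNReal.rpow_one,
      ENNReal.rpow_natCast, ← ENNReal.coe_pow, ENNReal.coe_le_coe] at h2
    calc ‖B ^ k‖ = ((‖B ^ k‖₊ : NNReal) : ℝ) := rfl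
      _ ≤ ((c ^ k : NNReal) : ℝ) := by exact_mod_cast h2
      _ = (c : ℝ) ^ k := by push_cast; ring
  have hnorm : Tendsto (fun k : ℕ => ‖(B ^ k) *ᵥ w‖) atTop (nhds 0) := by
    have hb : Tendsto (fun k : ℕ => (c:ℝ) ^ k * ‖w‖) atTop (nhds 0) := by
      simpa using (tendsto_pow_atTop_nhds_zero_of_lt_one c.coe_nonneg
        (by exact_mod_cast hc2')).mul_const ‖w‖
    refine squeeze_zero' (Eventually.of_forall fun k => norm_nonneg _) ?_ hb
    filter_upwards [hev2] with k hk
    calc ‖(B ^ k) *ᵥ w‖ ≤ ‖B ^ k‖ * ‖w‖ := Matrix.linfty_opNorm_mulVec _ _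
      _ ≤ (c:ℝ) ^ k * ‖w‖ := by
        exact mul_le_mul_of_nonneg_right hk (norm_nonneg _)
  exact tendsto_zero_iff_norm_tendsto_zero.mpr hnorm


end norminst

/-- If the system `x_{k+1} = A x_k`, `y_k = C x_k` is detectable and there is a
symmetric positive semidefinite solution `Q` of `AᵀQA − Q + CᵀC = 0`, then the system
is asymptotically stable. -/
theorem stmt_7 {n p : ℕ} (A : Matrix (Fin n) (Fin n) ℝ) (C : Matrix (Fin p) (Fin n) ℝ)
    (hdet : ∀ x₀ : Fin n → ℝ, x₀ ≠ 0 → (∀ k : ℕ, C *ᵥ ((A ^ k) *ᵥ x₀) = 0) →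
      Tendsto (fun k : ℕ => (A ^ k) *ᵥ x₀) atTop (nhds 0))
    (hQ : ∃ Q : Matrix (Fin n) (Fin n) ℝ, Q.PosSemidef ∧ Aᵀ * Q * A - Q + Cᵀ * C = 0) :
    ∀ x₀ : Fin n → ℝ, Tendsto (fun k : ℕ => (A ^ k) *ᵥ x₀) atTop (nhds 0) := by
  obtain ⟨Q, hQpsd, hL⟩ := hQ
  intro x₀
  rcases Nat.eq_zero_or_pos n with hn | hn
  · subst hn
    have : ∀ k : ℕ, (A ^ k) *ᵥ x₀ = 0 := fun k => Subsingleton.elim _ _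
    simp only [this]
    exact tendsto_const_nhds
  · haveI : Nonempty (Fin n) := ⟨⟨0, hn⟩⟩
    have hkey := key_spec A C Q hQpsd hL hdet
    set w : Fin n → ℂ := fun j => ((x₀ j : ℝ) : ℂ) with hw
    have hBt := pow_mulVec_tendsto_zero (A.map (fun r => (r : ℂ))) hkey w
    rw [tendsto_pi_nhds]
    intro i
    have hcomp : Tendsto (fun k : ℕ => ((A.map (fun r => (r : ℂ))) ^ k *ᵥ w) i)
        atTop (nhds 0) := by
      have := (continuous_apply i).tendsto (0 : Fin n → ℂ)
      simpa [Function.comp_def] using this.comp hBt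
    have hre : Tendsto (fun k : ℕ => (((A.map (fun r => (r : ℂ))) ^ k *ᵥ w) i).re)
        atTop (nhds 0) := by
      have := (Complex.continuous_re.tendsto (0 : ℂ)).comp hcomp
      simpa [Function.comp_def] using this
    have heq : ∀ k : ℕ, ((A ^ k) *ᵥ x₀) i = (((A.map (fun r => (r : ℂ))) ^ k *ᵥ w) i).re := by
      intro k
      have h1 := re_mulVec (A ^ k) w i
      have h2 : (fun j => (w j).re) = x₀ := by funext j; simp [hw]
      rw [h2] at h1
      rw [h1, ← map_pow']
    simpa [heq] using hre
end

section
/- If the discrete-time linear system x_{k+1} = A x_k, y_k = C x_k is asymptotically stable, then there exists a symmetric positive semidefinite n×n real matrix Q satisfying AᵀQA − Q + CᵀC = 0; consequently (combining with detectability), the system is asymptotically stable if and only if it is detectable and there exists a symmetric positive semidefinite solution Q of AᵀQA − Q + CᵀC = 0. -/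
open Filter Matrix Complex
open scoped ENNReal NNReal

lemma eig_of_mem_spectrum {n : ℕ} (M : Matrix (Fin n) (Fin n) ℂ) {μ : ℂ}
    (h : μ ∈ spectrum ℂ M) : ∃ v : Fin n → ℂ, v ≠ 0 ∧ M *ᵥ v = μ • v := by
  rw [spectrum.mem_iff] at h
  rw [Matrix.isUnit_iff_isUnit_det, isUnit_iff_ne_zero, not_not] at h
  obtain ⟨v, hv1, hv2⟩ := (Matrix.exists_mulVec_eq_zero_iff).2 h
  refine ⟨v, hv1, ?_⟩
  rw [Matrix.sub_mulVec] at hv2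
  have h2 : (algebraMap ℂ (Matrix (Fin n) (Fin n) ℂ)) μ *ᵥ v = μ • v := by
    simp [Matrix.algebraMap_eq_diagonal, Matrix.diagonal_mulVec_single]
    funext i
    simp [Matrix.mulVec_diagonal, Pi.algebraMap_apply, Algebra.algebraMap_self_apply]
  rw [h2, sub_eq_zero] at hv2
  exact hv2.symm

lemma gelfand_bound {n : ℕ} (M : Matrix (Fin n) (Fin n) ℂ)
    (h : ∀ μ ∈ spectrum ℂ M, ‖μ‖ < 1) :
    ∃ r : ℝ, 0 ≤ r ∧ r < 1 ∧ ∃ N : ℕ, ∀ k ≥ N,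
      ∀ v : EuclideanSpace ℂ (Fin n), ‖Matrix.toEuclideanCLM (𝕜 := ℂ) (M ^ k) v‖ ≤ r ^ k * ‖v‖ := by
  classical
  set T := Matrix.toEuclideanCLM (𝕜 := ℂ) M with hT
  have hspec : spectrum ℂ T = spectrum ℂ M := AlgEquiv.spectrum_eq (Matrix.toEuclideanCLM (𝕜 := ℂ)) M
  -- bound the spectral radius
  have hfin : (spectrum ℂ M).Finite := Matrix.finite_spectrum M
  set t : NNReal := hfin.toFinset.sup (fun μ => ‖μ‖₊) with ht
  have htlt : (t : ℝ≥0∞) < 1 := by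
    rw [ht]
    by_cases hne : hfin.toFinset.Nonempty
    · have : t < 1 := by
        rw [ht, Finset.sup_lt_iff (by norm_num)]
        intro μ hμ
        have := h μ (hfin.mem_toFinset.1 hμ)
        exact_mod_cast this
      exact_mod_cast this
    · rw [Finset.not_nonempty_iff_eq_empty] at hne
      simp [hne]
  have hρ : spectralRadius ℂ T < 1 := by
    refine lt_of_le_of_lt ?_ htlt
    rw [spectralRadius, hspec]
    exact iSup₂_le fun μ hμ => by
      exact_mod_cast ENNReal.coe_le_coe.2 (Finset.le_sup (hfin.mem_toFinset.2 hμ))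
  -- pick r strictly between
  obtain ⟨r', hr1, hr2⟩ := ENNReal.lt_iff_exists_nnreal_btwn.1 hρ
  have hgel := spectrum.pow_nnnorm_pow_one_div_tendsto_nhds_spectralRadius T
  have hev : ∀ᶠ k : ℕ in atTop, ((‖T ^ k‖₊ : ℝ≥0∞)) ^ (1 / (k:ℝ)) < (r' : ℝ≥0∞) :=
    hgel.eventually_lt_const hr1
  rw [Filter.eventually_atTop] at hev
  obtain ⟨N, hN⟩ := hev
  refine ⟨r', r'.coe_nonneg, by exact_mod_cast hr2, max N 1, fun k hk v => ?_⟩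
  have hk1 : 1 ≤ k := le_trans (le_max_right N 1) hk
  have hkN : N ≤ k := le_trans (le_max_left N 1) hk
  have hb := hN k hkN
  have hkne : (k:ℝ) ≠ 0 := by positivity
  have hnorm : (‖T ^ k‖₊ : ℝ≥0∞) ≤ ((r' : ℝ≥0∞)) ^ (k : ℕ) := by
    have h1 : (‖T ^ k‖₊ : ℝ≥0∞) = ((‖T ^ k‖₊ : ℝ≥0∞) ^ (1 / (k:ℝ))) ^ (k:ℝ) := by
      rw [← ENNReal.rpow_mul, one_div, inv_mul_cancel₀ hkne, ENNReal.rpow_one]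
    rw [h1, ← ENNReal.rpow_natCast ((r' : ℝ≥0∞)) k]
    exact ENNReal.rpow_le_rpow hb.le (Nat.cast_nonneg k)
  have hnorm' : ‖T ^ k‖ ≤ (r' : ℝ) ^ k := by
    rw [← ENNReal.coe_pow] at hnorm
    exact_mod_cast ENNReal.coe_le_coe.1 hnorm
  calc ‖Matrix.toEuclideanCLM (𝕜 := ℂ) (M ^ k) v‖ = ‖(T ^ k) v‖ := by rw [hT, map_pow]
    _ ≤ ‖T ^ k‖ * ‖v‖ := (T ^ k).le_opNorm v
    _ ≤ (r' : ℝ) ^ k * ‖v‖ := by gcongr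

lemma euclid_coord_le {n : ℕ} (w : EuclideanSpace ℂ (Fin n)) (i : Fin n) : ‖w i‖ ≤ ‖w‖ := by
  rw [EuclideanSpace.norm_eq]
  rw [show ‖w i‖ = Real.sqrt (‖w i‖ ^ 2) by rw [Real.sqrt_sq (norm_nonneg _)]]
  exact Real.sqrt_le_sqrt (Finset.single_le_sum (f := fun j => ‖w j‖ ^ 2)
    (fun j _ => by positivity) (Finset.mem_univ i))

lemma map_pow_comm {n : ℕ} (A : Matrix (Fin n) (Fin n) ℝ) (k : ℕ) :
    (A ^ k).map (algebraMap ℝ ℂ) = (A.map (algebraMap ℝ ℂ)) ^ k := by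
  rw [← RingHom.mapMatrix_apply, ← RingHom.mapMatrix_apply, map_pow]

lemma entry_bound {n : ℕ} (A : Matrix (Fin n) (Fin n) ℝ)
    (h : ∀ μ ∈ spectrum ℂ (A.map (algebraMap ℝ ℂ)), ‖μ‖ < 1) :
    ∃ r : ℝ, 0 ≤ r ∧ r < 1 ∧ ∃ N : ℕ, ∀ k ≥ N, ∀ i j, |(A ^ k) i j| ≤ r ^ k := by
  obtain ⟨r, hr0, hr1, N, hN⟩ := gelfand_bound (A.map (algebraMap ℝ ℂ)) h
  refine ⟨r, hr0, hr1, N, fun k hk i j => ?_⟩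
  set v : EuclideanSpace ℂ (Fin n) := (WithLp.equiv 2 _).symm (Pi.single j (1:ℂ)) with hv
  have hnv : ‖v‖ = 1 := by
    rw [hv]
    have : ((WithLp.equiv 2 (Fin n → ℂ)).symm (Pi.single j (1:ℂ))) = EuclideanSpace.single j (1:ℂ) := rfl
    rw [this, EuclideanSpace.norm_single, norm_one]
  have happ : Matrix.toEuclideanCLM (𝕜 := ℂ) ((A.map (algebraMap ℝ ℂ)) ^ k) v =
      (WithLp.equiv 2 _).symm (((A.map (algebraMap ℝ ℂ)) ^ k) *ᵥ Pi.single j (1:ℂ)) := by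
    rw [hv]; rfl
  have hb := hN k hk v
  rw [happ, hnv, mul_one] at hb
  have hcoord := le_trans (euclid_coord_le ((WithLp.equiv 2 _).symm
      (((A.map (algebraMap ℝ ℂ)) ^ k) *ᵥ Pi.single j (1:ℂ))) i) hb
  have hcomp : (((A.map (algebraMap ℝ ℂ)) ^ k) *ᵥ Pi.single j (1:ℂ)) i = ((A ^ k) i j : ℂ) := by
    rw [← map_pow_comm, Matrix.mulVec_single]
    simp [Matrix.map_apply]
  have : ‖(((A.map (algebraMap ℝ ℂ)) ^ k) *ᵥ Pi.single j (1:ℂ)) i‖ ≤ r ^ k := hcoord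
  rw [hcomp] at this
  simpa using this

lemma stable_of_entry_bound {n : ℕ} (A : Matrix (Fin n) (Fin n) ℝ)
    {r : ℝ} (hr0 : 0 ≤ r) (hr1 : r < 1) {N : ℕ}
    (hN : ∀ k ≥ N, ∀ i j, |(A ^ k) i j| ≤ r ^ k) :
    ∀ x₀ : Fin n → ℝ, Tendsto (fun k : ℕ => (A ^ k) *ᵥ x₀) atTop (nhds 0) := by
  intro x₀
  rw [tendsto_pi_nhds]
  intro i
  have hsq : Tendsto (fun k : ℕ => r ^ k * (∑ j, |x₀ j|)) atTop (nhds 0) := by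
    have := tendsto_pow_atTop_nhds_zero_of_norm_lt_one (x := r) (by rwa [Real.norm_eq_abs, _root_.abs_of_nonneg hr0])
    simpa using this.mul_const _
  refine squeeze_zero_norm' ?_ hsq
  rw [Filter.eventually_atTop]
  refine ⟨N, fun k hk => ?_⟩
  calc ‖((A ^ k) *ᵥ x₀) i‖ = |∑ j, (A ^ k) i j * x₀ j| := rfl
    _ ≤ ∑ j, |(A ^ k) i j * x₀ j| := Finset.abs_sum_le_sum_abs _ _
    _ ≤ ∑ j, r ^ k * |x₀ j| := by
        refine Finset.sum_le_sum fun j _ => ?_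
        rw [abs_mul]
        exact mul_le_mul_of_nonneg_right (hN k hk i j) (abs_nonneg _)
    _ = r ^ k * (∑ j, |x₀ j|) := by rw [Finset.mul_sum]

lemma mulVec_map_re_im {n : ℕ} (A : Matrix (Fin n) (Fin n) ℝ) (v : Fin n → ℂ) (i : Fin n) :
    ((A.map (algebraMap ℝ ℂ)) *ᵥ v) i =
      (((A *ᵥ fun j => (v j).re) i : ℝ) : ℂ) + (((A *ᵥ fun j => (v j).im) i : ℝ) : ℂ) * I := by
  simp only [Matrix.mulVec, dotProduct, Matrix.map_apply]
  rw [Complex.ext_iff]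
  constructor
  · simp [Complex.re_sum, Complex.mul_re]
  · simp [Complex.im_sum, Complex.mul_im]

lemma pow_mulVec_eig {n : ℕ} (M : Matrix (Fin n) (Fin n) ℂ) {μ : ℂ} {v : Fin n → ℂ}
    (h : M *ᵥ v = μ • v) (k : ℕ) : (M ^ k) *ᵥ v = (μ ^ k) • v := by
  induction k with
  | zero => simp [Matrix.one_mulVec]
  | succ k ih =>
    rw [pow_succ', ← Matrix.mulVec_mulVec, ih, Matrix.mulVec_smul, h, smul_smul, ← pow_succ]

lemma spec_of_stable {n : ℕ} (A : Matrix (Fin n) (Fin n) ℝ)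
    (h : ∀ x₀ : Fin n → ℝ, Tendsto (fun k : ℕ => (A ^ k) *ᵥ x₀) atTop (nhds 0)) :
    ∀ μ ∈ spectrum ℂ (A.map (algebraMap ℝ ℂ)), ‖μ‖ < 1 := by
  intro μ hμ
  obtain ⟨v, hv0, hv⟩ := eig_of_mem_spectrum _ hμ
  obtain ⟨i₀, hi₀⟩ := Function.ne_iff.1 hv0
  set a : Fin n → ℝ := fun j => (v j).re
  set b : Fin n → ℝ := fun j => (v j).im
  have key : ∀ k : ℕ, μ ^ k * v i₀ =
      (((A ^ k *ᵥ a) i₀ : ℝ) : ℂ) + (((A ^ k *ᵥ b) i₀ : ℝ) : ℂ) * I := by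
    intro k
    have h1 := pow_mulVec_eig _ hv k
    have h2 := mulVec_map_re_im (A ^ k) v i₀
    rw [map_pow_comm, h1] at h2
    simpa using h2
  have ha := (tendsto_pi_nhds.1 (h a)) i₀
  have hb := (tendsto_pi_nhds.1 (h b)) i₀
  have hc : Tendsto (fun k : ℕ => μ ^ k * v i₀) atTop (nhds 0) := by
    have := ((Complex.continuous_ofReal.tendsto 0).comp ha).add
      (((Complex.continuous_ofReal.tendsto 0).comp hb).mul_const I)
    simp only [Function.comp_def, Complex.ofReal_zero, zero_add, zero_mul, add_zero] at this
    refine this.congr fun k => (key k).symm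
  have hμk : Tendsto (fun k : ℕ => μ ^ k) atTop (nhds 0) := by
    have := hc.mul_const (v i₀)⁻¹
    simp only [zero_mul] at this
    have hi : v i₀ ≠ 0 := hi₀
    refine this.congr fun k => mul_inv_cancel_right₀ hi (μ ^ k)
  by_contra h1
  push_neg at h1
  have : ∀ k : ℕ, (1:ℝ) ≤ ‖μ ^ k‖ := fun k => by
    rw [norm_pow]; exact one_le_pow₀ h1
  have h2 := hμk.norm
  rw [show ‖(0:ℂ)‖ = 0 from norm_zero] at h2
  have h3 := h2.eventually_lt_const (by norm_num : (0:ℝ) < 1)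
  rw [Filter.eventually_atTop] at h3
  obtain ⟨K, hK⟩ := h3
  exact absurd (this K) (not_le.2 (hK K le_rfl))

lemma exists_Q {n p : ℕ} (A : Matrix (Fin n) (Fin n) ℝ) (C : Matrix (Fin p) (Fin n) ℝ)
    {r : ℝ} (hr0 : 0 ≤ r) (hr1 : r < 1) {N : ℕ}
    (hN : ∀ k ≥ N, ∀ i j, |(A ^ k) i j| ≤ r ^ k) :
    ∃ Q : Matrix (Fin n) (Fin n) ℝ, Q.PosSemidef ∧ Aᵀ * Q * A - Q + Cᵀ * C = 0 := by
  classical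
  set g : ℕ → Matrix (Fin n) (Fin n) ℝ := fun k => (C * A ^ k)ᵀ * (C * A ^ k) with hg_def
  set cC : ℝ := ∑ l : Fin p, ∑ a : Fin n, |C l a| with hcC
  have hcC0 : 0 ≤ cC := Finset.sum_nonneg fun l _ => Finset.sum_nonneg fun a _ => abs_nonneg _
  have hrow : ∀ l : Fin p, ∑ a : Fin n, |C l a| ≤ cC := fun l =>
    Finset.single_le_sum (f := fun l => ∑ a : Fin n, |C l a|)
      (fun l _ => Finset.sum_nonneg fun a _ => abs_nonneg _) (Finset.mem_univ l)
  have hB : ∀ k ≥ N, ∀ (l : Fin p) (i : Fin n), |(C * A ^ k) l i| ≤ cC * r ^ k := by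
    intro k hk l i
    rw [Matrix.mul_apply]
    calc |∑ a, C l a * (A ^ k) a i| ≤ ∑ a, |C l a * (A ^ k) a i| := Finset.abs_sum_le_sum_abs _ _
      _ ≤ ∑ a, |C l a| * r ^ k := by
          refine Finset.sum_le_sum fun a _ => ?_
          rw [abs_mul]
          exact mul_le_mul_of_nonneg_left (hN k hk a i) (abs_nonneg _)
      _ = (∑ a, |C l a|) * r ^ k := by rw [Finset.sum_mul]
      _ ≤ cC * r ^ k := mul_le_mul_of_nonneg_right (hrow l) (by positivity)
  have hg : ∀ k ≥ N, ∀ i j, |g k i j| ≤ ((p : ℝ) * cC ^ 2) * (r ^ 2) ^ k := by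
    intro k hk i j
    simp only [hg_def]
    rw [Matrix.mul_apply]
    calc |∑ l, (C * A ^ k)ᵀ i l * (C * A ^ k) l j|
        ≤ ∑ l, |(C * A ^ k)ᵀ i l * (C * A ^ k) l j| := Finset.abs_sum_le_sum_abs _ _
      _ ≤ ∑ _l : Fin p, (cC * r ^ k) * (cC * r ^ k) := by
          refine Finset.sum_le_sum fun l _ => ?_
          rw [abs_mul, Matrix.transpose_apply]
          exact mul_le_mul (hB k hk l i) (hB k hk l j) (abs_nonneg _) (by positivity)
      _ = ((p : ℝ) * cC ^ 2) * (r ^ 2) ^ k := by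
          rw [Finset.sum_const, Finset.card_univ, Fintype.card_fin, nsmul_eq_mul]
          have hrr : (r ^ 2) ^ k = r ^ k * r ^ k := by rw [← pow_mul, two_mul, pow_add]
          rw [hrr]; ring
  have hsum : ∀ i j, Summable (fun k => g k i j) := by
    intro i j
    refine Summable.of_norm_bounded_eventually_nat
      (g := fun k => ((p : ℝ) * cC ^ 2) * (r ^ 2) ^ k) ?_ ?_
    · exact (summable_geometric_of_lt_one (by positivity)
        (by nlinarith)).mul_left _
    · rw [Filter.eventually_atTop]
      exact ⟨N, fun k hk => by rw [Real.norm_eq_abs]; exact hg k hk i j⟩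
  set Q : Matrix (Fin n) (Fin n) ℝ := Matrix.of fun i j => ∑' k, g k i j with hQ_def
  set S : ℕ → Matrix (Fin n) (Fin n) ℝ := fun m => ∑ k ∈ Finset.range m, g k with hS_def
  have hQent : ∀ i j, Tendsto (fun m => S m i j) atTop (nhds (Q i j)) := by
    intro i j
    have := (hsum i j).hasSum.tendsto_sum_nat
    refine this.congr fun m => ?_
    simp [hS_def, Matrix.sum_apply]
  -- g m tends to zero entrywise
  have hg0 : ∀ i j, Tendsto (fun m => g m i j) atTop (nhds 0) := by
    intro i j
    refine squeeze_zero_norm' (a := fun k => ((p : ℝ) * cC ^ 2) * (r ^ 2) ^ k) ?_ ?_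
    · rw [Filter.eventually_atTop]
      exact ⟨N, fun k hk => by rw [Real.norm_eq_abs]; exact hg k hk i j⟩
    · have := tendsto_pow_atTop_nhds_zero_of_norm_lt_one
        (x := r ^ 2) (by rw [Real.norm_eq_abs, _root_.abs_of_nonneg (by positivity)]; nlinarith)
      simpa using this.const_mul ((p : ℝ) * cC ^ 2)
  -- telescoping identity
  have htel : ∀ m, Aᵀ * S m * A - S m + Cᵀ * C = g m := by
    intro m
    have hstep : ∀ k, Aᵀ * g k * A = g (k + 1) := by
      intro k
      simp only [hg_def, pow_succ, Matrix.transpose_mul, Matrix.transpose_transpose,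
        Matrix.mul_assoc]
    have h1 : Aᵀ * S m * A = ∑ k ∈ Finset.range m, g (k + 1) := by
      rw [hS_def]
      simp only [Finset.mul_sum, Finset.sum_mul]
      exact Finset.sum_congr rfl fun k _ => hstep k
    have h2 : ∑ k ∈ Finset.range m, g (k + 1) = S m + g m - g 0 := by
      show ∑ k ∈ Finset.range m, g (k + 1) = (∑ k ∈ Finset.range m, g k) + g m - g 0
      have hh := Finset.sum_range_succ' g m
      rw [Finset.sum_range_succ] at hh
      rw [eq_sub_iff_add_eq]
      exact hh.symm
    have h3 : g 0 = Cᵀ * C := by rw [hg_def]; simp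
    rw [h1, h2, h3]
    abel
  -- limit of entries of the telescoped expression
  have hmul : ∀ i j, Tendsto (fun m => (Aᵀ * S m * A - S m + Cᵀ * C) i j) atTop
      (nhds ((Aᵀ * Q * A - Q + Cᵀ * C) i j)) := by
    intro i j
    simp only [Matrix.sub_apply, Matrix.add_apply, Matrix.mul_apply]
    refine Tendsto.add (Tendsto.sub ?_ (hQent i j)) tendsto_const_nhds
    refine tendsto_finset_sum _ fun b _ => ?_
    refine Tendsto.mul_const _ ?_
    refine tendsto_finset_sum _ fun a _ => ?_
    exact (hQent a b).const_mul _
  have heq : Aᵀ * Q * A - Q + Cᵀ * C = 0 := by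
    ext i j
    have h1 := hmul i j
    have h2 : Tendsto (fun m => (Aᵀ * S m * A - S m + Cᵀ * C) i j) atTop (nhds 0) := by
      refine (hg0 i j).congr fun m => ?_
      rw [htel m]
    rw [Matrix.zero_apply]
    exact tendsto_nhds_unique h1 h2
  -- positivity
  have hpos : ∀ (x : Fin n → ℝ) (k : ℕ), 0 ≤ x ⬝ᵥ (g k *ᵥ x) := by
    intro x k
    rw [hg_def, ← Matrix.mulVec_mulVec, Matrix.dotProduct_mulVec, Matrix.vecMul_transpose]
    exact Finset.sum_nonneg fun l _ => mul_self_nonneg _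
  have hSpos : ∀ (x : Fin n → ℝ) m, 0 ≤ x ⬝ᵥ ((∑ k ∈ Finset.range m, g k) *ᵥ x) := by
    intro x m
    induction m with
    | zero => simp
    | succ m ih =>
      rw [Finset.sum_range_succ, Matrix.add_mulVec, dotProduct_add]
      exact add_nonneg ih (hpos x m)
  refine ⟨Q, Matrix.PosSemidef.of_dotProduct_mulVec_nonneg ?_ ?_, heq⟩
  · -- Hermitian
    have hsymg : ∀ k i j, g k i j = g k j i := by
      intro k i j
      rw [hg_def]
      simp only [Matrix.mul_apply, Matrix.transpose_apply]
      exact Finset.sum_congr rfl fun l _ => mul_comm _ _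
    ext i j
    rw [Matrix.conjTranspose_apply]
    simp only [star_trivial]
    rw [hQ_def]
    simp only [Matrix.of_apply]
    exact tsum_congr fun k => hsymg k j i
  · intro x
    simp only [star_trivial]
    have hq : Tendsto (fun m => x ⬝ᵥ (S m *ᵥ x)) atTop (nhds (x ⬝ᵥ (Q *ᵥ x))) := by
      simp only [dotProduct, Matrix.mulVec]
      refine tendsto_finset_sum _ fun i _ => ?_
      refine Tendsto.const_mul _ ?_
      refine tendsto_finset_sum _ fun j _ => ?_
      exact (hQent i j).mul_const _
    exact ge_of_tendsto hq (Filter.Eventually.of_forall fun m => hSpos x m)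

-- rectangular version
lemma mulVec_map_re_im' {m n : ℕ} (A : Matrix (Fin m) (Fin n) ℝ) (v : Fin n → ℂ) (i : Fin m) :
    ((A.map (algebraMap ℝ ℂ)) *ᵥ v) i =
      (((A *ᵥ fun j => (v j).re) i : ℝ) : ℂ) + (((A *ᵥ fun j => (v j).im) i : ℝ) : ℂ) * I := by
  simp only [Matrix.mulVec, dotProduct, Matrix.map_apply]
  rw [Complex.ext_iff]
  constructor
  · simp [Complex.re_sum, Complex.mul_re]
  · simp [Complex.im_sum, Complex.mul_im]

lemma energy_step {n p : ℕ} {A : Matrix (Fin n) (Fin n) ℝ} {C : Matrix (Fin p) (Fin n) ℝ}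
    {Q : Matrix (Fin n) (Fin n) ℝ} (hQ : Aᵀ * Q * A - Q + Cᵀ * C = 0) (y : Fin n → ℝ) :
    (A *ᵥ y) ⬝ᵥ (Q *ᵥ (A *ᵥ y)) + (C *ᵥ y) ⬝ᵥ (C *ᵥ y) = y ⬝ᵥ (Q *ᵥ y) := by
  have h0 : y ⬝ᵥ ((Aᵀ * Q * A - Q + Cᵀ * C) *ᵥ y) = 0 := by rw [hQ]; simp
  rw [Matrix.add_mulVec, Matrix.sub_mulVec, dotProduct_add, dotProduct_sub] at h0
  have h1 : y ⬝ᵥ ((Aᵀ * Q * A) *ᵥ y) = (A *ᵥ y) ⬝ᵥ (Q *ᵥ (A *ᵥ y)) := by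
    rw [← Matrix.mulVec_mulVec, ← Matrix.mulVec_mulVec, Matrix.dotProduct_mulVec,
      Matrix.vecMul_transpose]
  have h2 : y ⬝ᵥ ((Cᵀ * C) *ᵥ y) = (C *ᵥ y) ⬝ᵥ (C *ᵥ y) := by
    rw [← Matrix.mulVec_mulVec, Matrix.dotProduct_mulVec, Matrix.vecMul_transpose]
  rw [h1, h2] at h0
  linarith

lemma energy_sum {n p : ℕ} {A : Matrix (Fin n) (Fin n) ℝ} {C : Matrix (Fin p) (Fin n) ℝ}
    {Q : Matrix (Fin n) (Fin n) ℝ} (hQ : Aᵀ * Q * A - Q + Cᵀ * C = 0) (x : Fin n → ℝ) (k : ℕ) :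
    (∑ j ∈ Finset.range k, (C *ᵥ ((A ^ j) *ᵥ x)) ⬝ᵥ (C *ᵥ ((A ^ j) *ᵥ x)))
      + ((A ^ k) *ᵥ x) ⬝ᵥ (Q *ᵥ ((A ^ k) *ᵥ x)) = x ⬝ᵥ (Q *ᵥ x) := by
  induction k with
  | zero => simp [Matrix.one_mulVec]
  | succ k ih =>
    rw [Finset.sum_range_succ]
    have hs := energy_step hQ ((A ^ k) *ᵥ x)
    have hp : (A ^ (k+1)) *ᵥ x = A *ᵥ ((A ^ k) *ᵥ x) := by
      rw [pow_succ', ← Matrix.mulVec_mulVec]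
    rw [hp]
    linarith

lemma spec_of_detect {n p : ℕ} (A : Matrix (Fin n) (Fin n) ℝ) (C : Matrix (Fin p) (Fin n) ℝ)
    (hdet : ∀ x₀ : Fin n → ℝ, (∀ k : ℕ, C *ᵥ ((A ^ k) *ᵥ x₀) = 0) →
      Tendsto (fun k : ℕ => (A ^ k) *ᵥ x₀) atTop (nhds 0))
    {Q : Matrix (Fin n) (Fin n) ℝ} (hpsd : Q.PosSemidef) (hQ : Aᵀ * Q * A - Q + Cᵀ * C = 0) :
    ∀ μ ∈ spectrum ℂ (A.map (algebraMap ℝ ℂ)), ‖μ‖ < 1 := by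
  intro μ hμ
  by_contra hcon
  push_neg at hcon
  obtain ⟨v, hv0, hv⟩ := eig_of_mem_spectrum _ hμ
  obtain ⟨i₀, hi₀⟩ := Function.ne_iff.1 hv0
  have hi : v i₀ ≠ 0 := hi₀
  set a : Fin n → ℝ := fun j => (v j).re with ha
  set b : Fin n → ℝ := fun j => (v j).im with hb
  set W : (Fin n → ℝ) → ℝ := fun x => (C *ᵥ x) ⬝ᵥ (C *ᵥ x) with hW
  set V : (Fin n → ℝ) → ℝ := fun x => x ⬝ᵥ (Q *ᵥ x) with hV
  have hWnn : ∀ x, 0 ≤ W x := fun x => Finset.sum_nonneg fun l _ => mul_self_nonneg _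
  have hVnn : ∀ x, 0 ≤ V x := fun x => by
    have := hpsd.dotProduct_mulVec_nonneg x
    simpa [star_trivial] using this
  have hbound : ∀ (x : Fin n → ℝ) (k : ℕ), ∑ j ∈ Finset.range k, W ((A ^ j) *ᵥ x) ≤ V x := by
    intro x k
    have := energy_sum hQ x k
    have := hVnn ((A ^ k) *ᵥ x)
    simp only [hW, hV] at *
    linarith
  -- component identity for powers
  have hw : ∀ j : ℕ, ∀ i : Fin n, ((A ^ j) *ᵥ a) i + ((A ^ j) *ᵥ b) i * I = μ ^ j * v i := by
    intro j i
    have h1 := pow_mulVec_eig _ hv j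
    have h2 := mulVec_map_re_im' (A ^ j) v i
    rw [map_pow_comm, h1] at h2
    simpa [ha, hb] using h2.symm
  -- output identity
  have hout : ∀ j : ℕ, ∀ l : Fin p,
      (C *ᵥ ((A ^ j) *ᵥ a)) l + (C *ᵥ ((A ^ j) *ᵥ b)) l * I = μ ^ j * ((C *ᵥ a) l + (C *ᵥ b) l * I) := by
    intro j l
    have h2 := mulVec_map_re_im' C (fun i => μ ^ j * v i) l
    have h3 := mulVec_map_re_im' C v l
    have hre : (fun i => (μ ^ j * v i).re) = (A ^ j) *ᵥ a := by
      funext i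
      rw [← hw j i]
      simp
    have him : (fun i => (μ ^ j * v i).im) = (A ^ j) *ᵥ b := by
      funext i
      rw [← hw j i]
      simp
    rw [hre, him] at h2
    have h4 : (C.map (algebraMap ℝ ℂ)) *ᵥ (fun i => μ ^ j * v i) = μ ^ j • ((C.map (algebraMap ℝ ℂ)) *ᵥ v) := by
      have : (fun i => μ ^ j * v i) = μ ^ j • v := rfl
      rw [this, Matrix.mulVec_smul]
    calc (C *ᵥ ((A ^ j) *ᵥ a)) l + (C *ᵥ ((A ^ j) *ᵥ b)) l * I
        = ((C.map (algebraMap ℝ ℂ)) *ᵥ (fun i => μ ^ j * v i)) l := h2.symm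
      _ = μ ^ j * (((C.map (algebraMap ℝ ℂ)) *ᵥ v) l) := by rw [h4, Pi.smul_apply, smul_eq_mul]
      _ = μ ^ j * ((C *ᵥ a) l + (C *ᵥ b) l * I) := by rw [h3]
  -- W identity
  have hWid : ∀ j : ℕ, W ((A ^ j) *ᵥ a) + W ((A ^ j) *ᵥ b) = (‖μ‖ ^ 2) ^ j * (W a + W b) := by
    intro j
    have : ∀ l : Fin p,
        (C *ᵥ ((A ^ j) *ᵥ a)) l * (C *ᵥ ((A ^ j) *ᵥ a)) l
          + (C *ᵥ ((A ^ j) *ᵥ b)) l * (C *ᵥ ((A ^ j) *ᵥ b)) l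
        = (‖μ‖ ^ 2) ^ j * ((C *ᵥ a) l * (C *ᵥ a) l + (C *ᵥ b) l * (C *ᵥ b) l) := by
      intro l
      have h5 := congrArg Complex.normSq (hout j l)
      rw [_root_.map_mul] at h5
      have hlhs : Complex.normSq ((C *ᵥ ((A ^ j) *ᵥ a)) l + (C *ᵥ ((A ^ j) *ᵥ b)) l * I)
          = (C *ᵥ ((A ^ j) *ᵥ a)) l * (C *ᵥ ((A ^ j) *ᵥ a)) l
            + (C *ᵥ ((A ^ j) *ᵥ b)) l * (C *ᵥ ((A ^ j) *ᵥ b)) l := by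
        rw [Complex.normSq_apply]
        simp
      have hrhs : Complex.normSq ((C *ᵥ a) l + (C *ᵥ b) l * I)
          = (C *ᵥ a) l * (C *ᵥ a) l + (C *ᵥ b) l * (C *ᵥ b) l := by
        rw [Complex.normSq_apply]
        simp
      have hmz : Complex.normSq (μ ^ j) = (‖μ‖ ^ 2) ^ j := by
        rw [map_pow, Complex.normSq_eq_norm_sq]
      rw [hlhs, hrhs, hmz] at h5
      exact h5
    simp only [hW, dotProduct]
    rw [← Finset.sum_add_distrib, ← Finset.sum_add_distrib, Finset.mul_sum]
    exact Finset.sum_congr rfl fun l _ => this l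
  -- s₀ = 0
  set s₀ : ℝ := W a + W b with hs₀
  have hs₀nn : 0 ≤ s₀ := add_nonneg (hWnn a) (hWnn b)
  have hgeo : ∀ k : ℕ, (k : ℝ) * s₀ ≤ V a + V b := by
    intro k
    have h1 : ∀ j ∈ Finset.range k, s₀ ≤ W ((A ^ j) *ᵥ a) + W ((A ^ j) *ᵥ b) := by
      intro j _
      rw [hWid j]
      have : (1:ℝ) ≤ (‖μ‖ ^ 2) ^ j := one_le_pow₀ (by nlinarith [norm_nonneg μ])
      nlinarith
    calc (k : ℝ) * s₀ = ∑ _j ∈ Finset.range k, s₀ := by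
          rw [Finset.sum_const, Finset.card_range, nsmul_eq_mul]
      _ ≤ ∑ j ∈ Finset.range k, (W ((A ^ j) *ᵥ a) + W ((A ^ j) *ᵥ b)) := Finset.sum_le_sum h1
      _ = (∑ j ∈ Finset.range k, W ((A ^ j) *ᵥ a)) + ∑ j ∈ Finset.range k, W ((A ^ j) *ᵥ b) :=
          Finset.sum_add_distrib
      _ ≤ V a + V b := add_le_add (hbound a k) (hbound b k)
  have hs0 : s₀ = 0 := by
    by_contra hne
    have hpos : 0 < s₀ := lt_of_le_of_ne hs₀nn (Ne.symm hne)
    obtain ⟨k, hk⟩ := exists_nat_gt ((V a + V b) / s₀)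
    have := hgeo k
    rw [div_lt_iff₀ hpos] at hk
    linarith
  -- outputs vanish
  have hzero : ∀ j : ℕ, C *ᵥ ((A ^ j) *ᵥ a) = 0 ∧ C *ᵥ ((A ^ j) *ᵥ b) = 0 := by
    intro j
    have h6 : W ((A ^ j) *ᵥ a) + W ((A ^ j) *ᵥ b) = 0 := by rw [hWid j, hs0, mul_zero]
    have h7 : W ((A ^ j) *ᵥ a) = 0 := by
      have := hWnn ((A ^ j) *ᵥ a); have := hWnn ((A ^ j) *ᵥ b); linarith
    have h8 : W ((A ^ j) *ᵥ b) = 0 := by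
      have := hWnn ((A ^ j) *ᵥ a); linarith
    constructor
    · funext l
      have := (Finset.sum_eq_zero_iff_of_nonneg (fun l _ => mul_self_nonneg _)).1 h7 l
        (Finset.mem_univ l)
      exact mul_self_eq_zero.1 this
    · funext l
      have := (Finset.sum_eq_zero_iff_of_nonneg (fun l _ => mul_self_nonneg _)).1 h8 l
        (Finset.mem_univ l)
      exact mul_self_eq_zero.1 this
  have hta := hdet a fun k => (hzero k).1
  have htb := hdet b fun k => (hzero k).2
  have hta0 := (tendsto_pi_nhds.1 hta) i₀
  have htb0 := (tendsto_pi_nhds.1 htb) i₀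
  have hc : Tendsto (fun k : ℕ => μ ^ k * v i₀) atTop (nhds 0) := by
    have := ((Complex.continuous_ofReal.tendsto 0).comp hta0).add
      (((Complex.continuous_ofReal.tendsto 0).comp htb0).mul_const I)
    simp only [Function.comp_def, Complex.ofReal_zero, zero_add, zero_mul, add_zero] at this
    refine this.congr fun k => ?_
    exact_mod_cast hw k i₀
  have h9 := hc.norm
  rw [norm_zero] at h9
  have h10 := h9.eventually_lt_const (norm_pos_iff.mpr hi)
  rw [Filter.eventually_atTop] at h10
  obtain ⟨K, hK⟩ := h10
  have h11 : ‖μ ^ K * v i₀‖ = ‖μ‖ ^ K * ‖v i₀‖ := by rw [norm_mul, norm_pow]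
  have h12 : ‖v i₀‖ ≤ ‖μ‖ ^ K * ‖v i₀‖ := by
    have : (1:ℝ) ≤ ‖μ‖ ^ K := one_le_pow₀ hcon
    nlinarith [norm_nonneg (v i₀)]
  have := hK K le_rfl
  rw [h11] at this
  linarith

/-- If the system `x_{k+1} = A x_k`, `y_k = C x_k` is asymptotically stable, then
there exists a symmetric positive semidefinite solution `Q` of `AᵀQA − Q + CᵀC = 0`;
consequently, the system is asymptotically stable if and only if it is detectable and
such a solution exists. -/
theorem stmt_8 {n p : ℕ} (A : Matrix (Fin n) (Fin n) ℝ) (C : Matrix (Fin p) (Fin n) ℝ) :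
    ((∀ x₀ : Fin n → ℝ, Tendsto (fun k : ℕ => (A ^ k) *ᵥ x₀) atTop (nhds 0)) →
      ∃ Q : Matrix (Fin n) (Fin n) ℝ, Q.PosSemidef ∧ Aᵀ * Q * A - Q + Cᵀ * C = 0) ∧
    ((∀ x₀ : Fin n → ℝ, Tendsto (fun k : ℕ => (A ^ k) *ᵥ x₀) atTop (nhds 0)) ↔
      ((∀ x₀ : Fin n → ℝ, (∀ k : ℕ, C *ᵥ ((A ^ k) *ᵥ x₀) = 0) →
          Tendsto (fun k : ℕ => (A ^ k) *ᵥ x₀) atTop (nhds 0)) ∧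
        ∃ Q : Matrix (Fin n) (Fin n) ℝ, Q.PosSemidef ∧ Aᵀ * Q * A - Q + Cᵀ * C = 0)) := by
  have exists_of_stable : (∀ x₀ : Fin n → ℝ, Tendsto (fun k : ℕ => (A ^ k) *ᵥ x₀) atTop (nhds 0)) →
      ∃ Q : Matrix (Fin n) (Fin n) ℝ, Q.PosSemidef ∧ Aᵀ * Q * A - Q + Cᵀ * C = 0 := by
    intro h
    obtain ⟨r, hr0, hr1, N, hN⟩ := entry_bound A (spec_of_stable A h)
    exact exists_Q A C hr0 hr1 hN
  refine ⟨exists_of_stable, ?_, ?_⟩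
  · intro h
    exact ⟨fun x₀ _ => h x₀, exists_of_stable h⟩
  · rintro ⟨hdet, Q, hpsd, hQ⟩
    obtain ⟨r, hr0, hr1, N, hN⟩ := entry_bound A (spec_of_detect A C hdet hpsd hQ)
    exact stable_of_entry_bound A hr0 hr1 hN
end

section
/- Let A be an n×n real matrix and C a p×n real matrix with C ≠ 0, and let α > 0. Then the map f(X) = (AᵀXA + α CᵀC) / tr(AᵀXA + α CᵀC), defined on the set 𝒞 = {X : X symmetric positive semidefinite, tr X = 1}, maps 𝒞 into 𝒞 and has a fixed point: there exists X ∈ 𝒞 with tr(AᵀXA + α CᵀC) · X = AᵀXA + α CᵀC. -/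
open Matrix Filter Topology

namespace Stmt9Aux
attribute [local instance] Matrix.normedAddCommGroup Matrix.normedSpace
variable {n : ℕ}

attribute [local instance] Matrix.normedAddCommGroup Matrix.normedSpace
variable {n : ℕ}

lemma quad_nonneg {P : Matrix (Fin n) (Fin n) ℝ} (hP : P.PosSemidef) (x : Fin n → ℝ) :
    0 ≤ x ⬝ᵥ P *ᵥ x := by simpa using hP.dotProduct_mulVec_nonneg x

lemma psd_diag_nonneg {P : Matrix (Fin n) (Fin n) ℝ} (hP : P.PosSemidef) (i : Fin n) :
    0 ≤ P i i := by simpa using hP.dotProduct_mulVec_nonneg (Pi.single i 1)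

lemma psd_trace_nonneg {P : Matrix (Fin n) (Fin n) ℝ} (hP : P.PosSemidef) :
    0 ≤ P.trace :=
  Finset.sum_nonneg fun i _ => psd_diag_nonneg hP i

lemma psd_diag_le_trace {P : Matrix (Fin n) (Fin n) ℝ} (hP : P.PosSemidef) (i : Fin n) :
    P i i ≤ P.trace :=
  Finset.single_le_sum (fun j _ => psd_diag_nonneg hP j) (Finset.mem_univ i)

lemma quad_single (P : Matrix (Fin n) (Fin n) ℝ) (a b : Fin n) :
    (Pi.single a 1 : Fin n → ℝ) ⬝ᵥ P *ᵥ (Pi.single b 1) = P a b := by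
  simp [Matrix.mulVec_single, single_dotProduct]

lemma psd_entry_le_trace {P : Matrix (Fin n) (Fin n) ℝ} (hP : P.PosSemidef) (a b : Fin n) :
    |P a b| ≤ P.trace := by
  have hsymm : P b a = P a b := by
    have := congrFun (congrFun hP.1 a) b
    simpa using this
  have hplus := quad_nonneg hP (Pi.single a 1 + Pi.single b 1)
  have hminus := quad_nonneg hP (Pi.single a 1 - Pi.single b 1)
  rw [Matrix.mulVec_add, dotProduct_add, add_dotProduct,
    add_dotProduct, quad_single, quad_single, quad_single, quad_single] at hplus
  rw [Matrix.mulVec_sub, dotProduct_sub, sub_dotProduct,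
    sub_dotProduct, quad_single, quad_single, quad_single, quad_single] at hminus
  have ha := psd_diag_le_trace hP a
  have hb := psd_diag_le_trace hP b
  rw [abs_le]
  constructor <;> nlinarith [psd_diag_nonneg hP a, psd_diag_nonneg hP b]

lemma psd_norm_le_trace {P : Matrix (Fin n) (Fin n) ℝ} (hP : P.PosSemidef) :
    ‖P‖ ≤ P.trace := by
  refine (pi_norm_le_iff_of_nonneg (psd_trace_nonneg hP)).2 fun a =>
    (pi_norm_le_iff_of_nonneg (psd_trace_nonneg hP)).2 fun b => ?_
  simpa using psd_entry_le_trace hP a b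

lemma psd_smul {P : Matrix (Fin n) (Fin n) ℝ} {c : ℝ} (hc : 0 ≤ c) (hP : P.PosSemidef) :
    (c • P).PosSemidef := by
  refine Matrix.PosSemidef.of_dotProduct_mulVec_nonneg ?_ ?_
  · show (c • P)ᴴ = c • P
    rw [conjTranspose_smul, hP.1.eq]
    simp
  · intro x
    rw [Matrix.smul_mulVec, dotProduct_smul]
    exact mul_nonneg hc (hP.dotProduct_mulVec_nonneg x)

lemma psd_le_trace_smul_one {P : Matrix (Fin n) (Fin n) ℝ} (hP : P.PosSemidef) :
    (P.trace • (1 : Matrix (Fin n) (Fin n) ℝ) - P).PosSemidef := by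
  obtain ⟨B, hB⟩ : ∃ B : Matrix (Fin n) (Fin n) ℝ, P = Bᴴ * B := by
    open scoped MatrixOrder in exact CStarAlgebra.nonneg_iff_eq_star_mul_self.mp hP.nonneg
  refine Matrix.PosSemidef.of_dotProduct_mulVec_nonneg ?_ ?_
  · have h1 : ((P.trace • (1 : Matrix (Fin n) (Fin n) ℝ))).IsHermitian := by
      show _ = _
      rw [conjTranspose_smul, conjTranspose_one]
      simp
    exact h1.sub hP.1
  · intro x
    have hx : (star x : Fin n → ℝ) = x := by simp
    rw [hx, Matrix.sub_mulVec, dotProduct_sub, Matrix.smul_mulVec,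
      Matrix.one_mulVec, dotProduct_smul]
    have hquad : x ⬝ᵥ P *ᵥ x = (B *ᵥ x) ⬝ᵥ (B *ᵥ x) := by
      rw [hB, ← Matrix.mulVec_mulVec, dotProduct_mulVec]
      congr 1
      show x ᵥ* Bᵀ = B *ᵥ x
      exact Matrix.vecMul_transpose B x
    have htr : P.trace = ∑ j, ∑ i, (B i j)^2 := by
      rw [hB]
      unfold Matrix.trace
      congr 1
      funext j
      show ∑ i, (Bᴴ) j i * B i j = _
      congr 1
      funext i
      show star (B i j) * B i j = (B i j)^2
      simp [sq]
    have hCS : (B *ᵥ x) ⬝ᵥ (B *ᵥ x) ≤ P.trace * (x ⬝ᵥ x) := by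
      rw [htr]
      have h1 : ∀ i : Fin n, ((B *ᵥ x) i)^2 ≤ (∑ j, (B i j)^2) * (∑ j, (x j)^2) := by
        intro i
        have := Finset.sum_mul_sq_le_sq_mul_sq (Finset.univ : Finset (Fin n)) (B i) x
        simpa [Matrix.mulVec, dotProduct] using this
      have h2 : (B *ᵥ x) ⬝ᵥ (B *ᵥ x) = ∑ i, ((B *ᵥ x) i)^2 := by
        simp [dotProduct, sq]
      have h3 : x ⬝ᵥ x = ∑ j, (x j)^2 := by simp [dotProduct, sq]
      rw [h2, h3]
      calc ∑ i, ((B *ᵥ x) i)^2 ≤ ∑ i, (∑ j, (B i j)^2) * (∑ j, (x j)^2) :=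
            Finset.sum_le_sum fun i _ => h1 i
        _ = (∑ i, ∑ j, (B i j)^2) * (∑ j, (x j)^2) := by rw [← Finset.sum_mul]
        _ = (∑ j, ∑ i, (B i j)^2) * (∑ j, (x j)^2) := by rw [Finset.sum_comm]
    rw [hquad]
    have hxx : x ⬝ᵥ x = ∑ j, (x j)^2 := by simp [dotProduct, sq]
    simp only [smul_eq_mul]
    linarith [hCS]
def T (A M : Matrix (Fin n) (Fin n) ℝ) (α : ℝ) :
    Matrix (Fin n) (Fin n) ℝ →ₗ[ℝ] Matrix (Fin n) (Fin n) ℝ where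
  toFun X := Aᵀ * X * A + (α * X.trace) • M
  map_add' X Y := by
    simp only [Matrix.mul_add, Matrix.add_mul, Matrix.trace_add]
    rw [mul_add, add_smul]
    abel
  map_smul' c X := by
    simp only [Matrix.mul_smul, Matrix.smul_mul, Matrix.trace_smul, smul_eq_mul,
      RingHom.id_apply, smul_add, smul_smul]
    ring_nf

lemma T_apply (A M : Matrix (Fin n) (Fin n) ℝ) (α : ℝ) (X : Matrix (Fin n) (Fin n) ℝ) :
    T A M α X = Aᵀ * X * A + (α * X.trace) • M := rfl

lemma T_psd {A M : Matrix (Fin n) (Fin n) ℝ} {α : ℝ} (hM : M.PosSemidef) (hα : 0 ≤ α)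
    {X : Matrix (Fin n) (Fin n) ℝ} (hX : X.PosSemidef) : (T A M α X).PosSemidef := by
  rw [T_apply]
  have h1 : (Aᵀ * X * A).PosSemidef := hX.conjTranspose_mul_mul_same A
  have h2 : ((α * X.trace) • M).PosSemidef :=
    psd_smul (mul_nonneg hα (psd_trace_nonneg hX)) hM
  exact h1.add h2

lemma Tpow_psd {A M : Matrix (Fin n) (Fin n) ℝ} {α : ℝ} (hM : M.PosSemidef) (hα : 0 ≤ α)
    (k : ℕ) {X : Matrix (Fin n) (Fin n) ℝ} (hX : X.PosSemidef) :
    ((T A M α ^ k) X).PosSemidef := by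
  induction k with
  | zero => simpa using hX
  | succ k ih =>
    rw [pow_succ', Module.End.mul_apply]
    exact T_psd hM hα ih
section Submult
variable {A M : Matrix (Fin n) (Fin n) ℝ} {α : ℝ}

/-- `t k = tr (T^k 1)`. -/
noncomputable def tseq (A M : Matrix (Fin n) (Fin n) ℝ) (α : ℝ) (k : ℕ) : ℝ :=
  ((T A M α ^ k) 1).trace

lemma tseq_nonneg (hM : M.PosSemidef) (hα : 0 ≤ α) (k : ℕ) : 0 ≤ tseq A M α k :=
  psd_trace_nonneg (Tpow_psd hM hα k Matrix.PosSemidef.one)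

lemma tseq_submult (hM : M.PosSemidef) (hα : 0 ≤ α) (a b : ℕ) :
    tseq A M α (a + b) ≤ tseq A M α a * tseq A M α b := by
  have h1 : ((tseq A M α b) • (1 : Matrix (Fin n) (Fin n) ℝ) - (T A M α ^ b) 1).PosSemidef :=
    psd_le_trace_smul_one (Tpow_psd hM hα b Matrix.PosSemidef.one)
  have h2 : ((T A M α ^ a) ((tseq A M α b) • (1 : Matrix (Fin n) (Fin n) ℝ)
      - (T A M α ^ b) 1)).PosSemidef := Tpow_psd hM hα a h1
  rw [map_sub, _root_.map_smul] at h2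
  have h3 : (T A M α ^ a) ((T A M α ^ b) 1) = (T A M α ^ (a + b)) 1 := by
    rw [pow_add, Module.End.mul_apply]
  rw [h3] at h2
  have h4 := psd_trace_nonneg h2
  rw [Matrix.trace_sub, Matrix.trace_smul] at h4
  have : tseq A M α b * tseq A M α a - tseq A M α (a + b) = ((tseq A M α b) •
      ((T A M α ^ a) (1:Matrix (Fin n) (Fin n) ℝ)).trace) - ((T A M α ^ (a+b)) 1).trace := by
    simp [tseq, smul_eq_mul]
  nlinarith [h4, this]
end Submult
/-- `ρ = inf_k t(k+1)^(1/(k+1))`. -/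
noncomputable def rho (t : ℕ → ℝ) : ℝ :=
  ⨅ k : ℕ, (t (k+1)) ^ (((k : ℝ) + 1)⁻¹)

variable {t : ℕ → ℝ}

lemma rho_nonneg (ht : ∀ k, 0 ≤ t k) : 0 ≤ rho t :=
  le_ciInf fun k => Real.rpow_nonneg (ht _) _

lemma rho_pow_le (ht : ∀ k, 0 ≤ t k) (h0 : 1 ≤ t 0) (k : ℕ) : rho t ^ k ≤ t k := by
  cases k with
  | zero => simpa using h0
  | succ k =>
    have h1 : rho t ≤ (t (k+1)) ^ (((k : ℝ) + 1)⁻¹) :=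
      ciInf_le ⟨0, fun x hx => by obtain ⟨j, rfl⟩ := hx; exact Real.rpow_nonneg (ht _) _⟩ k
    have h2 : rho t ^ (k+1) ≤ ((t (k+1)) ^ (((k : ℝ) + 1)⁻¹)) ^ (k+1) :=
      pow_le_pow_left₀ (rho_nonneg ht) h1 _
    refine h2.trans_eq ?_
    rw [← Real.rpow_natCast ((t (k+1)) ^ (((k : ℝ) + 1)⁻¹)) (k+1), ← Real.rpow_mul (ht _)]
    rw [show ((k : ℝ) + 1)⁻¹ * ((k+1 : ℕ) : ℝ) = 1 by push_cast; field_simp, Real.rpow_one]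

lemma exists_upper_bound (ht : ∀ k, 0 ≤ t k) (hsub : ∀ a b, t (a+b) ≤ t a * t b)
    {μ' : ℝ} (hμ'0 : 0 < μ') (h : rho t < μ') :
    ∃ B : ℝ, 0 < B ∧ ∀ k, t k ≤ B * μ' ^ k := by
  obtain ⟨k0, hk0⟩ := exists_lt_of_ciInf_lt h
  set K := k0 + 1 with hK
  have hKpos : 0 < K := Nat.succ_pos _
  have htK : t K < μ' ^ K := by
    have h2 : ((t K) ^ (((k0 : ℝ) + 1)⁻¹)) ^ K < μ' ^ K :=
      pow_lt_pow_left₀ hk0 (Real.rpow_nonneg (ht _) _) (Nat.succ_ne_zero _)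
    calc t K = ((t K) ^ (((k0 : ℝ) + 1)⁻¹)) ^ K := by
          rw [← Real.rpow_natCast ((t K) ^ (((k0 : ℝ) + 1)⁻¹)) K, ← Real.rpow_mul (ht _)]
          rw [show ((k0 : ℝ) + 1)⁻¹ * ((K : ℕ) : ℝ) = 1 by rw [hK]; push_cast; field_simp,
            Real.rpow_one]
      _ < μ' ^ K := h2
  set B : ℝ := (∑ r ∈ Finset.range K, t r / μ' ^ r) + 1 with hB
  have hBpos : 0 < B := by
    have : 0 ≤ ∑ r ∈ Finset.range K, t r / μ' ^ r :=
      Finset.sum_nonneg fun r _ => div_nonneg (ht r) (pow_nonneg hμ'0.le r)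
    rw [hB]; linarith
  refine ⟨B, hBpos, fun k => ?_⟩
  induction k using Nat.strong_induction_on with
  | _ k ih =>
    by_cases hk : k < K
    · have hterm : t k / μ' ^ k ≤ B := by
        have h1 : t k / μ' ^ k ≤ ∑ r ∈ Finset.range K, t r / μ' ^ r :=
          Finset.single_le_sum (f := fun r => t r / μ' ^ r)
            (fun r _ => div_nonneg (ht r) (pow_nonneg hμ'0.le r)) (Finset.mem_range.mpr hk)
        linarith
      calc t k = (t k / μ' ^ k) * μ' ^ k := by field_simp
        _ ≤ B * μ' ^ k := by
            exact mul_le_mul_of_nonneg_right hterm (pow_nonneg hμ'0.le k)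
    · push_neg at hk
      have hk' : k - K < k := Nat.sub_lt (lt_of_lt_of_le hKpos hk) hKpos
      have hsplit : K + (k - K) = k := Nat.add_sub_cancel' hk
      have h1 : t k ≤ t K * t (k - K) := by
        have := hsub K (k - K)
        rwa [hsplit] at this
      have h2 : t K * t (k - K) ≤ μ' ^ K * (B * μ' ^ (k - K)) :=
        mul_le_mul htK.le (ih _ hk') (ht _) (pow_nonneg hμ'0.le K)
      calc t k ≤ μ' ^ K * (B * μ' ^ (k - K)) := h1.trans h2
        _ = B * (μ' ^ K * μ' ^ (k - K)) := by ring
        _ = B * μ' ^ k := by rw [← pow_add, hsplit]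

lemma tseq_zero (A M : Matrix (Fin n) (Fin n) ℝ) (α : ℝ) : tseq A M α 0 = n := by
  simp [tseq, Matrix.trace_one]

lemma approx {A M : Matrix (Fin n) (Fin n) ℝ} {α : ℝ} (hM : M.PosSemidef) (hα : 0 ≤ α)
    (hn : 1 ≤ (n : ℝ)) {ε : ℝ} (hε : 0 < ε) :
    ∃ (Y : Matrix (Fin n) (Fin n) ℝ) (μ : ℝ), Y.PosSemidef ∧ Y.trace = 1 ∧
      rho (tseq A M α) < μ ∧ μ ≤ rho (tseq A M α) + ε ∧
      ‖T A M α Y - μ • Y‖ ≤ (μ - rho (tseq A M α)) * (2 * (1 + (n:ℝ))) := by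
  set t := tseq A M α with htdef
  set ρ := rho t with hρdef
  have ht : ∀ k, 0 ≤ t k := tseq_nonneg hM hα
  have h0 : 1 ≤ t 0 := by rw [htdef, tseq_zero]; exact hn
  have hρ0 : 0 ≤ ρ := rho_nonneg ht
  set μ : ℝ := ρ + ε with hμdef
  set μ' : ℝ := ρ + ε/2 with hμ'def
  have hμ0 : 0 < μ := by positivity
  have hμne : μ ≠ 0 := hμ0.ne'
  have hμ'0 : 0 < μ' := by positivity
  have hμ'μ : μ' < μ := by rw [hμdef, hμ'def]; linarith
  obtain ⟨B, hB0, hBk⟩ := exists_upper_bound ht (tseq_submult hM hα) hμ'0 (by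
    rw [hμ'def]; exact lt_add_of_pos_right _ (by linarith))
  have hr1 : 0 ≤ μ'/μ := div_nonneg hμ'0.le hμ0.le
  have hr1lt : μ'/μ < 1 := (div_lt_one hμ0).2 hμ'μ
  have hr2 : 0 ≤ ρ/μ := div_nonneg hρ0 hμ0.le
  have hr2lt : ρ/μ < 1 := (div_lt_one hμ0).2 (lt_add_of_pos_right _ hε)
  obtain ⟨N1, hN1⟩ := exists_pow_lt_of_lt_one (show (0:ℝ) < 1/B by positivity) hr1lt
  obtain ⟨N2, hN2⟩ := exists_pow_lt_of_lt_one (show (0:ℝ) < 1/2 by norm_num) hr2lt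
  set N := max N1 N2 with hNdef
  have hr1N : B * (μ'/μ) ^ N ≤ 1 := by
    have h1 : (μ'/μ) ^ N ≤ (μ'/μ) ^ N1 :=
      pow_le_pow_of_le_one hr1 hr1lt.le (le_max_left _ _)
    have h2 : B * (μ'/μ) ^ N ≤ B * (1/B) := by
      apply mul_le_mul_of_nonneg_left (h1.trans hN1.le) hB0.le
    rwa [mul_one_div, div_self hB0.ne'] at h2
  have hr2N : (ρ/μ) ^ N ≤ 1/2 :=
    (pow_le_pow_of_le_one hr2 hr2lt.le (le_max_right _ _)).trans hN2.le
  -- the partial Neumann sum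
  set P : Matrix (Fin n) (Fin n) ℝ :=
    ∑ k ∈ Finset.range N, (μ^(k+1))⁻¹ • ((T A M α ^ k) 1) with hPdef
  have hPpsd : P.PosSemidef := by
    rw [hPdef]
    refine Finset.sum_induction _ (fun X => Matrix.PosSemidef X) (fun a b ha hb => ha.add hb)
      Matrix.PosSemidef.zero (fun k _ => psd_smul (by positivity) (Tpow_psd hM hα k Matrix.PosSemidef.one))
  set τ := P.trace with hτdef
  have hPtr : τ = ∑ k ∈ Finset.range N, (μ^(k+1))⁻¹ * t k := by
    rw [hτdef, hPdef, Matrix.trace_sum]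
    exact Finset.sum_congr rfl fun k _ => by rw [Matrix.trace_smul, smul_eq_mul]; rfl
  -- lower bound on τ
  set g : ℝ := ∑ k ∈ Finset.range N, (μ^(k+1))⁻¹ * ρ^k with hgdef
  have key1 : g * ε = 1 - (ρ/μ)^N := by
    rw [hgdef, Finset.sum_mul]
    have : ∀ k ∈ Finset.range N,
        (μ^(k+1))⁻¹ * ρ^k * ε = (ρ/μ)^k - (ρ/μ)^(k+1) := by
      intro k _
      rw [div_pow, div_pow]
      have hε' : ε = μ - ρ := by rw [hμdef]; ring
      rw [hε']
      field_simp
      ring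
    rw [Finset.sum_congr rfl this, Finset.sum_range_sub' (fun k => (ρ/μ)^k) N]
    simp
  have hgτ : g ≤ τ := by
    rw [hPtr, hgdef]
    exact Finset.sum_le_sum fun k _ =>
      mul_le_mul_of_nonneg_left (rho_pow_le ht h0 k) (by positivity)
  have hτε : 1/2 ≤ τ * ε := by
    have h1 : 1/2 ≤ g * ε := by rw [key1]; linarith
    nlinarith
  have hτpos : 0 < τ := by nlinarith
  have hτinv : τ⁻¹ ≤ 2 * ε := by
    have h1 : τ⁻¹ * (τ * (2*ε)) = 2*ε := by field_simp
    calc τ⁻¹ = τ⁻¹ * 1 := by ring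
      _ ≤ τ⁻¹ * (τ * (2*ε)) := by
          apply mul_le_mul_of_nonneg_left (by linarith) (by positivity)
      _ = 2*ε := h1
  -- the key algebraic identity
  have hTP : T A M α P = μ • P - 1 + (μ^N)⁻¹ • ((T A M α ^ N) 1) := by
    set f : ℕ → Matrix (Fin n) (Fin n) ℝ := fun k => (μ^k)⁻¹ • ((T A M α ^ k) 1) with hfdef
    have hf0 : f 0 = 1 := by simp [hfdef]
    have step1 : T A M α P = ∑ k ∈ Finset.range N, f (k+1) := by
      rw [hPdef, map_sum]
      refine Finset.sum_congr rfl fun k _ => ?_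
      rw [_root_.map_smul, hfdef]
      simp only []
      congr 1
      rw [pow_succ', Module.End.mul_apply]
    have step2 : μ • P = ∑ k ∈ Finset.range N, f k := by
      rw [hPdef, Finset.smul_sum]
      refine Finset.sum_congr rfl fun k _ => ?_
      rw [smul_smul, hfdef]
      congr 1
      rw [pow_succ]
      field_simp
    have step3 : ∑ k ∈ Finset.range N, f (k+1) + f 0 = ∑ k ∈ Finset.range N, f k + f N := by
      rw [← Finset.sum_range_succ' f N, Finset.sum_range_succ f N]
    rw [step1, step2]
    have step4 : ∑ k ∈ Finset.range N, f (k+1) =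
        ∑ k ∈ Finset.range N, f k + f N - f 0 := by
      rw [← step3]; abel
    rw [step4, hf0]
    have : f N = (μ^N)⁻¹ • ((T A M α ^ N) 1) := rfl
    rw [this]
    abel
  -- the approximate eigenvector
  refine ⟨τ⁻¹ • P, μ, psd_smul (by positivity) hPpsd, ?_, ?_, ?_, ?_⟩
  · rw [Matrix.trace_smul, ← hτdef, smul_eq_mul, inv_mul_cancel₀ hτpos.ne']
  · rw [hμdef]; exact lt_add_of_pos_right _ hε
  · rw [hμdef]
  · have hres : T A M α (τ⁻¹ • P) - μ • (τ⁻¹ • P)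
        = τ⁻¹ • ((μ^N)⁻¹ • ((T A M α ^ N) 1) - 1) := by
      rw [_root_.map_smul, smul_comm μ τ⁻¹ P, ← smul_sub]
      congr 1
      rw [hTP]; abel
    rw [hres]
    have hfN : ‖(μ^N)⁻¹ • ((T A M α ^ N) 1)‖ ≤ 1 := by
      rw [norm_smul, Real.norm_eq_abs, abs_of_nonneg (by positivity)]
      have h1 : ‖(T A M α ^ N) 1‖ ≤ t N := psd_norm_le_trace (Tpow_psd hM hα N Matrix.PosSemidef.one)
      have h2 : (μ^N)⁻¹ * ‖(T A M α ^ N) 1‖ ≤ (μ^N)⁻¹ * (B * μ'^N) := by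
        apply mul_le_mul_of_nonneg_left (h1.trans (hBk N)) (by positivity)
      have h3 : (μ^N)⁻¹ * (B * μ'^N) = B * (μ'/μ)^N := by
        rw [div_pow]; field_simp
      rw [h3] at h2
      exact h2.trans hr1N
    have h1n : ‖(1 : Matrix (Fin n) (Fin n) ℝ)‖ ≤ (n:ℝ) := by
      have := psd_norm_le_trace (Matrix.PosSemidef.one (n := Fin n) (R := ℝ))
      simpa [Matrix.trace_one] using this
    rw [norm_smul, Real.norm_eq_abs, abs_of_nonneg (by positivity)]
    have h2 : ‖(μ^N)⁻¹ • ((T A M α ^ N) 1) - (1:Matrix (Fin n) (Fin n) ℝ)‖ ≤ 1 + (n:ℝ) := by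
      calc ‖(μ^N)⁻¹ • ((T A M α ^ N) 1) - (1:Matrix (Fin n) (Fin n) ℝ)‖
          ≤ ‖(μ^N)⁻¹ • ((T A M α ^ N) 1)‖ + ‖(1:Matrix (Fin n) (Fin n) ℝ)‖ := norm_sub_le _ _
        _ ≤ 1 + (n:ℝ) := add_le_add hfN h1n
    calc τ⁻¹ * ‖(μ^N)⁻¹ • ((T A M α ^ N) 1) - (1:Matrix (Fin n) (Fin n) ℝ)‖
        ≤ (2*ε) * (1 + (n:ℝ)) := by
          apply mul_le_mul hτinv h2 (norm_nonneg _) (by positivity)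
      _ = (μ - ρ) * (2 * (1 + (n:ℝ))) := by rw [hμdef]; ring
/-- The quadratic-form evaluation as a linear map in the matrix. -/
def quadLin (x : Fin n → ℝ) : Matrix (Fin n) (Fin n) ℝ →ₗ[ℝ] ℝ where
  toFun X := x ⬝ᵥ X *ᵥ x
  map_add' X Y := by simp [Matrix.add_mulVec, dotProduct_add]
  map_smul' c X := by simp [Matrix.smul_mulVec, dotProduct_smul]

/-- Transpose as a linear map. -/
def conjTransposeLin : Matrix (Fin n) (Fin n) ℝ →ₗ[ℝ] Matrix (Fin n) (Fin n) ℝ where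
  toFun X := Xᴴ
  map_add' X Y := by simp [Matrix.conjTranspose_add]
  map_smul' c X := by simp [Matrix.conjTranspose_smul]

lemma isClosed_psd : IsClosed {X : Matrix (Fin n) (Fin n) ℝ | X.PosSemidef} := by
  have hset : {X : Matrix (Fin n) (Fin n) ℝ | X.PosSemidef}
      = {X : Matrix (Fin n) (Fin n) ℝ | Xᴴ = X}
        ∩ ⋂ x : Fin n → ℝ, {X : Matrix (Fin n) (Fin n) ℝ | 0 ≤ x ⬝ᵥ X *ᵥ x} := by
    ext X
    simp only [Set.mem_setOf_eq, Set.mem_inter_iff, Set.mem_iInter]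
    constructor
    · exact fun h => ⟨h.1, fun x => by simpa using h.dotProduct_mulVec_nonneg x⟩
    · exact fun h => Matrix.PosSemidef.of_dotProduct_mulVec_nonneg h.1 fun x => by simpa using h.2 x
  rw [hset]
  refine IsClosed.inter (isClosed_eq ?_ continuous_id)
    (isClosed_iInter fun x => isClosed_le continuous_const ?_)
  · exact (conjTransposeLin (n := n)).continuous_of_finiteDimensional
  · exact (quadLin x).continuous_of_finiteDimensional

lemma exists_eigen (A M : Matrix (Fin n) (Fin n) ℝ) (α : ℝ) (hM : M.PosSemidef)
    (hα : 0 ≤ α) (hn : 1 ≤ (n : ℝ)) :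
    ∃ (Y : Matrix (Fin n) (Fin n) ℝ) (r : ℝ), Y.PosSemidef ∧ Y.trace = 1 ∧
      T A M α Y = r • Y := by
  have happrox : ∀ j : ℕ, ∃ (Y : Matrix (Fin n) (Fin n) ℝ) (μ : ℝ),
      Y.PosSemidef ∧ Y.trace = 1 ∧ rho (tseq A M α) < μ ∧
      μ ≤ rho (tseq A M α) + 1/((j:ℝ)+1) ∧
      ‖T A M α Y - μ • Y‖ ≤ (μ - rho (tseq A M α)) * (2 * (1 + (n:ℝ))) :=
    fun j => approx hM hα hn (by positivity)
  choose Ys μs h1 h2 h3 h4 h5 using happrox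
  set ρ := rho (tseq A M α) with hρdef
  have hball : ∀ j, Ys j ∈ Metric.closedBall (0 : Matrix (Fin n) (Fin n) ℝ) 1 := fun j => by
    rw [Metric.mem_closedBall, dist_zero_right]
    calc ‖Ys j‖ ≤ (Ys j).trace := psd_norm_le_trace (h1 j)
      _ = 1 := h2 j
  obtain ⟨Y, -, φ, hφ, hconv⟩ :=
    (isCompact_closedBall (0 : Matrix (Fin n) (Fin n) ℝ) 1).tendsto_subseq hball
  have hφj : ∀ j : ℕ, (j:ℝ) ≤ φ j := fun j => Nat.cast_le.mpr hφ.le_apply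
  have hεconv : Tendsto (fun j : ℕ => 1/((φ j : ℝ)+1)) atTop (𝓝 0) := by
    refine squeeze_zero (fun j => by positivity) (fun j => ?_)
      tendsto_one_div_add_atTop_nhds_zero_nat
    apply one_div_le_one_div_of_le (by positivity)
    linarith [hφj j]
  have hμconv : Tendsto (fun j => μs (φ j)) atTop (𝓝 ρ) := by
    have hup : Tendsto (fun j : ℕ => ρ + 1/((φ j : ℝ)+1)) atTop (𝓝 ρ) := by
      simpa using tendsto_const_nhds.add hεconv
    exact tendsto_of_tendsto_of_tendsto_of_le_of_le tendsto_const_nhds hup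
      (fun j => (h3 (φ j)).le) (fun j => h4 (φ j))
  have hres0 : Tendsto (fun j => T A M α (Ys (φ j)) - μs (φ j) • Ys (φ j)) atTop (𝓝 0) := by
    refine squeeze_zero_norm
      (a := fun j => (1/((φ j : ℝ)+1)) * (2 * (1 + (n:ℝ)))) (fun j => ?_) ?_
    · exact (h5 (φ j)).trans (mul_le_mul_of_nonneg_right
        (by linarith [h4 (φ j)]) (by positivity))
    · simpa using hεconv.mul_const (2 * (1 + (n:ℝ)))
  have hTcont : Continuous (T A M α) := (T A M α).continuous_of_finiteDimensional
  have hTconv : Tendsto (fun j => T A M α (Ys (φ j))) atTop (𝓝 (T A M α Y)) :=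
    (hTcont.tendsto Y).comp hconv
  have hscal : Tendsto (fun j => μs (φ j) • Ys (φ j)) atTop (𝓝 (ρ • Y)) :=
    hμconv.smul hconv
  have heq : T A M α Y - ρ • Y = 0 := tendsto_nhds_unique (hTconv.sub hscal) hres0
  refine ⟨Y, ρ, ?_, ?_, by rwa [sub_eq_zero] at heq⟩
  · exact isClosed_psd.mem_of_tendsto hconv (Filter.Eventually.of_forall fun j => h1 (φ j))
  · have trcont : Continuous (Matrix.traceLinearMap (Fin n) ℝ ℝ) :=
      (Matrix.traceLinearMap (Fin n) ℝ ℝ).continuous_of_finiteDimensional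
    have htr : Tendsto (fun j => (Ys (φ j)).trace) atTop (𝓝 Y.trace) :=
      (trcont.tendsto Y).comp hconv
    have hconst : (fun j => (Ys (φ j)).trace) = fun _ => (1:ℝ) := funext fun j => h2 (φ j)
    rw [hconst] at htr
    exact tendsto_nhds_unique htr tendsto_const_nhds

end Stmt9Aux

open Matrix

/-- For `C ≠ 0` and `α > 0`, the map
`f(X) = (AᵀXA + α CᵀC) / tr(AᵀXA + α CᵀC)` maps the set `𝒞` of symmetric positive
semidefinite matrices of unit trace into itself, and has a fixed point in `𝒞`. -/
theorem stmt_9 {n p : ℕ} (A : Matrix (Fin n) (Fin n) ℝ) (C : Matrix (Fin p) (Fin n) ℝ)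
    (hC : C ≠ 0) (α : ℝ) (hα : 0 < α) :
    (∀ X : Matrix (Fin n) (Fin n) ℝ, X.PosSemidef → X.trace = 1 →
      ((Aᵀ * X * A + α • (Cᵀ * C)).trace⁻¹ • (Aᵀ * X * A + α • (Cᵀ * C))).PosSemidef ∧
      ((Aᵀ * X * A + α • (Cᵀ * C)).trace⁻¹ • (Aᵀ * X * A + α • (Cᵀ * C))).trace = 1) ∧
    ∃ X : Matrix (Fin n) (Fin n) ℝ, X.PosSemidef ∧ X.trace = 1 ∧
      (Aᵀ * X * A + α • (Cᵀ * C)).trace • X = Aᵀ * X * A + α • (Cᵀ * C) := by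
  have hn : n ≠ 0 := by
    rintro rfl
    exact hC (by ext i j; exact j.elim0)
  have hn1 : 1 ≤ (n : ℝ) := by
    have : 1 ≤ n := Nat.one_le_iff_ne_zero.mpr hn
    exact_mod_cast this
  have hM : (Cᵀ * C).PosSemidef := Matrix.posSemidef_conjTranspose_mul_self C
  have hMtr : 0 < (Cᵀ * C).trace := by
    have hentry : ∃ i j, C i j ≠ 0 := by
      by_contra h
      push_neg at h
      exact hC (by ext i j; exact h i j)
    obtain ⟨i0, j0, hij⟩ := hentry
    have htr_eq : (Cᵀ * C).trace = ∑ j, ∑ i, (C i j)^2 := by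
      simp [Matrix.trace, Matrix.diag, Matrix.mul_apply, Matrix.transpose_apply, sq]
    rw [htr_eq]
    refine Finset.sum_pos' (fun j _ => Finset.sum_nonneg fun i _ => sq_nonneg _)
      ⟨j0, Finset.mem_univ _, Finset.sum_pos' (fun i _ => sq_nonneg _)
        ⟨i0, Finset.mem_univ _, by exact pow_pos (abs_pos.mpr hij) 2 |>.trans_eq (by rw [sq_abs]) ⟩⟩
  constructor
  · intro X hX htrX
    have hP1 : (Aᵀ * X * A).PosSemidef := hX.conjTranspose_mul_mul_same A
    have hP2 : (α • (Cᵀ * C)).PosSemidef := Stmt9Aux.psd_smul hα.le hM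
    have hPpsd : (Aᵀ * X * A + α • (Cᵀ * C)).PosSemidef := hP1.add hP2
    have htr : 0 < (Aᵀ * X * A + α • (Cᵀ * C)).trace := by
      rw [Matrix.trace_add, Matrix.trace_smul]
      have h1 := Stmt9Aux.psd_trace_nonneg hP1
      have h2 : 0 < α * (Cᵀ * C).trace := mul_pos hα hMtr
      rw [smul_eq_mul]
      linarith
    exact ⟨Stmt9Aux.psd_smul (inv_nonneg.mpr htr.le) hPpsd,
      by rw [Matrix.trace_smul, smul_eq_mul, inv_mul_cancel₀ htr.ne']⟩
  · obtain ⟨Y, r, hYpsd, hYtr, hYeig⟩ :=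
      Stmt9Aux.exists_eigen A (Cᵀ * C) α hM hα.le hn1
    have hTY : Aᵀ * Y * A + α • (Cᵀ * C) = r • Y := by
      have h := hYeig
      rw [Stmt9Aux.T_apply, hYtr, mul_one] at h
      exact h
    refine ⟨Y, hYpsd, hYtr, ?_⟩
    rw [hTY, Matrix.trace_smul, hYtr, smul_eq_mul, mul_one]
end

section
/- Let A be an n×n real matrix and C a p×n real matrix such that (A, C) is observable (for every nonzero x₀ ∈ ℝⁿ there exists a natural number k with C Aᵏ x₀ ≠ 0). If α > 0, λ > 0, and X is a symmetric positive semidefinite n×n real matrix satisfying λ X = AᵀXA + α CᵀC, then X is positive definite. -/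
open Matrix

/-- If `(A, C)` is observable, `α, λ > 0`, and `X` is symmetric positive semidefinite
with `λ X = AᵀXA + α CᵀC`, then `X` is positive definite. -/
theorem stmt_11 {n p : ℕ} (A : Matrix (Fin n) (Fin n) ℝ) (C : Matrix (Fin p) (Fin n) ℝ)
    (hobs : ∀ x₀ : Fin n → ℝ, x₀ ≠ 0 → ∃ k : ℕ, C *ᵥ ((A ^ k) *ᵥ x₀) ≠ 0)
    (α lam : ℝ) (hα : 0 < α) (hlam : 0 < lam)
    (X : Matrix (Fin n) (Fin n) ℝ) (hX : X.PosSemidef)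
    (hfix : lam • X = Aᵀ * X * A + α • (Cᵀ * C)) :
    X.PosDef := by
  -- key identity: for all y, lam * yᵀXy = (Ay)ᵀX(Ay) + α * (Cy)⬝(Cy)
  have key : ∀ y : Fin n → ℝ,
      lam * (y ⬝ᵥ X *ᵥ y) = (A *ᵥ y) ⬝ᵥ X *ᵥ (A *ᵥ y) + α * ((C *ᵥ y) ⬝ᵥ (C *ᵥ y)) := by
    intro y
    have h1 := congrArg (fun M : Matrix (Fin n) (Fin n) ℝ => y ⬝ᵥ M *ᵥ y) hfix
    simp only [smul_mulVec, dotProduct_smul, add_mulVec, dotProduct_add,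
      dotProduct_mulVec, ← vecMul_vecMul, vecMul_transpose, smul_eq_mul] at h1
    simp only [dotProduct_mulVec, ← vecMul_vecMul]
    exact h1
  -- step lemma
  have step : ∀ y : Fin n → ℝ, y ⬝ᵥ X *ᵥ y = 0 →
      (A *ᵥ y) ⬝ᵥ X *ᵥ (A *ᵥ y) = 0 ∧ C *ᵥ y = 0 := by
    intro y hy
    have hk := key y
    rw [hy, mul_zero] at hk
    have h1 : 0 ≤ (A *ᵥ y) ⬝ᵥ X *ᵥ (A *ᵥ y) := by simpa using hX.dotProduct_mulVec_nonneg (A *ᵥ y)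
    have h2 : 0 ≤ (C *ᵥ y) ⬝ᵥ (C *ᵥ y) :=
      Finset.sum_nonneg fun i _ => mul_self_nonneg _
    have h2' : 0 ≤ α * ((C *ᵥ y) ⬝ᵥ (C *ᵥ y)) := mul_nonneg hα.le h2
    have e1 : (A *ᵥ y) ⬝ᵥ X *ᵥ (A *ᵥ y) = 0 := le_antisymm (by linarith) h1
    have e2 : (C *ᵥ y) ⬝ᵥ (C *ᵥ y) = 0 := by
      have : α * ((C *ᵥ y) ⬝ᵥ (C *ᵥ y)) = 0 := by linarith
      exact (mul_eq_zero.mp this).resolve_left hα.ne'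
    exact ⟨e1, (dotProduct_self_eq_zero).mp e2⟩
  refine posDef_iff_dotProduct_mulVec.mpr ⟨hX.isHermitian, fun x hx => ?_⟩
  by_contra h
  have hq0 : x ⬝ᵥ X *ᵥ x = 0 := by
    have h1 : 0 ≤ x ⬝ᵥ X *ᵥ x := by simpa using hX.dotProduct_mulVec_nonneg x
    have h2 : ¬ 0 < x ⬝ᵥ X *ᵥ x := by simpa using h
    exact le_antisymm (not_lt.mp h2) h1
  have allk : ∀ k : ℕ, ((A ^ k) *ᵥ x) ⬝ᵥ X *ᵥ ((A ^ k) *ᵥ x) = 0 := by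
    intro k
    induction k with
    | zero => simpa using hq0
    | succ k ih =>
      have := (step _ ih).1
      rw [pow_succ']
      simpa [← mulVec_mulVec] using this
  obtain ⟨k, hk⟩ := hobs x hx
  exact hk (step _ (allk k)).2
end

section
/- Let A be an n×n real matrix and C a p×n real matrix such that (A, C) is observable, and let α > 0. Then the fixed point of the map f(X) = (AᵀXA + α CᵀC)/tr(AᵀXA + α CᵀC) on the set 𝒞 of symmetric positive semidefinite matrices with unit trace is unique: if X, Y ∈ 𝒞 satisfy tr(AᵀXA + α CᵀC)·X = AᵀXA + α CᵀC and tr(AᵀYA + α CᵀC)·Y = AᵀYA + α CᵀC, then X = Y. -/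
open Matrix

section Helpers

variable {n p : ℕ}

private lemma psd_qf {M : Matrix (Fin n) (Fin n) ℝ} (hM : M.PosSemidef) (v : Fin n → ℝ) :
    0 ≤ v ⬝ᵥ M *ᵥ v := by simpa using hM.dotProduct_mulVec_nonneg v

private lemma psd_of {M : Matrix (Fin n) (Fin n) ℝ} (hM : M.IsHermitian)
    (h : ∀ v : Fin n → ℝ, 0 ≤ v ⬝ᵥ M *ᵥ v) : M.PosSemidef :=
  Matrix.PosSemidef.of_dotProduct_mulVec_nonneg hM fun v => by simpa using h v

private lemma herm_smul {M : Matrix (Fin n) (Fin n) ℝ} (c : ℝ) (h : M.IsHermitian) :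
    (c • M).IsHermitian := by
  unfold Matrix.IsHermitian at *
  rw [conjTranspose_smul, h]
  simp

private lemma psd_smul {M : Matrix (Fin n) (Fin n) ℝ} (hM : M.PosSemidef) {c : ℝ} (hc : 0 ≤ c) :
    (c • M).PosSemidef := by
  refine psd_of (herm_smul c hM.1) fun v => ?_
  rw [smul_mulVec, dotProduct_smul, smul_eq_mul]
  exact mul_nonneg hc (psd_qf hM v)

private lemma psd_add {M N : Matrix (Fin n) (Fin n) ℝ} (hM : M.PosSemidef) (hN : N.PosSemidef) :
    (M + N).PosSemidef := by
  refine psd_of (hM.1.add hN.1) fun v => ?_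
  rw [add_mulVec, dotProduct_add]
  exact add_nonneg (psd_qf hM v) (psd_qf hN v)

private lemma psd_diag_nonneg {M : Matrix (Fin n) (Fin n) ℝ} (hM : M.PosSemidef) (i : Fin n) :
    0 ≤ M i i := by
  have := psd_qf hM (Pi.single i 1)
  simpa [dotProduct, mulVec, Pi.single_apply] using this

private lemma psd_trace_nonneg {M : Matrix (Fin n) (Fin n) ℝ} (hM : M.PosSemidef) :
    0 ≤ M.trace :=
  Finset.sum_nonneg fun i _ => psd_diag_nonneg hM i

private lemma psd_conj {M : Matrix (Fin n) (Fin n) ℝ} (hM : M.PosSemidef)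
    (B : Matrix (Fin n) (Fin n) ℝ) : (Bᵀ * M * B).PosSemidef := by
  have := hM.conjTranspose_mul_mul_same B
  rwa [conjTranspose_eq_transpose_of_trivial] at this

private lemma psd_CtC (C : Matrix (Fin p) (Fin n) ℝ) : (Cᵀ * C).PosSemidef := by
  have := posSemidef_conjTranspose_mul_self C
  rwa [conjTranspose_eq_transpose_of_trivial] at this

private lemma qf_transpose_mul {q : ℕ} (B : Matrix (Fin q) (Fin n) ℝ) (v : Fin n → ℝ) :
    v ⬝ᵥ (Bᵀ * B) *ᵥ v = (B *ᵥ v) ⬝ᵥ (B *ᵥ v) := by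
  rw [← mulVec_mulVec, dotProduct_mulVec, vecMul_transpose]

open scoped MatrixOrder in
private lemma psd_sqrt {M : Matrix (Fin n) (Fin n) ℝ} (hM : M.PosSemidef) :
    ∃ B : Matrix (Fin n) (Fin n) ℝ, M = Bᴴ * B := by
  have h0 : 0 ≤ M := hM.nonneg
  refine ⟨CFC.sqrt M, ?_⟩
  have hsa : IsSelfAdjoint (CFC.sqrt M) := (CFC.sqrt_nonneg M).isSelfAdjoint
  rw [show (CFC.sqrt M)ᴴ = star (CFC.sqrt M) from rfl, hsa.star_eq, CFC.sqrt_mul_sqrt_self M h0]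

private lemma psd_eq_zero_of_trace {M : Matrix (Fin n) (Fin n) ℝ} (hM : M.PosSemidef)
    (h : M.trace = 0) : M = 0 := by
  obtain ⟨B, rfl⟩ := psd_sqrt hM
  have htr : (Bᴴ * B).trace = ∑ j, ∑ i, (B i j) ^ 2 := by
    simp [Matrix.trace, Matrix.mul_apply, Matrix.diag, conjTranspose_apply, sq]
  have hB : B = 0 := by
    rw [htr] at h
    have h2 : ∀ j ∈ Finset.univ, (∑ i, (B i j) ^ 2) = 0 := by
      intro j _
      refine (Finset.sum_eq_zero_iff_of_nonneg ?_).mp h j (Finset.mem_univ j)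
      exact fun j _ => Finset.sum_nonneg fun i _ => sq_nonneg _
    ext i j
    have h3 := (Finset.sum_eq_zero_iff_of_nonneg (fun i _ => sq_nonneg (B i j))).mp
      (h2 j (Finset.mem_univ j)) i (Finset.mem_univ i)
    simpa using sq_eq_zero_iff.mp h3
  rw [hB]
  simp

private lemma qf_le_trace {Y : Matrix (Fin n) (Fin n) ℝ} (hY : Y.PosSemidef) (v : Fin n → ℝ) :
    v ⬝ᵥ Y *ᵥ v ≤ Y.trace * (v ⬝ᵥ v) := by
  obtain ⟨B, rfl⟩ := psd_sqrt hY
  have hBt : Bᴴ = Bᵀ := conjTranspose_eq_transpose_of_trivial B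
  have h1 : v ⬝ᵥ (Bᴴ * B) *ᵥ v = ∑ i, (∑ j, B i j * v j) ^ 2 := by
    rw [hBt, qf_transpose_mul]
    simp [dotProduct, mulVec, sq]
  have htr : (Bᴴ * B).trace = ∑ i, ∑ j, (B i j) ^ 2 := by
    simp only [Matrix.trace, Matrix.mul_apply, Matrix.diag, conjTranspose_apply, sq,
      star_trivial]
    rw [Finset.sum_comm]
  rw [h1, htr, Finset.sum_mul]
  refine Finset.sum_le_sum fun i _ => ?_
  calc (∑ j, B i j * v j) ^ 2 ≤ (∑ j, (B i j) ^ 2) * ∑ j, (v j) ^ 2 :=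
        Finset.sum_mul_sq_le_sq_mul_sq Finset.univ (fun j => B i j) v
    _ = (∑ j, (B i j) ^ 2) * (v ⬝ᵥ v) := by congr 1; simp [dotProduct, sq]

private lemma exists_gap {E Y : Matrix (Fin n) (Fin n) ℝ} (hn : 0 < n) (hE : E.IsHermitian)
    (hEpd : ∀ w : Fin n → ℝ, w ≠ 0 → 0 < w ⬝ᵥ E *ᵥ w)
    (hY : Y.PosSemidef) (hYtr : Y.trace = 1) :
    ∃ η : ℝ, 0 < η ∧ (E - η • Y).PosSemidef := by
  have hcoe : Continuous fun w : EuclideanSpace ℝ (Fin n) => (w : Fin n → ℝ) :=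
    PiLp.continuous_ofLp 2 _
  set f : EuclideanSpace ℝ (Fin n) → ℝ := fun w => (w : Fin n → ℝ) ⬝ᵥ E *ᵥ (w : Fin n → ℝ)
    with hf
  have hcont : Continuous f :=
    hcoe.dotProduct (continuous_const.matrix_mulVec hcoe)
  have hsphere : (Metric.sphere (0 : EuclideanSpace ℝ (Fin n)) 1).Nonempty := by
    refine ⟨EuclideanSpace.single ⟨0, hn⟩ (1 : ℝ), ?_⟩
    simp [EuclideanSpace.norm_single]
  obtain ⟨w₀, hw₀mem, hw₀min⟩ :=
    (isCompact_sphere (0 : EuclideanSpace ℝ (Fin n)) 1).exists_isMinOn hsphere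
      hcont.continuousOn
  have hw₀norm : ‖w₀‖ = 1 := by simpa using hw₀mem
  have hw₀ne : (w₀ : Fin n → ℝ) ≠ 0 := by
    intro h
    have : w₀ = 0 := by ext i; exact congrFun h i
    rw [this] at hw₀norm
    simp at hw₀norm
  set μ := f w₀ with hμ
  have hμpos : 0 < μ := hEpd _ hw₀ne
  have hkey : ∀ v : Fin n → ℝ, μ * (v ⬝ᵥ v) ≤ v ⬝ᵥ E *ᵥ v := by
    intro v
    by_cases hv : v = 0
    · simp [hv]
    · set u : EuclideanSpace ℝ (Fin n) := WithLp.toLp 2 v with hu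
      have hune : u ≠ 0 := by
        intro h
        exact hv (by ext i; exact congrFun (congrArg (fun (z : EuclideanSpace ℝ (Fin n)) =>
          (z : Fin n → ℝ)) h) i)
      have hr : 0 < ‖u‖ := norm_pos_iff.mpr hune
      have hmem : (‖u‖⁻¹ • u) ∈ Metric.sphere (0 : EuclideanSpace ℝ (Fin n)) 1 := by
        simp [norm_smul, abs_of_pos (inv_pos.mpr hr), inv_mul_cancel₀ hr.ne']
      have hmin : μ ≤ f (‖u‖⁻¹ • u) := hw₀min hmem
      have hfu : f (‖u‖⁻¹ • u) = ‖u‖⁻¹ * (‖u‖⁻¹ * (v ⬝ᵥ E *ᵥ v)) := by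
        show ((‖u‖⁻¹ • v) : Fin n → ℝ) ⬝ᵥ E *ᵥ (‖u‖⁻¹ • v) = _
        rw [mulVec_smul, dotProduct_smul, smul_dotProduct]
        simp [smul_eq_mul]
      have hnorm2 : ‖u‖ ^ 2 = v ⬝ᵥ v := by
        rw [EuclideanSpace.norm_eq, Real.sq_sqrt (by positivity)]
        simp [dotProduct, sq, hu]
      have h1 : μ * (‖u‖ * ‖u‖) ≤ v ⬝ᵥ E *ᵥ v := by
        rw [hfu] at hmin
        have h2 := mul_le_mul_of_nonneg_left hmin (le_of_lt (mul_pos hr hr))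
        calc μ * (‖u‖ * ‖u‖) = (‖u‖ * ‖u‖) * μ := by ring
          _ ≤ (‖u‖ * ‖u‖) * (‖u‖⁻¹ * (‖u‖⁻¹ * (v ⬝ᵥ E *ᵥ v))) := h2
          _ = v ⬝ᵥ E *ᵥ v := by field_simp
      calc μ * (v ⬝ᵥ v) = μ * (‖u‖ * ‖u‖) := by rw [← hnorm2]; ring
        _ ≤ v ⬝ᵥ E *ᵥ v := h1
  refine ⟨μ, hμpos, ?_⟩
  have hherm : (E - μ • Y).IsHermitian := by
    unfold Matrix.IsHermitian at *
    rw [conjTranspose_sub, conjTranspose_smul, hE, hY.1]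
    simp
  refine psd_of hherm fun v => ?_
  have hqY := qf_le_trace hY v
  rw [hYtr, one_mul] at hqY
  have h3 : μ * (v ⬝ᵥ Y *ᵥ v) ≤ μ * (v ⬝ᵥ v) := mul_le_mul_of_nonneg_left hqY hμpos.le
  have hfin : 0 ≤ v ⬝ᵥ E *ᵥ v - μ * (v ⬝ᵥ Y *ᵥ v) := by
    have := hkey v
    linarith
  simpa [sub_mulVec, dotProduct_sub, smul_mulVec, dotProduct_smul, smul_eq_mul]
    using hfin

end Helpers

/-- The positive linear map `M ↦ AᵀMA + (a · tr M) CᵀC` underlying the fixed-point map. -/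
noncomputable def Tmap {n p : ℕ} (A : Matrix (Fin n) (Fin n) ℝ) (C : Matrix (Fin p) (Fin n) ℝ)
    (a : ℝ) (M : Matrix (Fin n) (Fin n) ℝ) : Matrix (Fin n) (Fin n) ℝ :=
  Aᵀ * M * A + (a * M.trace) • (Cᵀ * C)

section KeySection

variable {n p : ℕ} (A : Matrix (Fin n) (Fin n) ℝ) (C : Matrix (Fin p) (Fin n) ℝ)

private lemma Tmap_lin (a : ℝ) (c d : ℝ) (M N : Matrix (Fin n) (Fin n) ℝ) :
    Tmap A C a (c • M + d • N) = c • Tmap A C a M + d • Tmap A C a N := by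
  unfold Tmap
  rw [Matrix.mul_add, Matrix.add_mul, Matrix.mul_smul, Matrix.mul_smul,
    Matrix.smul_mul, Matrix.smul_mul, trace_add, trace_smul, trace_smul,
    smul_add, smul_add, smul_smul, smul_smul, mul_add, add_smul, smul_eq_mul, smul_eq_mul]
  rw [show a * (c * M.trace) = c * (a * M.trace) by ring,
    show a * (d * N.trace) = d * (a * N.trace) by ring]
  abel

private lemma Tmap_sub (a : ℝ) (c : ℝ) (M N : Matrix (Fin n) (Fin n) ℝ) :
    Tmap A C a (M - c • N) = Tmap A C a M - c • Tmap A C a N := by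
  have := Tmap_lin A C a 1 (-c) M N
  simpa [sub_eq_add_neg, neg_smul] using this

private lemma Tmap_pos {a : ℝ} (ha : 0 ≤ a) {M : Matrix (Fin n) (Fin n) ℝ}
    (hM : M.PosSemidef) : (Tmap A C a M).PosSemidef :=
  psd_add (psd_conj hM A) (psd_smul (psd_CtC C) (mul_nonneg ha (psd_trace_nonneg hM)))

private lemma Tmap_mono {a : ℝ} (ha : 0 ≤ a) {M N : Matrix (Fin n) (Fin n) ℝ}
    (h : (M - N).PosSemidef) : (Tmap A C a M - Tmap A C a N).PosSemidef := by
  have h2 := Tmap_pos A C ha h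
  have h3 : Tmap A C a (M - N) = Tmap A C a M - Tmap A C a N := by
    have := Tmap_sub A C a 1 M N
    simpa using this
  rwa [h3] at h2

private lemma Tmap_iter_mono {a : ℝ} (ha : 0 ≤ a) (m : ℕ) {M N : Matrix (Fin n) (Fin n) ℝ}
    (h : (M - N).PosSemidef) :
    ((Tmap A C a)^[m] M - (Tmap A C a)^[m] N).PosSemidef := by
  induction m generalizing M N with
  | zero => simpa using h
  | succ m ih =>
    rw [Function.iterate_succ_apply, Function.iterate_succ_apply]
    exact ih (Tmap_mono A C ha h)

private lemma Tmap_le_pow {a : ℝ} (ha : 0 ≤ a) (j : ℕ) {M : Matrix (Fin n) (Fin n) ℝ}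
    (hM : M.PosSemidef) :
    ((Tmap A C a)^[j] M - (A ^ j)ᵀ * M * (A ^ j)).PosSemidef := by
  induction j generalizing M with
  | zero => simpa using Matrix.PosSemidef.zero
  | succ j ih =>
    rw [Function.iterate_succ_apply]
    have h1 : (Tmap A C a M - Aᵀ * M * A).PosSemidef := by
      have : Tmap A C a M - Aᵀ * M * A = (a * M.trace) • (Cᵀ * C) := by
        unfold Tmap; abel
      rw [this]
      exact psd_smul (psd_CtC C) (mul_nonneg ha (psd_trace_nonneg hM))
    have h2 := Tmap_iter_mono A C ha j h1
    have h3 := ih (psd_conj hM A)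
    have h4 := psd_add h2 h3
    rw [sub_add_sub_cancel] at h4
    have h5 : (A ^ j)ᵀ * (Aᵀ * M * A) * A ^ j = (A ^ (j + 1))ᵀ * M * A ^ (j + 1) := by
      rw [pow_succ' A j, transpose_mul]
      noncomm_ring
    rwa [h5] at h4

private lemma key (hn : 0 < n)
    (hobs : ∀ x₀ : Fin n → ℝ, x₀ ≠ 0 → ∃ k : ℕ, C *ᵥ ((A ^ k) *ᵥ x₀) ≠ 0)
    (a : ℝ) (ha : 0 < a)
    (X Y : Matrix (Fin n) (Fin n) ℝ)
    (hX : X.PosSemidef) (hXtr : X.trace = 1)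
    (hY : Y.PosSemidef) (hYtr : Y.trace = 1)
    (hfixX : (Aᵀ * X * A + a • (Cᵀ * C)).trace • X = Aᵀ * X * A + a • (Cᵀ * C))
    (hfixY : (Aᵀ * Y * A + a • (Cᵀ * C)).trace • Y = Aᵀ * Y * A + a • (Cᵀ * C)) :
    X = Y ∨ (Aᵀ * Y * A + a • (Cᵀ * C)).trace < (Aᵀ * X * A + a • (Cᵀ * C)).trace := by
  set K := Cᵀ * C with hKdef
  set lX := (Aᵀ * X * A + a • K).trace with hlXdef
  set lY := (Aᵀ * Y * A + a • K).trace with hlYdef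
  have hXpsdM : (Aᵀ * X * A + a • K).PosSemidef :=
    psd_add (psd_conj hX A) (psd_smul (psd_CtC C) ha.le)
  have hYpsdM : (Aᵀ * Y * A + a • K).PosSemidef :=
    psd_add (psd_conj hY A) (psd_smul (psd_CtC C) ha.le)
  have hlX0 : 0 ≤ lX := psd_trace_nonneg hXpsdM
  have hlY0 : 0 ≤ lY := psd_trace_nonneg hYpsdM
  have hTX : Tmap A C a X = lX • X := by
    unfold Tmap
    rw [hXtr, mul_one, ← hKdef]
    exact hfixX.symm
  have hTY : Tmap A C a Y = lY • Y := by
    unfold Tmap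
    rw [hYtr, mul_one, ← hKdef]
    exact hfixY.symm
  -- the maximal `t` with `X - t • Y` positive semidefinite
  set S : Set ℝ := {t : ℝ | (X - t • Y).PosSemidef} with hSdef
  have hS0 : (0 : ℝ) ∈ S := by
    show (X - (0:ℝ) • Y).PosSemidef
    simpa using hX
  have hub : ∀ t ∈ S, t ≤ 1 := by
    intro t ht
    have h1 := psd_trace_nonneg ht
    rw [trace_sub, trace_smul, hXtr, hYtr, smul_eq_mul, mul_one] at h1
    linarith
  have hbdd : BddAbove S := ⟨1, fun t ht => hub t ht⟩
  set t := sSup S with htdef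
  have ht0 : 0 ≤ t := le_csSup hbdd hS0
  have ht1 : t ≤ 1 := csSup_le ⟨0, hS0⟩ hub
  set E := X - t • Y with hEdef
  have hEherm : E.IsHermitian := hX.1.sub (herm_smul t hY.1)
  have hEpsd : E.PosSemidef := by
    refine psd_of hEherm fun v => ?_
    have hq : 0 ≤ v ⬝ᵥ Y *ᵥ v := psd_qf hY v
    have hqf : ∀ s ∈ S, s * (v ⬝ᵥ Y *ᵥ v) ≤ v ⬝ᵥ X *ᵥ v := by
      intro s hs
      have h2 := psd_qf hs v
      rw [sub_mulVec, dotProduct_sub, smul_mulVec, dotProduct_smul, smul_eq_mul] at h2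
      linarith
    have hgoal : t * (v ⬝ᵥ Y *ᵥ v) ≤ v ⬝ᵥ X *ᵥ v := by
      rcases eq_or_lt_of_le hq with hq0 | hqpos
      · have h3 : 0 ≤ v ⬝ᵥ X *ᵥ v := psd_qf hX v
        rw [← hq0, mul_zero]
        exact h3
      · have hub2 : t ≤ (v ⬝ᵥ X *ᵥ v) / (v ⬝ᵥ Y *ᵥ v) :=
          csSup_le ⟨0, hS0⟩ fun s hs => (le_div_iff₀ hqpos).mpr (hqf s hs)
        exact (le_div_iff₀ hqpos).mp hub2
    rw [hEdef, sub_mulVec, dotProduct_sub, smul_mulVec, dotProduct_smul, smul_eq_mul]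
    linarith
  rcases eq_or_lt_of_le ht1 with h1 | hlt
  · -- `t = 1` : here `X = Y`
    left
    have hXY : (X - Y).PosSemidef := by
      have : E = X - Y := by rw [hEdef, h1, one_smul]
      rwa [this] at hEpsd
    have htr0 : (X - Y).trace = 0 := by rw [trace_sub, hXtr, hYtr, sub_self]
    have := psd_eq_zero_of_trace hXY htr0
    exact sub_eq_zero.mp this
  · right
    show lY < lX
    have htE : E.trace = 1 - t := by
      rw [hEdef, trace_sub, trace_smul, hXtr, hYtr, smul_eq_mul, mul_one]
    have htEpos : 0 < E.trace := by rw [htE]; linarith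
    by_cases hw : ∃ w : Fin n → ℝ, w ≠ 0 ∧ w ⬝ᵥ E *ᵥ w ≤ 0
    · obtain ⟨w, hw0, hwle⟩ := hw
      have hwE : w ⬝ᵥ E *ᵥ w = 0 := le_antisymm hwle (psd_qf hEpsd w)
      obtain ⟨k, hk⟩ := hobs w hw0
      have hXE : X = E + t • Y := by rw [hEdef, sub_add_cancel]
      set c := t * lX - t * lY with hcdef
      have hTE : Tmap A C a E = lX • E + c • Y := by
        rw [hEdef, Tmap_sub A C a t X Y, hTX, hTY, hXE]
        module
      have ident : ∀ m : ℕ, ∃ s : ℝ, 0 ≤ s ∧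
          (Tmap A C a)^[m] E = (lX ^ m) • E + (c * s) • Y := by
        intro m
        induction m with
        | zero => exact ⟨0, le_refl 0, by simp⟩
        | succ m ih =>
          obtain ⟨s, hs0, hs⟩ := ih
          refine ⟨lX ^ m + s * lY, by positivity, ?_⟩
          rw [Function.iterate_succ_apply', hs, Tmap_lin A C a (lX ^ m) (c * s) E Y,
            hTE, hTY]
          module
      obtain ⟨s, hs0, hiter⟩ := ident (k + 1)
      -- lower bound for the iterate through the observability term
      have h1 : (Tmap A C a E - (a * E.trace) • K).PosSemidef := by
        have heq : Tmap A C a E - (a * E.trace) • K = Aᵀ * E * A := by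
          unfold Tmap; rw [← hKdef]; abel
        rw [heq]
        exact psd_conj hEpsd A
      have h2 := Tmap_iter_mono A C ha.le k h1
      have h3 := Tmap_le_pow A C ha.le k
        (psd_smul (psd_CtC C) (mul_nonneg ha.le htEpos.le))
      rw [← hKdef] at h3
      have h4 := psd_add h2 h3
      rw [sub_add_sub_cancel, ← Function.iterate_succ_apply] at h4
      have h5 : (A ^ k)ᵀ * ((a * E.trace) • K) * A ^ k
          = (a * E.trace) • ((A ^ k)ᵀ * K * A ^ k) := by
        rw [Matrix.mul_smul, Matrix.smul_mul]
      rw [h5] at h4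
      have hqf4 := psd_qf h4 w
      rw [sub_mulVec, dotProduct_sub, smul_mulVec, dotProduct_smul, smul_eq_mul] at hqf4
      -- the observability quadratic form is positive
      set u := C *ᵥ ((A ^ k) *ᵥ w) with hudef
      have hqK : w ⬝ᵥ ((A ^ k)ᵀ * K * A ^ k) *ᵥ w = u ⬝ᵥ u := by
        have heq2 : (A ^ k)ᵀ * K * A ^ k = (C * A ^ k)ᵀ * (C * A ^ k) := by
          rw [hKdef, transpose_mul]
          simp [Matrix.mul_assoc]
        rw [heq2, qf_transpose_mul, hudef, ← mulVec_mulVec]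
      have huu : 0 < u ⬝ᵥ u := by
        rcases eq_or_lt_of_le (Finset.sum_nonneg fun i _ => mul_self_nonneg (u i) :
            (0:ℝ) ≤ u ⬝ᵥ u) with h | h
        · exact absurd (dotProduct_self_eq_zero.mp h.symm) hk
        · exact h
      -- value of the iterate via the fixed point identity
      have hval : w ⬝ᵥ ((Tmap A C a)^[k+1] E) *ᵥ w = c * s * (w ⬝ᵥ Y *ᵥ w) := by
        rw [hiter, add_mulVec, dotProduct_add, smul_mulVec, smul_mulVec,
          dotProduct_smul, dotProduct_smul, smul_eq_mul, smul_eq_mul, hwE, mul_zero, zero_add]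
      have hqY : 0 ≤ w ⬝ᵥ Y *ᵥ w := psd_qf hY w
      have hpos : 0 < c * (s * (w ⬝ᵥ Y *ᵥ w)) := by
        have h6 : 0 < a * E.trace * (u ⬝ᵥ u) := by positivity
        rw [hqK] at hqf4
        rw [hval] at hqf4
        nlinarith
      by_contra hcon
      push_neg at hcon
      have hc0 : c ≤ 0 := by
        rw [hcdef]
        have : lX - lY ≤ 0 := by linarith
        nlinarith
      have : c * (s * (w ⬝ᵥ Y *ᵥ w)) ≤ 0 :=
        mul_nonpos_of_nonpos_of_nonneg hc0 (mul_nonneg hs0 hqY)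
      linarith
    · -- otherwise `E` is positive definite, contradicting maximality of `t`
      push_neg at hw
      exfalso
      obtain ⟨η, hη, hgap⟩ := exists_gap hn hEherm (fun v hv => hw v hv) hY hYtr
      have hmem : (t + η) ∈ S := by
        show (X - (t + η) • Y).PosSemidef
        have heq : X - (t + η) • Y = E - η • Y := by
          rw [hEdef, add_smul]; abel
        rwa [heq]
      have := le_csSup hbdd hmem
      linarith

end KeySection

/-- If `(A, C)` is observable and `α > 0`, then the fixed point of
`f(X) = (AᵀXA + α CᵀC)/tr(AᵀXA + α CᵀC)` on the set of symmetric positive semidefinite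
matrices with unit trace is unique. -/
theorem stmt_12 {n p : ℕ} (A : Matrix (Fin n) (Fin n) ℝ) (C : Matrix (Fin p) (Fin n) ℝ)
    (hobs : ∀ x₀ : Fin n → ℝ, x₀ ≠ 0 → ∃ k : ℕ, C *ᵥ ((A ^ k) *ᵥ x₀) ≠ 0)
    (α : ℝ) (hα : 0 < α)
    (X Y : Matrix (Fin n) (Fin n) ℝ)
    (hX : X.PosSemidef) (hXtr : X.trace = 1)
    (hY : Y.PosSemidef) (hYtr : Y.trace = 1)
    (hfixX : (Aᵀ * X * A + α • (Cᵀ * C)).trace • X = Aᵀ * X * A + α • (Cᵀ * C))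
    (hfixY : (Aᵀ * Y * A + α • (Cᵀ * C)).trace • Y = Aᵀ * Y * A + α • (Cᵀ * C)) :
    X = Y := by
  rcases Nat.eq_zero_or_pos n with hn0 | hn
  · exfalso
    subst hn0
    have h0 : X.trace = 0 := by simp [Matrix.trace]
    rw [hXtr] at h0
    norm_num at h0
  · rcases key A C hn hobs α hα X Y hX hXtr hY hYtr hfixX hfixY with h | h
    · exact h
    · rcases key A C hn hobs α hα Y X hY hYtr hX hXtr hfixY hfixX with h2 | h2
      · exact h2.symm
      · exact absurd h2 (lt_asymm h)
end

section
/- Let A be an n×n real matrix. If there exist a real number λ ≥ 1 and a nonzero symmetric positive semidefinite n×n real matrix X with AᵀXA = λX, then the system x_{k+1} = A x_k is not asymptotically stable: there exists x₀ ∈ ℝⁿ such that Aᵏx₀ does not tend to 0 as k → ∞. -/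
open Filter Matrix

/-- If there exist `λ ≥ 1` and a nonzero symmetric positive semidefinite `X` with
`AᵀXA = λX`, then the system `x_{k+1} = A x_k` is not asymptotically stable. -/
theorem stmt_13 {n : ℕ} (A : Matrix (Fin n) (Fin n) ℝ)
    (lam : ℝ) (hlam : 1 ≤ lam)
    (X : Matrix (Fin n) (Fin n) ℝ) (hX : X.PosSemidef) (hX0 : X ≠ 0)
    (heig : Aᵀ * X * A = lam • X) :
    ∃ x₀ : Fin n → ℝ, ¬ Tendsto (fun k : ℕ => (A ^ k) *ᵥ x₀) atTop (nhds 0) := by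
  -- the quadratic form
  set q : (Fin n → ℝ) → ℝ := fun x => x ⬝ᵥ (X *ᵥ x) with hq
  -- there is x₀ with q x₀ ≠ 0
  have hex : ∃ x₀ : Fin n → ℝ, q x₀ ≠ 0 := by
    by_contra h
    push_neg at h
    apply hX0
    have hz : ∀ x : Fin n → ℝ, X *ᵥ x = 0 := by
      intro x
      have := (hX.dotProduct_mulVec_zero_iff x).mp (by simpa using h x)
      simpa using this
    ext i j
    have := congrFun (hz (Pi.single j 1)) i
    simpa [mulVec_single] using this
  obtain ⟨x₀, hq0⟩ := hex
  have hqpos : 0 < q x₀ := lt_of_le_of_ne (hX.re_dotProduct_nonneg x₀) (Ne.symm hq0)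
  refine ⟨x₀, fun hT => ?_⟩
  -- key identity : q (A *ᵥ x) = lam * q x
  have key : ∀ x : Fin n → ℝ, q (A *ᵥ x) = lam * q x := by
    intro x
    have : (A *ᵥ x) ⬝ᵥ (X *ᵥ (A *ᵥ x)) = x ⬝ᵥ ((Aᵀ * X * A) *ᵥ x) := by
      rw [mulVec_mulVec, dotProduct_mulVec, dotProduct_mulVec, ← vecMul_transpose,
        vecMul_vecMul, Matrix.mul_assoc]
    simp only [hq]
    rw [this, heig, smul_mulVec, dotProduct_smul, smul_eq_mul]
  -- hence q (A^k *ᵥ x₀) = lam^k * q x₀ ≥ q x₀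
  have hk : ∀ k : ℕ, q ((A ^ k) *ᵥ x₀) = lam ^ k * q x₀ := by
    intro k
    induction k with
    | zero => simp
    | succ k ih =>
      rw [pow_succ', ← mulVec_mulVec, key, ih, pow_succ']
      ring
  have hge : ∀ k : ℕ, q x₀ ≤ q ((A ^ k) *ᵥ x₀) := by
    intro k
    rw [hk k]
    nlinarith [one_le_pow₀ hlam (n := k), hqpos]
  -- q is continuous
  have hcont : Continuous q := by
    simp only [hq]
    exact (continuous_id.dotProduct ((continuous_const (y := X)).matrix_mulVec continuous_id))
  have hT' : Tendsto (fun k : ℕ => q ((A ^ k) *ᵥ x₀)) atTop (nhds (q 0)) :=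
    (hcont.tendsto 0).comp hT
  have : q (0 : Fin n → ℝ) = 0 := by simp [hq]
  rw [this] at hT'
  have := (hT'.eventually (eventually_lt_nhds hqpos)).exists
  obtain ⟨k, hk'⟩ := this
  exact absurd (hge k) (not_le.mpr hk')
end

section
/- Let A be an n×n real matrix with all entries nonnegative and c a nonnegative nonzero row vector in ℝⁿ. If the system x_{k+1} = A x_k is asymptotically stable (for every x₀ ∈ ℝⁿ, Aᵏx₀ → 0 as k → ∞) and (A, c) is observable (for every nonzero x₀ ∈ ℝⁿ there exists a natural number k with c Aᵏ x₀ ≠ 0), then there exists a row vector q ∈ ℝⁿ with all entries strictly positive satisfying q = c + qA. -/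
open Filter Matrix

/-- For an internally positive system (`A` and `c` entrywise nonnegative, `c ≠ 0`),
asymptotic stability and observability imply the existence of an entrywise strictly
positive row vector `q` with `q = c + qA`. -/
theorem stmt_16 {n : ℕ} (A : Matrix (Fin n) (Fin n) ℝ) (c : Fin n → ℝ)
    (hA : ∀ i j, 0 ≤ A i j) (hc : ∀ i, 0 ≤ c i) (hc0 : c ≠ 0)
    (hstab : ∀ x₀ : Fin n → ℝ,
      Tendsto (fun k : ℕ => (A ^ k) *ᵥ x₀) atTop (nhds 0))
    (hobs : ∀ x₀ : Fin n → ℝ, x₀ ≠ 0 → ∃ k : ℕ, c ⬝ᵥ ((A ^ k) *ᵥ x₀) ≠ 0) :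
    ∃ q : Fin n → ℝ, (∀ i, 0 < q i) ∧ q = c + q ᵥ* A := by
  -- powers of A are entrywise nonnegative
  have hApow : ∀ k : ℕ, ∀ i j, 0 ≤ (A ^ k) i j := by
    intro k
    induction k with
    | zero => intro i j; simp [Matrix.one_apply]; positivity
    | succ k ih =>
      intro i j
      rw [pow_succ, Matrix.mul_apply]
      exact Finset.sum_nonneg fun l _ => mul_nonneg (ih i l) (hA l j)
  -- 1 - A is invertible
  have hinj : Function.Injective (1 - A).mulVec := by
    intro x y hxy
    have h : (1 - A) *ᵥ (x - y) = 0 := by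
      rw [mulVec_sub, hxy, sub_self]
    have hfix : A *ᵥ (x - y) = x - y := by
      have := h
      rw [sub_mulVec, one_mulVec, sub_eq_zero] at this
      exact this.symm
    have hpow : ∀ k : ℕ, (A ^ k) *ᵥ (x - y) = x - y := by
      intro k
      induction k with
      | zero => simp
      | succ k ih => rw [pow_succ', ← mulVec_mulVec, ih, hfix]
      
    have := hstab (x - y)
    simp_rw [hpow] at this
    have hxy0 : x - y = 0 := tendsto_nhds_unique tendsto_const_nhds this
    exact sub_eq_zero.mp hxy0
  have hunit : IsUnit (1 - A) := mulVec_injective_iff_isUnit.mp hinj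
  obtain ⟨B, hB⟩ := hunit.exists_left_inv
  -- define q
  set q : Fin n → ℝ := c ᵥ* (1 - A)⁻¹ with hq
  have hinv : (1 - A)⁻¹ * (1 - A) = 1 := nonsing_inv_mul _ ((isUnit_iff_isUnit_det _).mp hunit)
  have hqsolve : q ᵥ* (1 - A) = c := by
    rw [hq, vecMul_vecMul, hinv, vecMul_one]
  have heq : q = c + q ᵥ* A := by
    have : q ᵥ* 1 - q ᵥ* A = c := by rw [← vecMul_sub]; exact hqsolve
    rw [vecMul_one] at this
    rw [← this]; ring
  -- iterated identity: q = ∑_{k<N} c ᵥ* A^k + q ᵥ* A^N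
  have hiter : ∀ N : ℕ, q = (∑ k ∈ Finset.range N, c ᵥ* (A ^ k)) + q ᵥ* (A ^ N) := by
    intro N
    induction N with
    | zero => simp
    | succ N ih =>
      rw [Finset.sum_range_succ]
      calc q = (∑ k ∈ Finset.range N, c ᵥ* (A ^ k)) + q ᵥ* (A ^ N) := ih
        _ = (∑ k ∈ Finset.range N, c ᵥ* (A ^ k)) + (c + q ᵥ* A) ᵥ* (A ^ N) := by rw [← heq]
        _ = (∑ k ∈ Finset.range N, c ᵥ* (A ^ k)) + c ᵥ* (A ^ N) + q ᵥ* (A ^ (N+1)) := by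
            rw [add_vecMul, vecMul_vecMul, ← pow_succ']; ring
  -- entries of A^N tend to 0
  have hentry : ∀ i j, Tendsto (fun N : ℕ => (A ^ N) i j) atTop (nhds 0) := by
    intro i j
    have := hstab (Pi.single j 1)
    have h2 := (continuous_apply i).continuousAt.tendsto.comp this
    simpa [mulVec_single, Function.comp_def, Matrix.col_apply] using h2
  -- q ᵥ* A^N tends to 0 entrywise
  have hqA : ∀ i, Tendsto (fun N : ℕ => (q ᵥ* (A ^ N)) i) atTop (nhds 0) := by
    intro i
    have : ∀ N, (q ᵥ* (A ^ N)) i = ∑ j, q j * (A ^ N) j i := fun N => rfl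
    simp_rw [this]
    have : Tendsto (fun N : ℕ => ∑ j, q j * (A ^ N) j i) atTop (nhds (∑ j : Fin n, q j * 0)) :=
      tendsto_finset_sum _ fun j _ => (hentry j i).const_mul (q j)
    simpa using this
  -- partial sums tend to q
  have hpartial : ∀ i, Tendsto (fun N : ℕ => (∑ k ∈ Finset.range N, c ᵥ* (A ^ k)) i)
      atTop (nhds (q i)) := by
    intro i
    have : ∀ N : ℕ, (∑ k ∈ Finset.range N, c ᵥ* (A ^ k)) i = q i - (q ᵥ* (A ^ N)) i := by
      intro N
      have := congrFun (hiter N) i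
      simp only [Pi.add_apply] at this
      linarith
    simp_rw [this]
    simpa using tendsto_const_nhds.sub (hqA i)
  -- c ᵥ* A^k entries nonneg
  have hcA : ∀ k : ℕ, ∀ i, 0 ≤ (c ᵥ* (A ^ k)) i := by
    intro k i
    simp only [vecMul, dotProduct]
    exact Finset.sum_nonneg fun j _ => mul_nonneg (hc j) (hApow k j i)
  -- q nonneg
  have hq0 : ∀ i, 0 ≤ q i := by
    intro i
    refine ge_of_tendsto (hpartial i) (Eventually.of_forall fun N => ?_)
    simp only [Finset.sum_apply]
    exact Finset.sum_nonneg fun k _ => hcA k i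
  refine ⟨q, fun i => ?_, heq⟩
  obtain ⟨k, hk⟩ := hobs (Pi.single i 1) (by
    intro h
    have := congrFun h i
    simp at this)
  have hk' : (c ᵥ* (A ^ k)) i ≠ 0 := by
    rwa [dotProduct_mulVec, dotProduct_single, mul_one] at hk
  have hkpos : 0 < (c ᵥ* (A ^ k)) i := lt_of_le_of_ne (hcA k i) (Ne.symm hk')
  have := congrFun (hiter (k + 1)) i
  simp only [Pi.add_apply, Finset.sum_apply] at this
  have hsum : (c ᵥ* (A ^ k)) i ≤ ∑ j ∈ Finset.range (k+1), (c ᵥ* (A ^ j)) i :=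
    Finset.single_le_sum (fun j _ => hcA j i) (Finset.self_mem_range_succ k)
  have hqAk : 0 ≤ (q ᵥ* (A ^ (k+1))) i := by
    simp only [vecMul, dotProduct]
    exact Finset.sum_nonneg fun j _ => mul_nonneg (hq0 j) (hApow (k+1) j i)
  linarith
end

section
/- Let A be an n×n real matrix with all entries nonnegative and c a nonnegative row vector in ℝⁿ. If (A, c) is observable (for every nonzero x₀ ∈ ℝⁿ there exists a natural number k with c Aᵏ x₀ ≠ 0) and there exists a row vector q ∈ ℝⁿ with all entries strictly positive satisfying q = c + qA, then the system x_{k+1} = A x_k is asymptotically stable restricted to nonnegative initial conditions: for every x₀ ∈ ℝⁿ with nonnegative entries, Aᵏx₀ → 0 as k → ∞. -/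
open Filter Matrix

/-- For `A` and `c` entrywise nonnegative, if `(A, c)` is observable and there is an
entrywise strictly positive row vector `q` with `q = c + qA`, then for every entrywise
nonnegative initial condition `x₀`, `Aᵏx₀ → 0` as `k → ∞`. -/
theorem stmt_18 {n : ℕ} (A : Matrix (Fin n) (Fin n) ℝ) (c : Fin n → ℝ)
    (hA : ∀ i j, 0 ≤ A i j) (hc : ∀ i, 0 ≤ c i)
    (hobs : ∀ x₀ : Fin n → ℝ, x₀ ≠ 0 → ∃ k : ℕ, c ⬝ᵥ ((A ^ k) *ᵥ x₀) ≠ 0)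
    (hq : ∃ q : Fin n → ℝ, (∀ i, 0 < q i) ∧ q = c + q ᵥ* A) :
    ∀ x₀ : Fin n → ℝ, (∀ i, 0 ≤ x₀ i) →
      Tendsto (fun k : ℕ => (A ^ k) *ᵥ x₀) atTop (nhds 0) := by
  obtain ⟨q, hqpos, hqeq⟩ := hq
  intro x₀ hx₀
  set y : ℕ → Fin n → ℝ := fun k => (A ^ k) *ᵥ x₀ with hy
  -- each y k is entrywise nonnegative
  have hynn : ∀ k i, 0 ≤ y k i := by
    intro k
    induction k with
    | zero => simpa [y] using hx₀
    | succ k ih =>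
      intro i
      have : y (k + 1) = A *ᵥ y k := by
        simp [y, pow_succ', mulVec_mulVec]
      rw [this, mulVec, dotProduct]
      exact Finset.sum_nonneg fun j _ => mul_nonneg (hA i j) (ih j)
  -- c ⬝ y k ≥ 0
  have hcy : ∀ k, 0 ≤ c ⬝ᵥ y k :=
    fun k => Finset.sum_nonneg fun j _ => mul_nonneg (hc j) (hynn k j)
  -- Lyapunov function
  set s : ℕ → ℝ := fun k => q ⬝ᵥ y k with hs
  have hsnn : ∀ k, 0 ≤ s k :=
    fun k => Finset.sum_nonneg fun j _ => mul_nonneg (hqpos j).le (hynn k j)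
  have hstep : ∀ k, s (k + 1) = s k - c ⬝ᵥ y k := by
    intro k
    have h1 : y (k + 1) = A *ᵥ y k := by
      simp [y, pow_succ', mulVec_mulVec]
    have h2 : q ᵥ* A = q - c := by
      rw [eq_sub_iff_add_eq, add_comm]; exact hqeq.symm
    calc s (k + 1) = q ⬝ᵥ (A *ᵥ y k) := by rw [hs]; simp [h1]
      _ = (q ᵥ* A) ⬝ᵥ y k := by rw [dotProduct_mulVec]
      _ = (q - c) ⬝ᵥ y k := by rw [h2]
      _ = s k - c ⬝ᵥ y k := by rw [sub_dotProduct]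
  have hanti : Antitone s := by
    apply antitone_nat_of_succ_le
    intro k
    rw [hstep k]
    linarith [hcy k]
  have hbdd : BddBelow (Set.range s) := ⟨0, by rintro _ ⟨k, rfl⟩; exact hsnn k⟩
  have hslim : Tendsto s atTop (nhds (⨅ k, s k)) := tendsto_atTop_ciInf hanti hbdd
  have hslim' : Tendsto (fun k => s (k + 1)) atTop (nhds (⨅ k, s k)) :=
    hslim.comp (tendsto_add_atTop_nat 1)
  -- c ⬝ y k → 0
  have hcy0 : Tendsto (fun k => c ⬝ᵥ y k) atTop (nhds 0) := by
    have : (fun k => c ⬝ᵥ y k) = fun k => s k - s (k + 1) := by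
      funext k; rw [hstep k]; ring
    rw [this]
    simpa using hslim.sub hslim'
  -- boundedness of y
  have hbound : ∀ k i, y k i ≤ s 0 / q i := by
    intro k i
    have h1 : q i * y k i ≤ s k := by
      apply Finset.single_le_sum (f := fun j => q j * y k j)
        (fun j _ => mul_nonneg (hqpos j).le (hynn k j)) (Finset.mem_univ i)
    have h2 : s k ≤ s 0 := hanti (Nat.zero_le k)
    rw [le_div_iff₀ (hqpos i)]
    linarith [h1, h2]
  -- compact set containing the trajectory
  set K : Set (Fin n → ℝ) := Set.pi Set.univ (fun i => Set.Icc 0 (s 0 / q i)) with hK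
  have hKc : IsCompact K := isCompact_univ_pi fun i => isCompact_Icc
  have hyK : ∀ k, y k ∈ K := fun k i _ => ⟨hynn k i, hbound k i⟩
  -- main argument by contradiction
  by_contra hne
  rw [Metric.tendsto_atTop] at hne
  push_neg at hne
  obtain ⟨ε, hε, hfreq⟩ := hne
  have hfreq' : ∃ᶠ k in atTop, ε ≤ dist (y k) 0 := by
    rw [Filter.frequently_atTop]
    intro N; obtain ⟨k, hk, hk'⟩ := hfreq N; exact ⟨k, hk, hk'⟩
  obtain ⟨φ, hφ, hφd⟩ := Filter.extraction_of_frequently_atTop hfreq'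
  obtain ⟨z, hzK, ψ, hψ, hlim⟩ := hKc.tendsto_subseq (x := fun k => y (φ k)) (fun k => hyK (φ k))
  have hz0 : z ≠ 0 := by
    intro h
    have : Tendsto (fun j => dist (y (φ (ψ j))) 0) atTop (nhds (dist z 0)) :=
      (hlim.dist tendsto_const_nhds)
    have hεle : ε ≤ dist z 0 :=
      le_of_tendsto_of_tendsto tendsto_const_nhds this
        (Filter.Eventually.of_forall fun j => hφd (ψ j))
    rw [h, dist_self] at hεle
    linarith
  obtain ⟨m, hm⟩ := hobs z hz0
  apply hm
  -- the function v ↦ c ⬝ (A^m *ᵥ v) is continuous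
  have hcont : Continuous (fun v : Fin n → ℝ => c ⬝ᵥ ((A ^ m) *ᵥ v)) := by
    have : (fun v : Fin n → ℝ => c ⬝ᵥ ((A ^ m) *ᵥ v))
        = fun v => (c ᵥ* (A ^ m)) ⬝ᵥ v := by
      funext v; rw [dotProduct_mulVec]
    rw [this]
    exact continuous_finset_sum _ fun i _ => continuous_const.mul (continuous_apply i)
  have hlim1 : Tendsto (fun j => c ⬝ᵥ ((A ^ m) *ᵥ y (φ (ψ j)))) atTop
      (nhds (c ⬝ᵥ ((A ^ m) *ᵥ z))) := (hcont.tendsto z).comp hlim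
  have heq : ∀ k, c ⬝ᵥ ((A ^ m) *ᵥ y k) = c ⬝ᵥ y (k + m) := by
    intro k
    simp only [y, mulVec_mulVec, ← pow_add]
    rw [add_comm]
  have hlim2 : Tendsto (fun j => c ⬝ᵥ ((A ^ m) *ᵥ y (φ (ψ j)))) atTop (nhds 0) := by
    simp only [heq]
    have hmono : StrictMono fun j => φ (ψ j) := hφ.comp hψ
    have htop : Tendsto (fun j => φ (ψ j) + m) atTop atTop :=
      (tendsto_add_atTop_nat m).comp hmono.tendsto_atTop
    exact hcy0.comp htop
  exact tendsto_nhds_unique hlim1 hlim2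
end

section
/- Let A be an n×n real matrix with all entries nonnegative and c a nonzero nonnegative row vector in ℝⁿ, and let α > 0. Then the map f(x) = (xA + αc) / (Σ_k (xA)_k + α c_k), defined on the unit simplex 𝒞 = {x ∈ ℝⁿ : x ≥ 0 entrywise, Σ_k x_k = 1} of row vectors, maps 𝒞 into 𝒞 and has a fixed point: there exists x ∈ 𝒞 with (Σ_k (xA)_k + α c_k) · x = xA + αc. -/
open Finset Filter

lemma pos_eig {n : ℕ} (hn : 0 < n) (P : Matrix (Fin n) (Fin n) ℝ)
    (hP : ∀ i j, 0 < P i j) :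
    ∃ x : Fin n → ℝ, (∀ i, 0 ≤ x i) ∧ ∑ i, x i = 1 ∧
      ∀ j, (∑ j', ∑ i, x i * P i j') * x j = ∑ i, x i * P i j := by
  have : Nonempty (Fin n) := ⟨⟨0, hn⟩⟩
  set M : ℝ := ∑ j, ∑ i, P i j with hM
  set K : Set (ℝ × (Fin n → ℝ)) :=
    {p | 0 ≤ p.1 ∧ (∀ i, 0 ≤ p.2 i) ∧ (∑ i, p.2 i) = 1 ∧
      ∀ j, p.1 * p.2 j ≤ ∑ i, p.2 i * P i j} with hK
  -- closedness
  have hcont1 : Continuous fun p : ℝ × (Fin n → ℝ) => p.1 := continuous_fst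
  have hconti : ∀ i, Continuous fun p : ℝ × (Fin n → ℝ) => p.2 i :=
    fun i => (continuous_apply i).comp continuous_snd
  have hKclosed : IsClosed K := by
    have h1 : IsClosed {p : ℝ × (Fin n → ℝ) | 0 ≤ p.1} :=
      isClosed_le continuous_const hcont1
    have h2 : IsClosed {p : ℝ × (Fin n → ℝ) | ∀ i, 0 ≤ p.2 i} := by
      have : {p : ℝ × (Fin n → ℝ) | ∀ i, 0 ≤ p.2 i} = ⋂ i, {p | 0 ≤ p.2 i} := by
        ext p; simp
      rw [this]
      exact isClosed_iInter fun i => isClosed_le continuous_const (hconti i)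
    have h3 : IsClosed {p : ℝ × (Fin n → ℝ) | (∑ i, p.2 i) = 1} :=
      isClosed_eq (by continuity) continuous_const
    have h4 : IsClosed {p : ℝ × (Fin n → ℝ) | ∀ j, p.1 * p.2 j ≤ ∑ i, p.2 i * P i j} := by
      have : {p : ℝ × (Fin n → ℝ) | ∀ j, p.1 * p.2 j ≤ ∑ i, p.2 i * P i j}
          = ⋂ j, {p | p.1 * p.2 j ≤ ∑ i, p.2 i * P i j} := by ext p; simp
      rw [this]
      exact isClosed_iInter fun j =>
        isClosed_le (hcont1.mul (hconti j)) (by continuity)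
    have : K = {p : ℝ × (Fin n → ℝ) | 0 ≤ p.1} ∩ {p | ∀ i, 0 ≤ p.2 i}
        ∩ {p | (∑ i, p.2 i) = 1} ∩ {p | ∀ j, p.1 * p.2 j ≤ ∑ i, p.2 i * P i j} := by
      ext p; simp [hK]; tauto
    rw [this]
    exact ((h1.inter h2).inter h3).inter h4
  -- compactness
  have hKsub : K ⊆ Set.Icc (0:ℝ) M ×ˢ Set.Icc (0 : Fin n → ℝ) 1 := by
    rintro ⟨l, x⟩ ⟨hl0, hx0, hx1, hle⟩
    have hxle1 : ∀ i, x i ≤ 1 := by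
      intro i
      calc x i ≤ ∑ i', x i' := single_le_sum (fun i' _ => hx0 i') (mem_univ i)
      _ = 1 := hx1
    constructor
    · constructor
      · exact hl0
      · calc l = ∑ j, l * x j := by rw [← Finset.mul_sum, hx1, mul_one]
        _ ≤ ∑ j, ∑ i, x i * P i j := Finset.sum_le_sum fun j _ => hle j
        _ ≤ ∑ j, ∑ i, P i j := by
            refine Finset.sum_le_sum fun j _ => Finset.sum_le_sum fun i _ => ?_
            nlinarith [hP i j, hx0 i, hxle1 i]
    · exact ⟨fun i => hx0 i, fun i => hxle1 i⟩
  have hKcomp : IsCompact K :=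
    (isCompact_Icc.prod isCompact_Icc).of_isClosed_subset hKclosed hKsub
  have hKne : K.Nonempty := by
    refine ⟨(0, fun _ => (n:ℝ)⁻¹), ?_, ?_, ?_, ?_⟩
    · exact le_refl 0
    · intro i; show (0:ℝ) ≤ (n:ℝ)⁻¹; positivity
    · show ∑ _i : Fin n, (n:ℝ)⁻¹ = 1
      rw [Finset.sum_const, Finset.card_univ, Fintype.card_fin, nsmul_eq_mul]
      field_simp
    · intro j
      show (0:ℝ) * _ ≤ ∑ i : Fin n, (n:ℝ)⁻¹ * P i j
      rw [zero_mul]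
      exact Finset.sum_nonneg fun i _ => mul_nonneg (by positivity) (hP i j).le
  obtain ⟨⟨l, x⟩, hpK, hmax⟩ := hKcomp.exists_isMaxOn hKne hcont1.continuousOn
  obtain ⟨hl0, hx0, hx1, hle⟩ := hpK
  set z : Fin n → ℝ := fun j => ∑ i, x i * P i j with hz
  have hxpos : ∃ i, 0 < x i := by
    by_contra h
    push_neg at h
    have : ∀ i, x i = 0 := fun i => le_antisymm (h i) (hx0 i)
    simp [this] at hx1
  have hzpos : ∀ j, 0 < z j := by
    intro j
    obtain ⟨i0, hi0⟩ := hxpos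
    exact Finset.sum_pos' (fun i _ => mul_nonneg (hx0 i) (hP i j).le)
      ⟨i0, mem_univ i0, mul_pos hi0 (hP i0 j)⟩
  -- claim z = l • x
  have key : ∀ j, z j = l * x j := by
    by_contra h
    push_neg at h
    obtain ⟨j0, hj0⟩ := h
    set y : Fin n → ℝ := fun j => z j - l * x j with hy
    have hy0 : ∀ j, 0 ≤ y j := fun j => sub_nonneg.2 (hle j)
    have hyj0 : 0 < y j0 := lt_of_le_of_ne (hy0 j0) (Ne.symm (sub_ne_zero.2 hj0))
    set s : ℝ := ∑ j, z j with hs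
    have hspos : 0 < s := Finset.sum_pos (fun j _ => hzpos j) univ_nonempty
    set x' : Fin n → ℝ := fun j => s⁻¹ * z j with hx'
    have hx'0 : ∀ j, 0 ≤ x' j := fun j => mul_nonneg (inv_nonneg.2 hspos.le) (hzpos j).le
    have hx'1 : ∑ j, x' j = 1 := by
      rw [hx', ← Finset.mul_sum]
      field_simp
      exact hs.symm
    have hx'le1 : ∀ j, x' j ≤ 1 := fun j =>
      (single_le_sum (fun i _ => hx'0 i) (mem_univ j)).trans hx'1.le
    set d : Fin n → ℝ := fun j => s⁻¹ * ∑ i, y i * P i j with hd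
    have hdpos : ∀ j, 0 < d j := by
      intro j
      refine mul_pos (inv_pos.2 hspos) ?_
      exact Finset.sum_pos' (fun i _ => mul_nonneg (hy0 i) (hP i j).le)
        ⟨j0, mem_univ j0, mul_pos hyj0 (hP j0 j)⟩
    -- x'P j = l * x' j + d j
    have hx'P : ∀ j, ∑ i, x' i * P i j = l * x' j + d j := by
      intro j
      have : ∀ i, x' i * P i j = s⁻¹ * ((l * x i) * P i j + y i * P i j) := by
        intro i
        have : z i = l * x i + y i := by simp [hy]
        simp [hx']; nlinarith [this]
      rw [Finset.sum_congr rfl fun i _ => this i]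
      rw [← Finset.mul_sum, Finset.sum_add_distrib]
      have : ∑ i, l * x i * P i j = l * z j := by
        rw [hz, Finset.mul_sum]; exact Finset.sum_congr rfl fun i _ => by ring
      rw [this, hd, hx']
      ring
    obtain ⟨j1, _, hj1⟩ := Finset.exists_min_image univ d univ_nonempty
    set δ := d j1 with hδ
    have hδpos : 0 < δ := hdpos j1
    have hnew : (l + δ, x') ∈ K := by
      refine ⟨?_, hx'0, hx'1, fun j => ?_⟩
      · show (0:ℝ) ≤ l + δ; linarith
      · show (l + δ) * x' j ≤ ∑ i, x' i * P i j
        have h1 := hx'P j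
        have h2 : δ ≤ d j := hj1 j (mem_univ j)
        nlinarith [hx'le1 j, hx'0 j]
    have hcon : l + δ ≤ l := hmax hnew
    linarith
  refine ⟨x, hx0, hx1, fun j => ?_⟩
  have hsum : ∑ j', ∑ i, x i * P i j' = l := by
    calc ∑ j', ∑ i, x i * P i j' = ∑ j', l * x j' := Finset.sum_congr rfl fun j' _ => key j'
    _ = l := by rw [← Finset.mul_sum, hx1, mul_one]
  rw [hsum, ← key j]

open Matrix

lemma nonneg_eig {n : ℕ} (hn : 0 < n) (B : Matrix (Fin n) (Fin n) ℝ)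
    (hB : ∀ i j, 0 ≤ B i j) :
    ∃ x : Fin n → ℝ, (∀ i, 0 ≤ x i) ∧ ∑ i, x i = 1 ∧
      ∀ j, (∑ j', ∑ i, x i * B i j') * x j = ∑ i, x i * B i j := by
  have : Nonempty (Fin n) := ⟨⟨0, hn⟩⟩
  set P : ℕ → Matrix (Fin n) (Fin n) ℝ := fun k => fun i j => B i j + ((k:ℝ)+1)⁻¹ with hPdef
  have hPpos : ∀ k i j, 0 < P k i j := fun k i j => by
    have : (0:ℝ) < ((k:ℝ)+1)⁻¹ := by positivity
    have := hB i j
    simp only [hPdef]; linarith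
  choose u hu0 hu1 hu2 using fun k => pos_eig hn (P k) (hPpos k)
  -- compact simplex
  have hCcomp : IsCompact {x : Fin n → ℝ | (∀ i, 0 ≤ x i) ∧ ∑ i, x i = 1} := by
    refine IsCompact.of_isClosed_subset (isCompact_Icc (a := (0 : Fin n → ℝ)) (b := 1)) ?_ ?_
    · have h2 : IsClosed {x : Fin n → ℝ | ∀ i, 0 ≤ x i} := by
        have : {x : Fin n → ℝ | ∀ i, 0 ≤ x i} = ⋂ i, {x | 0 ≤ x i} := by ext; simp
        rw [this]
        exact isClosed_iInter fun i => isClosed_le continuous_const (continuous_apply i)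
      have h3 : IsClosed {x : Fin n → ℝ | ∑ i, x i = 1} :=
        isClosed_eq (by continuity) continuous_const
      have : {x : Fin n → ℝ | (∀ i, 0 ≤ x i) ∧ ∑ i, x i = 1}
          = {x | ∀ i, 0 ≤ x i} ∩ {x | ∑ i, x i = 1} := rfl
      rw [this]; exact h2.inter h3
    · rintro x ⟨h0, h1⟩
      refine ⟨fun i => h0 i, fun i => ?_⟩
      calc x i ≤ ∑ i', x i' := single_le_sum (fun i' _ => h0 i') (mem_univ i)
      _ = 1 := h1
  obtain ⟨x, hxC, φ, hφ, hconv⟩ := hCcomp.tendsto_subseq (x := u) (fun k => ⟨hu0 k, hu1 k⟩)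
  refine ⟨x, hxC.1, hxC.2, fun j => ?_⟩
  -- limits
  have hcoord : ∀ i, Tendsto (fun k => u (φ k) i) atTop (nhds (x i)) :=
    fun i => ((continuous_apply i).tendsto x).comp hconv
  have heps : Tendsto (fun k => ((φ k : ℝ)+1)⁻¹) atTop (nhds 0) := by
    have h1 : Tendsto (fun k : ℕ => ((k:ℝ)+1)⁻¹) atTop (nhds 0) := by
      simpa using tendsto_one_div_add_atTop_nhds_zero_nat (𝕜 := ℝ)
    exact h1.comp hφ.tendsto_atTop
  have hterm : ∀ j', Tendsto (fun k => ∑ i, u (φ k) i * P (φ k) i j') atTop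
      (nhds (∑ i, x i * B i j')) := by
    intro j'
    have : ∀ i : Fin n, Tendsto (fun k => u (φ k) i * P (φ k) i j') atTop
        (nhds (x i * B i j')) := by
      intro i
      have : Tendsto (fun k => B i j' + ((φ k:ℝ)+1)⁻¹) atTop (nhds (B i j')) := by
        simpa using (tendsto_const_nhds.add heps)
      simpa using (hcoord i).mul this
    simpa using tendsto_finset_sum univ (fun i _ => this i)
  have hLHS : Tendsto (fun k => (∑ j', ∑ i, u (φ k) i * P (φ k) i j') * u (φ k) j)
      atTop (nhds ((∑ j', ∑ i, x i * B i j') * x j)) :=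
    (tendsto_finset_sum univ (fun j' _ => hterm j')).mul (hcoord j)
  have heq : (fun k => (∑ j', ∑ i, u (φ k) i * P (φ k) i j') * u (φ k) j)
      = fun k => ∑ i, u (φ k) i * P (φ k) i j := by
    funext k; exact hu2 (φ k) j
  rw [heq] at hLHS
  exact tendsto_nhds_unique hLHS (hterm j)

/-- For `A` entrywise nonnegative, `c` nonnegative and nonzero, and `α > 0`, the map
`f(x) = (xA + αc) / (Σ_k (xA)_k + α c_k)` maps the unit simplex into itself and has a
fixed point there. -/
theorem stmt_19 {n : ℕ} (A : Matrix (Fin n) (Fin n) ℝ) (c : Fin n → ℝ)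
    (hA : ∀ i j, 0 ≤ A i j) (hc : ∀ i, 0 ≤ c i) (hc0 : c ≠ 0)
    (α : ℝ) (hα : 0 < α) :
    (∀ x : Fin n → ℝ, (∀ i, 0 ≤ x i) → (∑ i, x i) = 1 →
      (∀ i, 0 ≤ ((∑ k, ((x ᵥ* A) k + α * c k))⁻¹ • (x ᵥ* A + α • c)) i) ∧
      (∑ i, ((∑ k, ((x ᵥ* A) k + α * c k))⁻¹ • (x ᵥ* A + α • c)) i) = 1) ∧
    ∃ x : Fin n → ℝ, (∀ i, 0 ≤ x i) ∧ (∑ i, x i) = 1 ∧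
      (∑ k, ((x ᵥ* A) k + α * c k)) • x = x ᵥ* A + α • c := by
  rcases Nat.eq_zero_or_pos n with hn | hn
  · subst hn
    exact absurd (funext fun i => i.elim0) hc0
  have hvecMul : ∀ (x : Fin n → ℝ) (j : Fin n), (x ᵥ* A) j = ∑ i, x i * A i j := by
    intro x j
    simp [Matrix.vecMul, dotProduct]
  -- positivity of Σ c
  obtain ⟨i0, hi0⟩ : ∃ i, c i ≠ 0 := by
    by_contra h; push_neg at h; exact hc0 (funext h)
  have hci0 : 0 < c i0 := lt_of_le_of_ne (hc i0) (Ne.symm hi0)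
  have hcsum : 0 < ∑ i, c i :=
    Finset.sum_pos' (fun i _ => hc i) ⟨i0, mem_univ i0, hci0⟩
  have hden : ∀ x : Fin n → ℝ, (∀ i, 0 ≤ x i) →
      0 < ∑ k, ((x ᵥ* A) k + α * c k) := by
    intro x hx0
    have h1 : ∀ k, (0:ℝ) ≤ (x ᵥ* A) k := by
      intro k; rw [hvecMul]
      exact Finset.sum_nonneg fun i _ => mul_nonneg (hx0 i) (hA i k)
    have h2 : (0:ℝ) < ∑ k, α * c k := by
      rw [← Finset.mul_sum]; positivity
    calc (0:ℝ) < ∑ k, α * c k := h2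
    _ ≤ ∑ k, ((x ᵥ* A) k + α * c k) := Finset.sum_le_sum fun k _ => by
        have := h1 k; linarith
  constructor
  · intro x hx0 hx1
    have hs := hden x hx0
    constructor
    · intro i
      have h1 : (0:ℝ) ≤ (x ᵥ* A) i := by
        rw [hvecMul]
        exact Finset.sum_nonneg fun i' _ => mul_nonneg (hx0 i') (hA i' i)
      have h2 : (0:ℝ) ≤ α * c i := mul_nonneg hα.le (hc i)
      simp only [Pi.smul_apply, Pi.add_apply, smul_eq_mul]
      positivity
    · simp only [Pi.smul_apply, Pi.add_apply, smul_eq_mul]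
      rw [← Finset.mul_sum]
      field_simp
  · -- fixed point via nonneg_eig with B i j = A i j + α * c j
    set B : Matrix (Fin n) (Fin n) ℝ := fun i j => A i j + α * c j with hBdef
    have hB : ∀ i j, 0 ≤ B i j := fun i j =>
      add_nonneg (hA i j) (mul_nonneg hα.le (hc j))
    obtain ⟨x, hx0, hx1, hxe⟩ := nonneg_eig hn B hB
    refine ⟨x, hx0, hx1, ?_⟩
    have hxB : ∀ j, ∑ i, x i * B i j = (x ᵥ* A) j + α * c j := by
      intro j
      simp only [hBdef]
      rw [hvecMul]
      rw [Finset.sum_congr rfl (fun i _ => mul_add (x i) (A i j) (α * c j))]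
      rw [Finset.sum_add_distrib, ← Finset.sum_mul, hx1, one_mul]
    funext j
    have := hxe j
    rw [Finset.sum_congr rfl (fun j' _ => hxB j')] at this
    rw [hxB j] at this
    simpa using this
end
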